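/- arXiv:2504.02427 — 4 statements merged into one kernel-verified Lean document; each statement's English description precedes it below -/
import Mathlib

section
/- Let π : A → B be a surjective map between nonempty finite sets, let p ∈ [0,1], let (X_b)_{b∈B} be independent Bernoulli(p) random variables, and let (S(b))_{b∈B} be arbitrary random variables on the same probability space with S(b) taking values in π⁻¹(b). Define Y_a = X_{π(a)} · 1[S(π(a)) = a] for every a ∈ A. Then the distribution of (Y_a)_{a∈A} is stochastically dominated by the product measure Bernoulli(p)^{⊗A} on {0,1}^A (with the product order). -/
open MeasureTheory ProbabilityTheory

/-- Bernoulli measure of parameter `p` on `Bool`. -/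
noncomputable def bern (p : ENNReal) : Measure Bool :=
  p • Measure.dirac true + (1 - p) • Measure.dirac false

/-- `μ` is stochastically dominated by `ν`: there is a coupling supported on `{(x,y) | x ≤ y}`. -/
def StochDom {E : Type*} [MeasurableSpace E] [Preorder E] (μ ν : Measure E) : Prop :=
  ∃ κ : Measure (E × E), IsProbabilityMeasure κ ∧ κ.map Prod.fst = μ ∧
    κ.map Prod.snd = ν ∧ κ {q | q.1 ≤ q.2} = 1

open Finset
open scoped ENNReal


section Strassen

variable {E : Type*} [Fintype E] [Preorder E] [DecidableEq E]

/-- complexity measure for the induction -/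
noncomputable def MMeas (f g : E → ℝ≥0∞) : ℕ :=
  {x | f x ≠ 0}.ncard + {x | g x ≠ 0}.ncard +
  {U : Finset E | IsUpperSet (U : Set E) ∧ ∑ x ∈ U, f x < ∑ x ∈ U, g x}.ncard

lemma aux_eq_of_add {a b c d : ℝ≥0∞} (h1 : a ≤ c) (h2 : b ≤ d) (h3 : a + b = c + d)
    (h4 : c + d ≠ ⊤) : a = c ∧ b = d := by
  have hd : d ≠ ⊤ := fun h => h4 (by simp [h])
  have hb : b ≠ ⊤ := fun h => hd (top_le_iff.1 (h ▸ h2))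
  have hac : a = c := by
    by_contra hac
    have hlt : a < c := lt_of_le_of_ne h1 hac
    have := ENNReal.add_lt_add_of_lt_of_le hb hlt h2
    rw [h3] at this; exact lt_irrefl _ this
  refine ⟨hac, ?_⟩
  subst hac
  exact ((ENNReal.add_right_inj (fun h => h4 (by simp [h]))).1 h3)

lemma exists_coupling_fn :
    ∀ (n : ℕ) (f g : E → ℝ≥0∞), (∑ x, f x ≠ ⊤) → (∑ x, f x = ∑ x, g x) →
    (∀ U : Finset E, IsUpperSet (U : Set E) → ∑ x ∈ U, f x ≤ ∑ x ∈ U, g x) →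
    MMeas f g ≤ n →
    ∃ h : E → E → ℝ≥0∞, (∀ x y, h x y ≠ 0 → x ≤ y) ∧ (∀ x, ∑ y, h x y = f x) ∧
      (∀ y, ∑ x, h x y = g y) := by
  intro n
  induction n with
  | zero =>
    intro f g hfin htot hup hM
    have h1 : {x | f x ≠ 0}.ncard = 0 := by unfold MMeas at hM; omega
    have h2 : {x | g x ≠ 0}.ncard = 0 := by unfold MMeas at hM; omega
    have hf0 : ∀ x, f x = 0 := by
      intro x
      by_contra hx
      have : x ∈ ({x | f x ≠ 0} : Set E) := hx
      rw [(Set.ncard_eq_zero (Set.toFinite _)).1 h1] at this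
      exact this
    have hg0 : ∀ x, g x = 0 := by
      intro x
      by_contra hx
      have : x ∈ ({x | g x ≠ 0} : Set E) := hx
      rw [(Set.ncard_eq_zero (Set.toFinite _)).1 h2] at this
      exact this
    exact ⟨0, by simp, fun x => by simp [hf0], fun y => by simp [hg0]⟩
  | succ n ih =>
    intro f g hfin htot hup hM
    classical
    have hgfin : ∑ x, g x ≠ ⊤ := htot ▸ hfin
    have hfx_fin : ∀ x, f x ≠ ⊤ := fun x =>
      ne_top_of_le_ne_top hfin (Finset.single_le_sum (fun _ _ => zero_le) (mem_univ x))
    have hgx_fin : ∀ y, g y ≠ ⊤ := fun y =>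
      ne_top_of_le_ne_top hgfin (Finset.single_le_sum (fun _ _ => zero_le) (mem_univ y))
    have hsumf_fin : ∀ U : Finset E, ∑ z ∈ U, f z ≠ ⊤ := fun U =>
      ne_top_of_le_ne_top hfin (Finset.sum_le_sum_of_subset (subset_univ U))
    have hsumg_fin : ∀ U : Finset E, ∑ z ∈ U, g z ≠ ⊤ := fun U =>
      ne_top_of_le_ne_top hgfin (Finset.sum_le_sum_of_subset (subset_univ U))
    by_cases hf0 : ∀ x, f x = 0
    · have hgs : ∑ x, g x = 0 := by rw [← htot]; simp [hf0]
      have hg0 : ∀ y, g y = 0 := by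
        intro y
        exact le_antisymm (hgs ▸ Finset.single_le_sum (f := g) (fun _ _ => zero_le)
          (mem_univ y)) (zero_le)
      exact ⟨0, by simp, fun x => by simp [hf0], fun y => by simp [hg0]⟩
    push_neg at hf0
    obtain ⟨x, hx⟩ := hf0
    -- Step 1: find a good recipient y
    have hy : ∃ y, x ≤ y ∧ g y ≠ 0 ∧ ∀ U : Finset E, IsUpperSet (U : Set E) → x ∉ U → y ∈ U →
        ∑ z ∈ U, f z < ∑ z ∈ U, g z := by
      by_contra hcon
      push_neg at hcon
      set s := univ.filter (fun y => x ≤ y ∧ g y ≠ 0) with hs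
      set F : E → Finset E := fun y =>
        if h : x ≤ y ∧ g y ≠ 0 then (hcon y h.1 h.2).choose else ∅ with hF
      have hFspec : ∀ y ∈ s, IsUpperSet ((F y : Finset E) : Set E) ∧ x ∉ F y ∧ y ∈ F y ∧
          ∑ z ∈ F y, f z = ∑ z ∈ F y, g z := by
        intro y hy
        simp only [hs, mem_filter, mem_univ, true_and] at hy
        have hspec := (hcon y hy.1 hy.2).choose_spec
        rw [hF]
        simp only [dif_pos hy]
        exact ⟨hspec.1, hspec.2.1, hspec.2.2.1,
          le_antisymm (hup _ hspec.1) hspec.2.2.2⟩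
      set U := s.sup F with hU
      have hUkey : IsUpperSet ((U : Finset E) : Set E) ∧ ∑ z ∈ U, f z = ∑ z ∈ U, g z := by
        refine Finset.sup_induction (p := fun V : Finset E =>
            IsUpperSet ((V : Finset E) : Set E) ∧ ∑ z ∈ V, f z = ∑ z ∈ V, g z)
          ⟨by simp [isUpperSet_empty], by simp⟩ ?_ (fun y hy => ⟨(hFspec y hy).1, (hFspec y hy).2.2.2⟩)
        rintro U1 ⟨hu1, ht1⟩ U2 ⟨hu2, ht2⟩
        rw [Finset.sup_eq_union]
        have hcup : IsUpperSet ((U1 ∪ U2 : Finset E) : Set E) := by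
          rw [coe_union]; exact hu1.union hu2
        have hcap : IsUpperSet ((U1 ∩ U2 : Finset E) : Set E) := by
          rw [coe_inter]; exact hu1.inter hu2
        have hadd : ∑ z ∈ U1 ∪ U2, f z + ∑ z ∈ U1 ∩ U2, f z
            = ∑ z ∈ U1 ∪ U2, g z + ∑ z ∈ U1 ∩ U2, g z := by
          rw [Finset.sum_union_inter, Finset.sum_union_inter, ht1, ht2]
        have := aux_eq_of_add (hup _ hcup) (hup _ hcap) hadd
          (by
            intro htop
            rcases ENNReal.add_eq_top.1 htop with h | h
            exacts [hsumg_fin _ h, hsumg_fin _ h])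
        exact ⟨hcup, this.1⟩
      have hxU : x ∉ U := by
        intro hxm
        rw [hU, Finset.mem_sup] at hxm
        obtain ⟨y, hy, hxy⟩ := hxm
        exact (hFspec y hy).2.1 hxy
      set upx := univ.filter (fun z => x ≤ z) with hupx
      have hupxU : IsUpperSet ((U ∪ upx : Finset E) : Set E) := by
        rw [coe_union]
        refine hUkey.1.union ?_
        intro a b hab ha
        simp only [hupx, coe_filter, Set.mem_setOf_eq, mem_univ, true_and] at ha ⊢
        exact ha.trans hab
      have hgzero : ∀ z ∈ upx \ U, g z = 0 := by
        intro z hz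
        rw [mem_sdiff] at hz
        by_contra hgz
        have hzs : z ∈ s := by
          simp only [hs, mem_filter, mem_univ, true_and]
          refine ⟨?_, hgz⟩
          have := hz.1
          simp only [hupx, mem_filter, mem_univ, true_and] at this
          exact this
        exact hz.2 (Finset.mem_sup.2 ⟨z, hzs, (hFspec z hzs).2.2.1⟩)
      have hUU : U ∪ upx = U ∪ (upx \ U) := (Finset.union_sdiff_self_eq_union).symm
      have hdisj : Disjoint U (upx \ U) := Finset.disjoint_sdiff
      have hsg : ∑ z ∈ U ∪ upx, g z = ∑ z ∈ U, g z := by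
        rw [hUU, Finset.sum_union hdisj, Finset.sum_eq_zero hgzero, add_zero]
      have hxmem : x ∈ upx \ U := by
        rw [mem_sdiff]
        exact ⟨by simp [hupx], hxU⟩
      have hsf : ∑ z ∈ U, f z + f x ≤ ∑ z ∈ U ∪ upx, f z := by
        rw [hUU, Finset.sum_union hdisj]
        exact add_le_add le_rfl (Finset.single_le_sum (fun _ _ => zero_le) hxmem)
      have hfinal : ∑ z ∈ U, f z + f x ≤ ∑ z ∈ U, f z := by
        calc ∑ z ∈ U, f z + f x ≤ ∑ z ∈ U ∪ upx, f z := hsf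
        _ ≤ ∑ z ∈ U ∪ upx, g z := hup _ hupxU
        _ = ∑ z ∈ U, g z := hsg
        _ = ∑ z ∈ U, f z := hUkey.2.symm
      have : f x ≤ 0 := by
        have h0 : ∑ z ∈ U, f z + f x ≤ ∑ z ∈ U, f z + 0 := by simpa using hfinal
        exact (ENNReal.add_le_add_iff_left (hsumf_fin U)).1 h0
      exact hx (le_antisymm this (zero_le))
    obtain ⟨y, hxy, hgy, hslack⟩ := hy
    -- Step 2: amount to transfer
    set Ufam := univ.filter
      (fun U : Finset E => IsUpperSet (U : Set E) ∧ x ∉ U ∧ y ∈ U) with hUfam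
    set m := Ufam.inf (fun U => ∑ z ∈ U, g z - ∑ z ∈ U, f z) with hm
    set ε := min (f x) (min (g y) m) with he
    have hεf : ε ≤ f x := min_le_left _ _
    have hεg : ε ≤ g y := le_trans (min_le_right _ _) (min_le_left _ _)
    have hεm : ε ≤ m := le_trans (min_le_right _ _) (min_le_right _ _)
    have hεtop : ε ≠ ⊤ := ne_top_of_le_ne_top (hfx_fin x) hεf
    have hmpos : ∀ U ∈ Ufam, 0 < ∑ z ∈ U, g z - ∑ z ∈ U, f z := by
      intro U hUm
      simp only [hUfam, mem_filter, mem_univ, true_and] at hUm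
      exact tsub_pos_of_lt (hslack U hUm.1 hUm.2.1 hUm.2.2)
    have hε0 : ε ≠ 0 := by
      have h1 : 0 < f x := pos_iff_ne_zero.2 hx
      have h2 : 0 < g y := pos_iff_ne_zero.2 hgy
      have h3 : 0 < m := by
        rcases Ufam.eq_empty_or_nonempty with hemp | hne
        · rw [hm, hemp]; simp
        · obtain ⟨U0, hU0, hval⟩ := Finset.exists_mem_eq_inf Ufam hne
            (fun U => ∑ z ∈ U, g z - ∑ z ∈ U, f z)
          rw [hm, hval]; exact hmpos U0 hU0
      exact (lt_min h1 (lt_min h2 h3)).ne'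
    -- updated functions
    set f' := Function.update f x (f x - ε) with hf'
    set g' := Function.update g y (g y - ε) with hg'
    have hf'mem : ∀ U : Finset E, x ∈ U → ∑ z ∈ U, f' z = ∑ z ∈ U, f z - ε := by
      intro U hxm
      rw [hf', Finset.sum_update_of_mem hxm,
        ENNReal.sub_add_eq_add_sub hεf hεtop,
        Finset.sdiff_singleton_eq_erase, Finset.add_sum_erase _ f hxm]
    have hf'nmem : ∀ U : Finset E, x ∉ U → ∑ z ∈ U, f' z = ∑ z ∈ U, f z := by
      intro U hxm
      exact Finset.sum_congr rfl fun z hz =>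
        Function.update_of_ne (fun h => hxm (by rw [← h]; exact hz)) _ f
    have hg'mem : ∀ U : Finset E, y ∈ U → ∑ z ∈ U, g' z = ∑ z ∈ U, g z - ε := by
      intro U hym
      rw [hg', Finset.sum_update_of_mem hym,
        ENNReal.sub_add_eq_add_sub hεg hεtop,
        Finset.sdiff_singleton_eq_erase, Finset.add_sum_erase _ g hym]
    have hg'nmem : ∀ U : Finset E, y ∉ U → ∑ z ∈ U, g' z = ∑ z ∈ U, g z := by
      intro U hym
      exact Finset.sum_congr rfl fun z hz =>
        Function.update_of_ne (fun h => hym (by rw [← h]; exact hz)) _ g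
    have htot' : ∑ z, f' z = ∑ z, g' z := by
      rw [hf'mem univ (mem_univ x), hg'mem univ (mem_univ y), htot]
    have hfin' : ∑ z, f' z ≠ ⊤ := by
      rw [hf'mem univ (mem_univ x)]
      exact ne_top_of_le_ne_top hfin tsub_le_self
    have hup' : ∀ U : Finset E, IsUpperSet (U : Set E) → ∑ z ∈ U, f' z ≤ ∑ z ∈ U, g' z := by
      intro U hUp
      by_cases hxm : x ∈ U
      · have hym : y ∈ U := hUp hxy hxm
        rw [hf'mem U hxm, hg'mem U hym]
        exact tsub_le_tsub (hup U hUp) le_rfl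
      · by_cases hym : y ∈ U
        · rw [hf'nmem U hxm, hg'mem U hym]
          have hUm : U ∈ Ufam := by
            simp only [hUfam, mem_filter, mem_univ, true_and]
            exact ⟨hUp, hxm, hym⟩
          have hmU : m ≤ ∑ z ∈ U, g z - ∑ z ∈ U, f z := by
            rw [hm]; exact Finset.inf_le hUm
          have hεU : ε ≤ ∑ z ∈ U, g z - ∑ z ∈ U, f z := hεm.trans hmU
          have hab : ε + ∑ z ∈ U, f z ≤ ∑ z ∈ U, g z := by
            calc ε + ∑ z ∈ U, f z ≤ (∑ z ∈ U, g z - ∑ z ∈ U, f z) + ∑ z ∈ U, f z :=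
              add_le_add hεU le_rfl
            _ = ∑ z ∈ U, g z := tsub_add_cancel_of_le (hup U hUp)
          exact ENNReal.le_sub_of_add_le_left hεtop hab
        · rw [hf'nmem U hxm, hg'nmem U hym]; exact hup U hUp
    -- decrease of the complexity measure
    have hSF : {z | f' z ≠ 0} ⊆ {z | f z ≠ 0} := by
      intro z hz
      simp only [Set.mem_setOf_eq] at hz ⊢
      intro h0
      apply hz
      by_cases hzx : z = x
      · subst hzx; exact absurd h0 hx
      · rw [hf', Function.update_of_ne hzx, h0]
    have hSG : {z | g' z ≠ 0} ⊆ {z | g z ≠ 0} := by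
      intro z hz
      simp only [Set.mem_setOf_eq] at hz ⊢
      intro h0
      apply hz
      by_cases hzy : z = y
      · subst hzy; exact absurd h0 hgy
      · rw [hg', Function.update_of_ne hzy, h0]
    have hSL : {U : Finset E | IsUpperSet (U : Set E) ∧ ∑ z ∈ U, f' z < ∑ z ∈ U, g' z} ⊆
        {U : Finset E | IsUpperSet (U : Set E) ∧ ∑ z ∈ U, f z < ∑ z ∈ U, g z} := by
      rintro U ⟨hUp, hlt⟩
      refine ⟨hUp, ?_⟩
      by_cases hxm : x ∈ U
      · have hym : y ∈ U := hUp hxy hxm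
        rcases lt_or_ge (∑ z ∈ U, f z) (∑ z ∈ U, g z) with h | h
        · exact h
        · exfalso
          have heq : ∑ z ∈ U, f z = ∑ z ∈ U, g z := le_antisymm (hup U hUp) h
          rw [hf'mem U hxm, hg'mem U hym, heq] at hlt
          exact lt_irrefl _ hlt
      · by_cases hym : y ∈ U
        · exact hslack U hUp hxm hym
        · rw [hf'nmem U hxm, hg'nmem U hym] at hlt; exact hlt
    have hdec : MMeas f' g' < MMeas f g := by
      have c1 : {z | f' z ≠ 0}.ncard ≤ {z | f z ≠ 0}.ncard :=
        Set.ncard_le_ncard hSF (Set.toFinite _)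
      have c2 : {z | g' z ≠ 0}.ncard ≤ {z | g z ≠ 0}.ncard :=
        Set.ncard_le_ncard hSG (Set.toFinite _)
      have c3 : {U : Finset E | IsUpperSet (U : Set E) ∧ ∑ z ∈ U, f' z < ∑ z ∈ U, g' z}.ncard ≤
          {U : Finset E | IsUpperSet (U : Set E) ∧ ∑ z ∈ U, f z < ∑ z ∈ U, g z}.ncard :=
        Set.ncard_le_ncard hSL (Set.toFinite _)
      rcases le_total (f x) (min (g y) m) with h1 | h1
      · -- ε = f x
        have hef : ε = f x := by rw [he, min_eq_left h1]
        have hstrict : {z | f' z ≠ 0}.ncard < {z | f z ≠ 0}.ncard := by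
          refine Set.ncard_lt_ncard ((Set.ssubset_iff_of_subset hSF).2 ⟨x, hx, ?_⟩)
            (Set.toFinite _)
          simp only [Set.mem_setOf_eq, not_not]
          rw [hf', Function.update_self, hef, tsub_self]
        unfold MMeas; omega
      · rcases le_total (g y) m with h2 | h2
        · have heg : ε = g y := by rw [he, min_eq_right h1, min_eq_left h2]
          have hstrict : {z | g' z ≠ 0}.ncard < {z | g z ≠ 0}.ncard := by
            refine Set.ncard_lt_ncard ((Set.ssubset_iff_of_subset hSG).2 ⟨y, hgy, ?_⟩)
              (Set.toFinite _)
            simp only [Set.mem_setOf_eq, not_not]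
            rw [hg', Function.update_self, heg, tsub_self]
          unfold MMeas; omega
        · have hem : ε = m := by rw [he, min_eq_right h1, min_eq_right h2]
          have hmtop : m ≠ ⊤ := hem ▸ hεtop
          have hne : Ufam.Nonempty := by
            rcases Ufam.eq_empty_or_nonempty with hemp | hne
            · exfalso; apply hmtop; rw [hm, hemp]; simp
            · exact hne
          obtain ⟨U0, hU0mem, hU0val⟩ := Finset.exists_mem_eq_inf Ufam hne
            (fun U => ∑ z ∈ U, g z - ∑ z ∈ U, f z)
          rw [← hm] at hU0val
          simp only [hUfam, mem_filter, mem_univ, true_and] at hU0mem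
          obtain ⟨hU0up, hxU0, hyU0⟩ := hU0mem
          have hstrict : {U : Finset E | IsUpperSet (U : Set E) ∧
              ∑ z ∈ U, f' z < ∑ z ∈ U, g' z}.ncard <
              {U : Finset E | IsUpperSet (U : Set E) ∧
              ∑ z ∈ U, f z < ∑ z ∈ U, g z}.ncard := by
            refine Set.ncard_lt_ncard ((Set.ssubset_iff_of_subset hSL).2
              ⟨U0, ⟨hU0up, hslack U0 hU0up hxU0 hyU0⟩, ?_⟩) (Set.toFinite _)
            simp only [Set.mem_setOf_eq, not_and]
            intro _
            rw [hf'nmem U0 hxU0, hg'mem U0 hyU0, hem, hU0val,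
              ENNReal.sub_sub_cancel (hsumg_fin U0) (hup U0 hU0up)]
            exact lt_irrefl _
          unfold MMeas; omega
    -- apply induction hypothesis and extend coupling
    obtain ⟨h', hsupp', hrow', hcol'⟩ := ih f' g' hfin' htot' hup'
      (by omega)
    refine ⟨fun u v => h' u v + if u = x ∧ v = y then ε else 0, ?_, ?_, ?_⟩
    · intro u v huv
      by_cases hc : u = x ∧ v = y
      · rcases hc with ⟨rfl, rfl⟩; exact hxy
      · refine hsupp' u v ?_
        simpa [if_neg hc] using huv
    · intro u
      rw [Finset.sum_add_distrib, hrow' u]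
      by_cases hu : u = x
      · have hsum : ∑ v, (if u = x ∧ v = y then ε else 0) = ε := by
          simp [hu]
        rw [hsum, hu, hf', Function.update_self, tsub_add_cancel_of_le hεf]
      · have hsum : ∑ v, (if u = x ∧ v = y then ε else 0) = 0 :=
          Finset.sum_eq_zero (fun v _ => by simp [hu])
        rw [hsum, add_zero, hf', Function.update_of_ne hu]
    · intro v
      rw [Finset.sum_add_distrib, hcol' v]
      by_cases hv : v = y
      · have hsum : ∑ u, (if u = x ∧ v = y then ε else 0) = ε := by
          simp [hv]
        rw [hsum, hv, hg', Function.update_self, tsub_add_cancel_of_le hεg]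
      · have hsum : ∑ u, (if u = x ∧ v = y then ε else 0) = 0 :=
          Finset.sum_eq_zero (fun u _ => by simp [hv])
        rw [hsum, add_zero, hg', Function.update_of_ne hv]

end Strassen

theorem stochDom_of_le_upperSets {E : Type*} [Fintype E] [Preorder E]
    [MeasurableSpace E] [MeasurableSingletonClass E]
    (μ ν : Measure E) [IsProbabilityMeasure μ] [IsProbabilityMeasure ν]
    (h : ∀ U : Set E, IsUpperSet U → μ U ≤ ν U) : StochDom μ ν := by
  classical
  have hmeasall : ∀ s : Set E, MeasurableSet s := fun s => s.to_countable.measurableSet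
  set f : E → ℝ≥0∞ := fun x => μ {x} with hf
  set g : E → ℝ≥0∞ := fun x => ν {x} with hg
  have hcoe : ∀ s : Finset E, (s : Set E) = ⋃ x ∈ s, {x} := by
    intro s; ext z; simp
  have hdisj : ∀ s : Finset E, (s : Set E).PairwiseDisjoint (fun x => ({x} : Set E)) := by
    intro s x _ y _ hxy
    simp [Function.onFun, Set.disjoint_singleton, hxy]
  have hμsum : ∀ s : Finset E, μ (s : Set E) = ∑ x ∈ s, f x := by
    intro s
    conv_lhs => rw [hcoe s]
    exact measure_biUnion_finset (hdisj s) (fun _ _ => hmeasall _)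
  have hνsum : ∀ s : Finset E, ν (s : Set E) = ∑ x ∈ s, g x := by
    intro s
    conv_lhs => rw [hcoe s]
    exact measure_biUnion_finset (hdisj s) (fun _ _ => hmeasall _)
  have hμs : ∀ s : Set E, μ s = ∑ x ∈ univ.filter (· ∈ s), f x := by
    intro s
    rw [← hμsum]
    congr 1
    ext z; simp
  have hνs : ∀ s : Set E, ν s = ∑ x ∈ univ.filter (· ∈ s), g x := by
    intro s
    rw [← hνsum]
    congr 1
    ext z; simp
  have hftot : ∑ x, f x = 1 := by
    have := hμsum univ
    rw [coe_univ, measure_univ] at this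
    exact this.symm
  have hgtot : ∑ x, g x = 1 := by
    have := hνsum univ
    rw [coe_univ, measure_univ] at this
    exact this.symm
  obtain ⟨k, hsupp, hrow, hcol⟩ := exists_coupling_fn (MMeas f g) f g
    (by rw [hftot]; exact ENNReal.one_ne_top) (by rw [hftot, hgtot])
    (by
      intro U hU
      rw [← hμsum, ← hνsum]
      exact h _ hU)
    le_rfl
  set κ : Measure (E × E) := ∑ q ∈ (univ : Finset (E × E)), k q.1 q.2 • Measure.dirac q
    with hκ
  have hκeval : ∀ s : Set (E × E), κ s = ∑ q : E × E, k q.1 q.2 * s.indicator 1 q := by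
    intro s
    rw [hκ, Measure.finset_sum_apply]
    refine Finset.sum_congr rfl (fun q _ => ?_)
    rw [Measure.smul_apply, Measure.dirac_apply, smul_eq_mul]
  have hκfst : κ.map Prod.fst = μ := by
    ext s hs
    rw [Measure.map_apply measurable_fst hs, hκeval, Fintype.sum_prod_type]
    have h1 : ∀ x : E, ∀ y : E, (Prod.fst ⁻¹' s).indicator (1 : E × E → ℝ≥0∞) (x, y)
        = s.indicator 1 x := by
      intro x y
      by_cases hx : x ∈ s <;> simp [Set.indicator, hx]
    have h2 : ∀ x : E, ∑ y, k x y * (Prod.fst ⁻¹' s).indicator (1 : E × E → ℝ≥0∞) (x, y)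
        = s.indicator 1 x * f x := by
      intro x
      simp_rw [h1 x]
      rw [← Finset.sum_mul, hrow x, mul_comm]
    simp_rw [h2]
    rw [hμs s, Finset.sum_filter]
    refine Finset.sum_congr rfl (fun x _ => ?_)
    by_cases hx : x ∈ s <;> simp [Set.indicator, hx]
  have hκsnd : κ.map Prod.snd = ν := by
    ext s hs
    rw [Measure.map_apply measurable_snd hs, hκeval, Fintype.sum_prod_type_right]
    have h1 : ∀ y : E, ∀ x : E, (Prod.snd ⁻¹' s).indicator (1 : E × E → ℝ≥0∞) (x, y)
        = s.indicator 1 y := by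
      intro y x
      by_cases hy : y ∈ s <;> simp [Set.indicator, hy]
    have h2 : ∀ y : E, ∑ x, k x y * (Prod.snd ⁻¹' s).indicator (1 : E × E → ℝ≥0∞) (x, y)
        = s.indicator 1 y * g y := by
      intro y
      simp_rw [h1 y]
      rw [← Finset.sum_mul, hcol y, mul_comm]
    simp_rw [h2]
    rw [hνs s, Finset.sum_filter]
    refine Finset.sum_congr rfl (fun y _ => ?_)
    by_cases hy : y ∈ s <;> simp [Set.indicator, hy]
  have hκtot : ∀ s : Set (E × E), ({q : E × E | q.1 ≤ q.2} ⊆ s) → κ s = 1 := by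
    intro s hsub
    have : κ s = ∑ q : E × E, k q.1 q.2 := by
      rw [hκeval]
      refine Finset.sum_congr rfl (fun q _ => ?_)
      by_cases hq : q ∈ s
      · simp [Set.indicator, hq]
      · have : k q.1 q.2 = 0 := by
          by_contra hne
          exact hq (hsub (hsupp q.1 q.2 hne))
        simp [this]
    rw [this, Fintype.sum_prod_type]
    simp_rw [hrow]
    exact hftot
  refine ⟨κ, ⟨?_⟩, hκfst, hκsnd, hκtot _ le_rfl⟩
  exact hκtot Set.univ (Set.subset_univ _)

lemma bern_true (p : ENNReal) : bern p {true} = p := by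
  simp [bern, Measure.dirac_apply, Set.indicator]
lemma bern_false (p : ENNReal) : bern p {false} = 1 - p := by
  simp [bern, Measure.dirac_apply, Set.indicator]
lemma bern_prob (p : ENNReal) (hp : p ≤ 1) : IsProbabilityMeasure (bern p) := by
  constructor
  have : bern p Set.univ = p * 1 + (1 - p) * 1 := by
    simp [bern, Measure.dirac_apply, Set.indicator]
  rw [this, mul_one, mul_one, add_comm, tsub_add_cancel_of_le hp]

lemma measure_eq_sum_sing {E : Type*} [Fintype E] [MeasurableSpace E]
    [MeasurableSingletonClass E] (μ : Measure E) (s : Set E) [DecidablePred (· ∈ s)] :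
    μ s = ∑ x ∈ univ.filter (· ∈ s), μ {x} := by
  have hcoe : ((univ.filter (· ∈ s) : Finset E) : Set E) = s := by ext z; simp
  conv_lhs => rw [← hcoe]
  rw [show (((univ.filter (· ∈ s) : Finset E)) : Set E) = ⋃ x ∈ univ.filter (· ∈ s), {x} by
    ext z; simp]
  exact measure_biUnion_finset
    (by intro x _ y _ hxy; simp [Function.onFun, Set.disjoint_singleton, hxy])
    (fun _ _ => MeasurableSet.singleton _)

lemma measure_ext_sing {E : Type*} [Fintype E] [MeasurableSpace E]
    [MeasurableSingletonClass E] {μ ν : Measure E} (h : ∀ x, μ {x} = ν {x}) : μ = ν := by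
  classical
  ext s _
  rw [measure_eq_sum_sing μ s, measure_eq_sum_sing ν s]
  exact Finset.sum_congr rfl (fun x _ => h x)

lemma bool_le_or (x y : Bool) : x ≤ (x || y) := by cases x <;> cases y <;> decide

section KeyIneq

variable {A B : Type*} [Fintype A] [DecidableEq A] [Fintype B] [DecidableEq B]

/-- The step inequality: adding one block of Bernoulli coordinates. -/
lemma step_ineq (π : A → B) (hπ : Function.Surjective π) (p : ENNReal) (hp : p ≤ 1)
    (b0 : B) (C' : Finset B) (hb0 : b0 ∉ C') (U : Set (A → Bool)) (hU : IsUpperSet U) :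
    p * Measure.pi (fun a => if π a ∈ C' then bern p else Measure.dirac false)
        {z : A → Bool | ∃ a, π a = b0 ∧ (fun a' => z a' || decide (a' = a)) ∈ U}
      + (1 - p) * Measure.pi (fun a => if π a ∈ C' then bern p else Measure.dirac false) U
      ≤ Measure.pi (fun a => if π a ∈ insert b0 C' then bern p else Measure.dirac false) U := by
  classical
  haveI hbp : IsProbabilityMeasure (bern p) := bern_prob p hp
  haveI h1 : ∀ a : A, IsProbabilityMeasure
      ((fun a => if π a ∈ C' then bern p else Measure.dirac false) a) := by
    intro a; by_cases h : π a ∈ C' <;> simp [h] <;> infer_instance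
  haveI h2 : ∀ a : A, IsProbabilityMeasure
      ((fun a => if π a ∈ insert b0 C' then bern p else Measure.dirac false) a) := by
    intro a; by_cases h : π a ∈ insert b0 C' <;> simp [h] <;> infer_instance
  haveI h3 : ∀ a : A, IsProbabilityMeasure
      ((fun a => if π a = b0 then bern p else Measure.dirac false) a) := by
    intro a; by_cases h : π a = b0 <;> simp [h] <;> infer_instance
  set ν' := Measure.pi (fun a => if π a ∈ C' then bern p else Measure.dirac false) with hν'
  set ν0 := Measure.pi (fun a => if π a = b0 then bern p else Measure.dirac false) with hν0
  set νC := Measure.pi (fun a => if π a ∈ insert b0 C' then bern p else Measure.dirac false)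
    with hνC
  set merge : (A → Bool) × (A → Bool) → (A → Bool) :=
    fun q a => if π a = b0 then q.2 a else q.1 a with hmerge
  have hmergeMeas : Measurable merge := by
    apply measurable_pi_lambda
    intro a
    by_cases h : π a = b0
    · simp only [hmerge, if_pos h]
      exact (measurable_pi_apply a).comp measurable_snd
    · simp only [hmerge, if_neg h]
      exact (measurable_pi_apply a).comp measurable_fst
  have hM1 : νC = (ν'.prod ν0).map merge := by
    apply measure_ext_sing
    intro z
    rw [Measure.map_apply hmergeMeas (MeasurableSet.singleton z)]
    have hpre : merge ⁻¹' {z} =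
        {v : A → Bool | ∀ a, ¬ π a = b0 → v a = z a} ×ˢ
        {u : A → Bool | ∀ a, π a = b0 → u a = z a} := by
      ext q
      simp only [Set.mem_preimage, Set.mem_singleton_iff, Set.mem_prod, Set.mem_setOf_eq,
        hmerge, funext_iff]
      constructor
      · intro h
        constructor
        · intro a ha; have := h a; rwa [if_neg ha] at this
        · intro a ha; have := h a; rwa [if_pos ha] at this
      · intro ⟨hl, hr⟩ a
        by_cases ha : π a = b0
        · rw [if_pos ha]; exact hr a ha
        · rw [if_neg ha]; exact hl a ha
    rw [hpre, Measure.prod_prod]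
    have hT1 : {v : A → Bool | ∀ a, ¬ π a = b0 → v a = z a} =
        Set.univ.pi (fun a => if π a = b0 then Set.univ else {z a}) := by
      ext v
      simp only [Set.mem_setOf_eq, Set.mem_pi, Set.mem_univ, true_implies]
      constructor
      · intro h a
        by_cases ha : π a = b0
        · rw [if_pos ha]; trivial
        · rw [if_neg ha]; exact h a ha
      · intro h a ha
        have := h a; rwa [if_neg ha] at this
    have hT2 : {u : A → Bool | ∀ a, π a = b0 → u a = z a} =
        Set.univ.pi (fun a => if π a = b0 then {z a} else Set.univ) := by
      ext u
      simp only [Set.mem_setOf_eq, Set.mem_pi, Set.mem_univ, true_implies]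
      constructor
      · intro h a
        by_cases ha : π a = b0
        · rw [if_pos ha]; exact h a ha
        · rw [if_neg ha]; trivial
      · intro h a ha
        have := h a; rwa [if_pos ha] at this
    rw [hT1, hT2, hν', hν0, Measure.pi_pi, Measure.pi_pi, hνC,
      show ({z} : Set (A → Bool)) = Set.univ.pi (fun a => {z a}) from
        (Set.univ_pi_singleton z).symm,
      Measure.pi_pi, ← Finset.prod_mul_distrib]
    refine Finset.prod_congr rfl (fun a _ => ?_)
    by_cases ha : π a = b0
    · have haC' : π a ∉ C' := fun h => hb0 (ha ▸ h)
      rw [if_pos ha, if_pos ha, if_neg haC', if_pos ha,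
        if_pos (by rw [ha]; exact mem_insert_self _ _)]
      rw [measure_univ, one_mul]
    · have : (π a ∈ insert b0 C') ↔ (π a ∈ C') := by
        rw [mem_insert]; simp [ha]
      rw [if_neg ha, if_neg ha, if_neg ha, if_congr this rfl rfl]
      rw [measure_univ, mul_one]
  -- the merge representation of νC U
  have hmeasall : ∀ s : Set (A → Bool), MeasurableSet s := fun s => s.to_countable.measurableSet
  have hM2 : νC U = ∫⁻ v, ν0 {u | merge (v, u) ∈ U} ∂ν' := by
    rw [hM1, Measure.map_apply hmergeMeas (hmeasall U),
      Measure.prod_apply (hmergeMeas (hmeasall U))]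
    rfl
  -- almost every v vanishes on the b0-block
  set Z0 := {v : A → Bool | ∀ a, π a = b0 → v a = false} with hZ0
  have hZ0full : ν' Z0 = 1 := by
    have : Z0 = Set.univ.pi (fun a => if π a = b0 then {false} else Set.univ) := by
      ext v
      simp only [hZ0, Set.mem_setOf_eq, Set.mem_pi, Set.mem_univ, true_implies]
      constructor
      · intro h a
        by_cases ha : π a = b0
        · rw [if_pos ha]; exact h a ha
        · rw [if_neg ha]; trivial
      · intro h a ha
        have := h a; rwa [if_pos ha] at this
    rw [this, hν', Measure.pi_pi]
    refine Finset.prod_eq_one (fun a _ => ?_)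
    by_cases ha : π a = b0
    · have haC' : π a ∉ C' := fun h => hb0 (ha ▸ h)
      rw [if_pos ha, if_neg haC']
      simp [Measure.dirac_apply, Set.indicator]
    · rw [if_neg ha, measure_univ]
  have hae : ∀ᵐ v ∂ν', v ∈ Z0 := by
    rw [MeasureTheory.ae_iff]
    have : {v | ¬ v ∈ Z0} = Z0ᶜ := rfl
    rw [this]
    rw [measure_compl (hmeasall _) (measure_ne_top _ _), hZ0full, measure_univ, tsub_self]
  -- pointwise estimate
  set Uplus := {z : A → Bool | ∃ a, π a = b0 ∧ (fun a' => z a' || decide (a' = a)) ∈ U}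
    with hUplus
  have hpoint : ∀ v ∈ Z0,
      p * Uplus.indicator 1 v + (1 - p) * U.indicator 1 v ≤ ν0 {u | merge (v, u) ∈ U} := by
    intro v hv
    by_cases hvU : v ∈ U
    · have hall : {u : A → Bool | merge (v, u) ∈ U} = Set.univ := by
        ext u
        simp only [Set.mem_setOf_eq, Set.mem_univ, iff_true]
        refine hU ?_ hvU
        intro a
        simp only [hmerge]
        by_cases ha : π a = b0
        · rw [if_pos ha, hv a ha]; exact Bool.false_le _
        · rw [if_neg ha]
      have hvUp : v ∈ Uplus := by
        obtain ⟨a0, ha0⟩ := hπ b0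
        refine ⟨a0, ha0, hU ?_ hvU⟩
        intro a'
        exact bool_le_or (v a') _
      rw [Set.indicator_of_mem hvUp, Set.indicator_of_mem hvU, hall, measure_univ]
      simp only [Pi.one_apply, mul_one]
      rw [add_comm, tsub_add_cancel_of_le hp]
    · by_cases hvUp : v ∈ Uplus
      · rw [Set.indicator_of_mem hvUp, Set.indicator_of_notMem hvU]
        simp only [Pi.one_apply, mul_one, mul_zero, add_zero]
        obtain ⟨a1, hpa1, hw⟩ := hvUp
        have hsub : {u : A → Bool | u a1 = true} ⊆ {u | merge (v, u) ∈ U} := by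
          intro u hu
          simp only [Set.mem_setOf_eq] at hu
          refine hU ?_ hw
          intro a'
          simp only [hmerge]
          by_cases hc : π a' = b0
          · rw [if_pos hc, hv a' hc, Bool.false_or]
            by_cases he : a' = a1
            · simp [he, hu]
            · simp [he]
          · rw [if_neg hc]
            have he : a' ≠ a1 := fun h => hc (h ▸ hpa1)
            simp [he]
        have hval : ν0 {u : A → Bool | u a1 = true} = p := by
          have : {u : A → Bool | u a1 = true} =
              Set.univ.pi (fun a => if a = a1 then {true} else Set.univ) := by
            ext u
            simp only [Set.mem_setOf_eq, Set.mem_pi, Set.mem_univ, true_implies]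
            constructor
            · intro h a
              by_cases ha : a = a1
              · rw [if_pos ha, ha]; simp [h]
              · rw [if_neg ha]; trivial
            · intro h
              have := h a1; rwa [if_pos rfl] at this
          rw [this, hν0, Measure.pi_pi]
          rw [Finset.prod_eq_single a1]
          · rw [if_pos rfl, if_pos hpa1]; exact bern_true p
          · intro a _ ha
            rw [if_neg ha, measure_univ]
          · intro h; exact absurd (mem_univ a1) h
        rw [← hval]
        exact measure_mono hsub
      · rw [Set.indicator_of_notMem hvUp, Set.indicator_of_notMem hvU]
        simp
  -- integrate
  have hG : p * ν' Uplus + (1 - p) * ν' U =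
      ∫⁻ v, (p * Uplus.indicator 1 v + (1 - p) * U.indicator 1 v) ∂ν' := by
    rw [lintegral_add_left ((measurable_one.indicator (hmeasall _)).const_mul p)]
    rw [lintegral_const_mul p (measurable_one.indicator (hmeasall _)),
      lintegral_const_mul (1 - p) (measurable_one.indicator (hmeasall _)),
      lintegral_indicator_one (hmeasall _), lintegral_indicator_one (hmeasall _)]
  rw [hG, hM2]
  refine lintegral_mono_ae ?_
  filter_upwards [hae] with v hv
  exact hpoint v hv
end KeyIneq

lemma bool_or_mono (x x' d : Bool) (h : x ≤ x') : (x || d) ≤ (x' || d) := by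
  revert h; cases x <;> cases x' <;> cases d <;> decide

section MainLemma

variable {A B : Type*} [Fintype A] [DecidableEq A] [MeasurableSpace A]
  [DiscreteMeasurableSpace A] [Fintype B] [DecidableEq B] {Ω : Type*} [MeasurableSpace Ω]

lemma Ymeas (π : A → B) (X : B → Ω → Bool) (S : B → Ω → A)
    (hX : ∀ b, Measurable (X b)) (hS : ∀ b, Measurable (S b)) (C : Finset B) :
    Measurable (fun ω a => decide (π a ∈ C) && (X (π a) ω && decide (S (π a) ω = a)) :
      Ω → A → Bool) := by
  apply measurable_pi_lambda
  intro a
  have h1 : Measurable (fun ω => (X (π a) ω, S (π a) ω)) := (hX _).prodMk (hS _)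
  have h2 : Measurable (fun q : Bool × A => decide (π a ∈ C) && (q.1 && decide (q.2 = a))) :=
    Measurable.of_discrete
  exact h2.comp h1

lemma key_ineq (π : A → B) (hπ : Function.Surjective π) (p : ENNReal) (hp : p ≤ 1)
    (X : B → Ω → Bool) (S : B → Ω → A)
    (hXmeas : ∀ b, Measurable (X b)) (hSmeas : ∀ b, Measurable (S b))
    (hS : ∀ b ω, π (S b ω) = b) :
    ∀ C : Finset B, ∀ P : Measure Ω, IsFiniteMeasure P →
    (∀ (t : B → Bool) (D : Finset B), D ⊆ C →
      P {ω | ∀ b ∈ D, X b ω = t b} = P Set.univ * ∏ b ∈ D, bern p ({t b} : Set Bool)) →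
    ∀ U : Set (A → Bool), IsUpperSet U →
    P {ω | (fun a => decide (π a ∈ C) && (X (π a) ω && decide (S (π a) ω = a))) ∈ U}
      ≤ P Set.univ * Measure.pi (fun a => if π a ∈ C then bern p else Measure.dirac false) U := by
  classical
  haveI hbp : IsProbabilityMeasure (bern p) := bern_prob p hp
  intro C
  induction C using Finset.induction_on with
  | empty =>
    intro P hPfin hhyp U hU
    haveI hinst : ∀ a : A, IsProbabilityMeasure
        ((fun a => if π a ∈ (∅ : Finset B) then bern p else Measure.dirac false) a) := by
      intro a; simp only [Finset.notMem_empty, if_false]; infer_instance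
    have hfun : ∀ ω : Ω, (fun a => decide (π a ∈ (∅ : Finset B)) &&
        (X (π a) ω && decide (S (π a) ω = a))) = (fun _ : A => false) := by
      intro ω; funext a; simp
    by_cases hz : (fun _ : A => false) ∈ U
    · have hset : {ω : Ω | (fun a => decide (π a ∈ (∅ : Finset B)) &&
          (X (π a) ω && decide (S (π a) ω = a))) ∈ U} = Set.univ := by
        ext ω; simp only [Set.mem_setOf_eq, Set.mem_univ, iff_true, hfun ω]; exact hz
      rw [hset]
      have hν1 : Measure.pi (fun a : A => if π a ∈ (∅ : Finset B) then bern p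
          else Measure.dirac false) {(fun _ : A => false)} = 1 := by
        rw [show ({(fun _ : A => false)} : Set (A → Bool))
            = Set.univ.pi (fun _ : A => {false}) from (Set.univ_pi_singleton _).symm,
          Measure.pi_pi]
        refine Finset.prod_eq_one (fun a _ => ?_)
        simp [Measure.dirac_apply, Set.indicator]
      calc P Set.univ = P Set.univ * 1 := (mul_one _).symm
      _ ≤ _ := by
          refine mul_le_mul_right ?_ _
          rw [← hν1]
          exact measure_mono (Set.singleton_subset_iff.2 hz)
    · have hset : {ω : Ω | (fun a => decide (π a ∈ (∅ : Finset B)) &&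
          (X (π a) ω && decide (S (π a) ω = a))) ∈ U} = ∅ := by
        ext ω; simp only [Set.mem_setOf_eq, Set.mem_empty_iff_false, iff_false, hfun ω]
        exact hz
      rw [hset]; simp
  | @insert b0 C' hb0 ih =>
    intro P hPfin hhyp U hU
    haveI h1 : ∀ a : A, IsProbabilityMeasure
        ((fun a => if π a ∈ C' then bern p else Measure.dirac false) a) := by
      intro a; by_cases h : π a ∈ C' <;> simp only [h, if_true, if_false] <;> infer_instance
    set Y : Ω → A → Bool := fun ω a =>
      decide (π a ∈ insert b0 C') && (X (π a) ω && decide (S (π a) ω = a)) with hY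
    set Y' : Ω → A → Bool := fun ω a =>
      decide (π a ∈ C') && (X (π a) ω && decide (S (π a) ω = a)) with hY'
    set ν' := Measure.pi (fun a : A => if π a ∈ C' then bern p else Measure.dirac false)
      with hν'
    suffices hsuff : P {ω | Y ω ∈ U} ≤ P Set.univ *
        Measure.pi (fun a : A => if π a ∈ insert b0 C' then bern p
          else Measure.dirac false) U by exact hsuff
    have hmeasall : ∀ s : Set (A → Bool), MeasurableSet s :=
      fun s => s.to_countable.measurableSet
    have hYm : ∀ V : Set (A → Bool), MeasurableSet {ω | Y' ω ∈ V} :=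
      fun V => (Ymeas π X S hXmeas hSmeas C') (hmeasall V)
    set E1 := {ω | X b0 ω = true} with hE1
    have hE1m : MeasurableSet E1 := hXmeas b0 (MeasurableSet.singleton true)
    set Uplus := {z : A → Bool | ∃ a, π a = b0 ∧ (fun a' => z a' || decide (a' = a)) ∈ U}
      with hUp
    have hUplusUpper : IsUpperSet Uplus := by
      rintro z z' hzz ⟨a, hpa, hw⟩
      exact ⟨a, hpa, hU (fun a' => bool_or_mono _ _ _ (hzz a')) hw⟩
    have hsplit : P {ω | Y ω ∈ U}
        = P ({ω | Y ω ∈ U} ∩ E1) + P ({ω | Y ω ∈ U} \ E1) :=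
      (measure_inter_add_diff _ hE1m).symm
    have hincl1 : {ω | Y ω ∈ U} ∩ E1 ⊆ {ω | Y' ω ∈ Uplus} ∩ E1 := by
      rintro ω ⟨hωU, hωE⟩
      refine ⟨?_, hωE⟩
      have hXω : X b0 ω = true := hωE
      refine ⟨S b0 ω, hS b0 ω, ?_⟩
      have heq : (fun a' => Y' ω a' || decide (a' = S b0 ω)) = Y ω := by
        funext a'
        by_cases hπa : π a' = b0
        · have hC' : π a' ∉ C' := fun h => hb0 (hπa ▸ h)
          have h1 : Y' ω a' = false := by simp [hY', hC']
          have h2 : Y ω a' = decide (S (π a') ω = a') := by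
            simp [hY, mem_insert, hπa, hXω]
          rw [h1, h2, Bool.false_or, hπa]
          exact decide_eq_decide.2 eq_comm
        · have hiff : (π a' ∈ insert b0 C') ↔ (π a' ∈ C') := by
            rw [mem_insert]; simp [hπa]
          have hne : a' ≠ S b0 ω := fun h => hπa (by rw [h, hS b0 ω])
          simp [hY, hY', hiff, hne, decide_eq_false hπa]
      rw [heq]
      exact hωU
    have hincl0 : {ω | Y ω ∈ U} \ E1 ⊆ {ω | Y' ω ∈ U} \ E1 := by
      rintro ω ⟨hωU, hωE⟩
      refine ⟨?_, hωE⟩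
      have hXω : X b0 ω = false := by
        have h := hωE
        simp only [hE1, Set.mem_setOf_eq, Bool.not_eq_true] at h
        exact h
      have heq : Y ω = Y' ω := by
        funext a'
        by_cases hπa : π a' = b0
        · have hC' : π a' ∉ C' := fun h => hb0 (hπa ▸ h)
          simp [hY, hY', hπa, hXω, hC']
        · have hd0 : decide (π a' = b0) = false := decide_eq_false hπa
          simp [hY, hY', hd0]
      show Y' ω ∈ U
      rw [← heq]
      exact hωU
    set PA := P.restrict E1 with hPA
    set PB := P.restrict E1ᶜ with hPB
    have hDm : ∀ (D : Finset B) (t : B → Bool),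
        MeasurableSet {ω | ∀ b ∈ D, X b ω = t b} := by
      intro D t
      have : {ω | ∀ b ∈ D, X b ω = t b} = ⋂ b ∈ D, X b ⁻¹' {t b} := by ext ω; simp
      rw [this]
      exact MeasurableSet.biInter (D : Set B).to_countable
        (fun b _ => hXmeas b (MeasurableSet.singleton _))
    have hPAuniv : PA Set.univ = P Set.univ * bern p {true} := by
      rw [hPA, Measure.restrict_apply MeasurableSet.univ, Set.univ_inter]
      have hE1eq : E1 = {ω | ∀ b ∈ ({b0} : Finset B), X b ω = (fun _ => true) b} := by
        ext ω; simp [hE1]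
      rw [hE1eq, hhyp (fun _ => true) {b0} (by simp), Finset.prod_singleton]
    have hPBuniv : PB Set.univ = P Set.univ * bern p {false} := by
      rw [hPB, Measure.restrict_apply MeasurableSet.univ, Set.univ_inter]
      have hE1eq : E1ᶜ = {ω | ∀ b ∈ ({b0} : Finset B), X b ω = (fun _ => false) b} := by
        ext ω; simp [hE1, Bool.not_eq_true]
      rw [hE1eq, hhyp (fun _ => false) {b0} (by simp), Finset.prod_singleton]
    have hhypA : ∀ (t : B → Bool) (D : Finset B), D ⊆ C' →
        PA {ω | ∀ b ∈ D, X b ω = t b} = PA Set.univ * ∏ b ∈ D, bern p ({t b} : Set Bool) := by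
      intro t D hD
      rw [hPA, Measure.restrict_apply (hDm D t)]
      have hseteq : {ω | ∀ b ∈ D, X b ω = t b} ∩ E1
          = {ω | ∀ b ∈ insert b0 D, X b ω = Function.update t b0 true b} := by
        ext ω
        simp only [Set.mem_inter_iff, Set.mem_setOf_eq, mem_insert, hE1]
        constructor
        · rintro ⟨hD1, hX1⟩ b hb
          rcases hb with rfl | hb
          · rw [Function.update_self]; exact hX1
          · rw [Function.update_of_ne (fun h => hb0 (by rw [← h]; exact hD hb))]; exact hD1 b hb
        · intro h
          constructor
          · intro b hb
            have hbne : b ≠ b0 := fun h => hb0 (h ▸ hD hb)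
            have := h b (Or.inr hb)
            rwa [Function.update_of_ne hbne] at this
          · have := h b0 (Or.inl rfl)
            rwa [Function.update_self] at this
      rw [hseteq, hhyp (Function.update t b0 true) (insert b0 D)
        (insert_subset_insert _ hD)]
      have hb0D : b0 ∉ D := fun h => hb0 (hD h)
      rw [Finset.prod_insert hb0D, Function.update_self]
      have hprodeq : ∏ b ∈ D, bern p ({Function.update t b0 true b} : Set Bool)
          = ∏ b ∈ D, bern p ({t b} : Set Bool) :=
        Finset.prod_congr rfl (fun b hb => by
          rw [Function.update_of_ne (fun h => hb0 (by rw [← h]; exact hD hb))])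
      rw [hprodeq, hPAuniv, mul_assoc]
    have hhypB : ∀ (t : B → Bool) (D : Finset B), D ⊆ C' →
        PB {ω | ∀ b ∈ D, X b ω = t b} = PB Set.univ * ∏ b ∈ D, bern p ({t b} : Set Bool) := by
      intro t D hD
      rw [hPB, Measure.restrict_apply (hDm D t)]
      have hseteq : {ω | ∀ b ∈ D, X b ω = t b} ∩ E1ᶜ
          = {ω | ∀ b ∈ insert b0 D, X b ω = Function.update t b0 false b} := by
        ext ω
        simp only [Set.mem_inter_iff, Set.mem_setOf_eq, mem_insert, hE1,
          Set.mem_compl_iff, Bool.not_eq_true]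
        constructor
        · rintro ⟨hD1, hX1⟩ b hb
          rcases hb with rfl | hb
          · rw [Function.update_self]; exact hX1
          · rw [Function.update_of_ne (fun h => hb0 (by rw [← h]; exact hD hb))]; exact hD1 b hb
        · intro h
          constructor
          · intro b hb
            have hbne : b ≠ b0 := fun h => hb0 (h ▸ hD hb)
            have := h b (Or.inr hb)
            rwa [Function.update_of_ne hbne] at this
          · have := h b0 (Or.inl rfl)
            rwa [Function.update_self] at this
      rw [hseteq, hhyp (Function.update t b0 false) (insert b0 D)
        (insert_subset_insert _ hD)]
      have hb0D : b0 ∉ D := fun h => hb0 (hD h)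
      rw [Finset.prod_insert hb0D, Function.update_self]
      have hprodeq : ∏ b ∈ D, bern p ({Function.update t b0 false b} : Set Bool)
          = ∏ b ∈ D, bern p ({t b} : Set Bool) :=
        Finset.prod_congr rfl (fun b hb => by
          rw [Function.update_of_ne (fun h => hb0 (by rw [← h]; exact hD hb))])
      rw [hprodeq, hPBuniv, mul_assoc]
    have hIH1 : PA {ω | Y' ω ∈ Uplus} ≤ PA Set.univ * ν' Uplus :=
      ih PA inferInstance hhypA Uplus hUplusUpper
    have hIH0 : PB {ω | Y' ω ∈ U} ≤ PB Set.univ * ν' U :=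
      ih PB inferInstance hhypB U hU
    calc P {ω | Y ω ∈ U} ≤ PA {ω | Y' ω ∈ Uplus} + PB {ω | Y' ω ∈ U} := by
          rw [hsplit, hPA, hPB, Measure.restrict_apply (hYm _),
            Measure.restrict_apply (hYm _)]
          refine add_le_add (measure_mono hincl1) (measure_mono ?_)
          rw [← Set.diff_eq]
          exact hincl0
    _ ≤ PA Set.univ * ν' Uplus + PB Set.univ * ν' U := add_le_add hIH1 hIH0
    _ = P Set.univ * (bern p {true} * ν' Uplus + bern p {false} * ν' U) := by
          rw [hPAuniv, hPBuniv]; ring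
    _ ≤ P Set.univ * Measure.pi (fun a : A => if π a ∈ insert b0 C' then bern p
          else Measure.dirac false) U := by
          refine mul_le_mul_right ?_ _
          rw [bern_true, bern_false, hν']
          exact step_ineq π hπ p hp b0 C' hb0 U hU

end MainLemma

/-- **Theorem (lifting one variable per column).**  If `(X_b)` are i.i.d. Bernoulli(p),
`S b` takes values in `π⁻¹(b)`, and `Y_a = X_{π a} · 1[S (π a) = a]`, then the law of
`Y` is stochastically dominated by `Bernoulli(p)^{⊗A}`. -/
theorem stmt0 {A B : Type*} [Fintype A] [Nonempty A] [DecidableEq A] [Fintype B] [Nonempty B]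
    [MeasurableSpace A] [DiscreteMeasurableSpace A]
    (π : A → B) (hπ : Function.Surjective π)
    (p : ENNReal) (hp : p ≤ 1)
    {Ω : Type*} [MeasurableSpace Ω] (P : Measure Ω) [IsProbabilityMeasure P]
    (X : B → Ω → Bool) (S : B → Ω → A)
    (hXmeas : ∀ b, Measurable (X b)) (hSmeas : ∀ b, Measurable (S b))
    (hlaw : P.map (fun ω b => X b ω) = Measure.pi (fun _ : B => bern p))
    (hS : ∀ b ω, π (S b ω) = b) :
    StochDom
      (P.map (fun ω a => X (π a) ω && decide (S (π a) ω = a)))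
      (Measure.pi (fun _ : A => bern p)) := by
  classical
  haveI hbp : IsProbabilityMeasure (bern p) := bern_prob p hp
  haveI : ∀ _b : A, IsProbabilityMeasure ((fun _ : A => bern p) _b) := fun _ => hbp
  have hYmeas : Measurable (fun ω a => X (π a) ω && decide (S (π a) ω = a) :
      Ω → A → Bool) := by
    apply measurable_pi_lambda
    intro a
    have h1 : Measurable (fun ω => (X (π a) ω, S (π a) ω)) := (hXmeas _).prodMk (hSmeas _)
    exact (Measurable.of_discrete (f := fun q : Bool × A => q.1 && decide (q.2 = a))).comp h1
  haveI : IsProbabilityMeasure (P.map (fun ω a => X (π a) ω && decide (S (π a) ω = a))) :=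
    Measure.isProbabilityMeasure_map hYmeas.aemeasurable
  have hmeasall : ∀ s : Set (A → Bool), MeasurableSet s :=
    fun s => s.to_countable.measurableSet
  refine stochDom_of_le_upperSets _ _ ?_
  intro U hU
  rw [Measure.map_apply hYmeas (hmeasall U)]
  have hhyp : ∀ (t : B → Bool) (D : Finset B), D ⊆ Finset.univ →
      P {ω | ∀ b ∈ D, X b ω = t b} = P Set.univ * ∏ b ∈ D, bern p ({t b} : Set Bool) := by
    intro t D _
    have hXmeasAll : Measurable (fun ω b => X b ω : Ω → B → Bool) :=
      measurable_pi_lambda _ (fun b => hXmeas b)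
    have hmeasB : ∀ s : Set (B → Bool), MeasurableSet s :=
      fun s => s.to_countable.measurableSet
    have hset : {ω | ∀ b ∈ D, X b ω = t b}
        = (fun ω (b : B) => X b ω) ⁻¹' {f | ∀ b ∈ D, f b = t b} := rfl
    rw [hset, ← Measure.map_apply hXmeasAll (hmeasB _), hlaw]
    have hsetpi : {f : B → Bool | ∀ b ∈ D, f b = t b}
        = Set.univ.pi (fun b => if b ∈ D then ({t b} : Set Bool) else Set.univ) := by
      ext f
      simp only [Set.mem_setOf_eq, Set.mem_pi, Set.mem_univ, true_implies]
      constructor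
      · intro h b
        by_cases hb : b ∈ D
        · rw [if_pos hb]; exact h b hb
        · rw [if_neg hb]; trivial
      · intro h b hb
        have := h b; rwa [if_pos hb] at this
    rw [hsetpi, Measure.pi_pi, measure_univ, one_mul]
    have hterm : ∀ b : B, (bern p) (if b ∈ D then ({t b} : Set Bool) else Set.univ)
        = if b ∈ D then (bern p) {t b} else 1 := by
      intro b
      by_cases hb : b ∈ D
      · rw [if_pos hb, if_pos hb]
      · rw [if_neg hb, if_neg hb, measure_univ]
    simp_rw [hterm]
    rw [Finset.prod_ite_mem, Finset.univ_inter]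
  have hkey := key_ineq π hπ p hp X S hXmeas hSmeas hS Finset.univ P inferInstance hhyp U hU
  have hYeq : ∀ ω : Ω, (fun a => decide (π a ∈ Finset.univ) &&
      (X (π a) ω && decide (S (π a) ω = a)))
      = fun a => X (π a) ω && decide (S (π a) ω = a) := by
    intro ω; funext a; simp
  have hseteq : ((fun ω (a : A) => X (π a) ω && decide (S (π a) ω = a)) ⁻¹' U)
      = {ω | (fun a => decide (π a ∈ Finset.univ) &&
        (X (π a) ω && decide (S (π a) ω = a))) ∈ U} :=
    Set.ext fun ω => by
      simp only [Set.mem_preimage, Set.mem_setOf_eq, hYeq ω]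
  have hνeq : Measure.pi (fun a : A => if π a ∈ Finset.univ then bern p
      else Measure.dirac false) = Measure.pi (fun _ : A => bern p) := by
    congr 1
    funext a
    rw [if_pos (Finset.mem_univ _)]
  rw [hseteq]
  calc P {ω | (fun a => decide (π a ∈ Finset.univ) &&
        (X (π a) ω && decide (S (π a) ω = a))) ∈ U}
      ≤ P Set.univ * Measure.pi (fun a : A => if π a ∈ Finset.univ then bern p
        else Measure.dirac false) U := hkey
  _ = Measure.pi (fun _ : A => bern p) U := by
      rw [measure_univ, one_mul, hνeq]
end

section
/- Let h₁ : E₁ → E₁' and h₂ : E₂ → E₂' be functions between countable sets, let ν₁ and ν₂ be probability measures on E₁ and E₂ respectively, and let η be a coupling between the pushforward measures ν₁ ∘ h₁⁻¹ and ν₂ ∘ h₂⁻¹. Then there exists a coupling ν of ν₁ and ν₂ whose pushforward by the map (x₁,x₂) ↦ (h₁(x₁), h₂(x₂)) equals η. -/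
open MeasureTheory ProbabilityTheory
open scoped ENNReal

/-- `κ` is a coupling of `μ` and `ν`. -/
def IsCoupling {E₁ E₂ : Type*} [MeasurableSpace E₁] [MeasurableSpace E₂]
    (κ : Measure (E₁ × E₂)) (μ : Measure E₁) (ν : Measure E₂) : Prop :=
  IsProbabilityMeasure κ ∧ κ.map Prod.fst = μ ∧ κ.map Prod.snd = ν

section aux

open scoped ENNReal

variable {E E' : Type*} [Countable E] [MeasurableSpace E] [DiscreteMeasurableSpace E]

/-- The measure of a set in a countable discrete space is the sum of the measures of its
singletons. -/
lemma aux_measure_eq_tsum (μ : Measure E) (s : Set E) : μ s = ∑' x : s, μ {(x : E)} := by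
  rw [tsum_subtype s fun x => μ {x}]
  exact (Measure.tsum_indicator_apply_singleton μ s .of_discrete).symm

lemma aux_map_singleton [MeasurableSpace E'] [DiscreteMeasurableSpace E']
    (μ : Measure E) (h : E → E') (y : E') :
    μ.map h {y} = μ (h ⁻¹' {y}) :=
  Measure.map_apply .of_discrete .of_discrete

lemma aux_sum_apply (f : E → ℝ≥0∞) (s : Set E) :
    Measure.sum (fun p => f p • Measure.dirac p) s = ∑' p : s, f p := by
  rw [Measure.sum_apply _ .of_discrete, tsum_subtype]
  refine tsum_congr fun p => ?_
  by_cases hp : p ∈ s <;>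
    simp [Measure.dirac_apply' _ (MeasurableSet.of_discrete (s := s)), hp, Set.indicator_apply]

/-- Summing a fibered function against a measure. -/
lemma aux_fiber_sum [Countable E'] [MeasurableSpace E'] [DiscreteMeasurableSpace E']
    (μ : Measure E) (h : E → E') (F : E' → ℝ≥0∞) :
    ∑' x, F (h x) * μ {x} = ∑' y, F y * μ.map h {y} := by
  rw [← ENNReal.tsum_fiberwise (fun x => F (h x) * μ {x}) h]
  refine tsum_congr fun y => ?_
  have h1 : ∀ x : h ⁻¹' {y}, F (h (x : E)) * μ {(x : E)} = F y * μ {(x : E)} := fun x => by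
    rw [show h (x : E) = y from x.2]
  rw [tsum_congr h1, ENNReal.tsum_mul_left, aux_map_singleton, aux_measure_eq_tsum]

/-- Summing over the fiber of `Prod.fst`. -/
lemma aux_tsum_fiber_fst {A B : Type*} [Countable A] [Countable B]
    [MeasurableSpace A] [DiscreteMeasurableSpace A]
    [MeasurableSpace B] [DiscreteMeasurableSpace B]
    (g : A × B → ℝ≥0∞) (a : A) :
    ∑' p : (Prod.fst ⁻¹' {a} : Set (A × B)), g p = ∑' b, g (a, b) := by
  let e : B ≃ (Prod.fst ⁻¹' {a} : Set (A × B)) :=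
    { toFun := fun b => ⟨(a, b), rfl⟩
      invFun := fun p => (p : A × B).2
      left_inv := fun b => rfl
      right_inv := fun p => Subtype.ext (Prod.ext (show (a, (p : A × B).2).1 = (p : A × B).1
        from p.2.symm) rfl) }
  rw [← Equiv.tsum_eq e fun p => g (p : A × B)]
  exact tsum_congr fun b => rfl

/-- Summing over the fiber of `Prod.snd`. -/
lemma aux_tsum_fiber_snd {A B : Type*} [Countable A] [Countable B]
    [MeasurableSpace A] [DiscreteMeasurableSpace A]
    [MeasurableSpace B] [DiscreteMeasurableSpace B]
    (g : A × B → ℝ≥0∞) (b : B) :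
    ∑' p : (Prod.snd ⁻¹' {b} : Set (A × B)), g p = ∑' a, g (a, b) := by
  let e : A ≃ (Prod.snd ⁻¹' {b} : Set (A × B)) :=
    { toFun := fun a => ⟨(a, b), rfl⟩
      invFun := fun p => (p : A × B).1
      left_inv := fun a => rfl
      right_inv := fun p => Subtype.ext (Prod.ext rfl (show ((p : A × B).1, b).2 = (p : A × B).2
        from p.2.symm)) }
  rw [← Equiv.tsum_eq e fun p => g (p : A × B)]
  exact tsum_congr fun a => rfl

end aux

/-- **Pulling back a coupling.** Any coupling `η` of the pushforward measures
`ν₁ ∘ h₁⁻¹` and `ν₂ ∘ h₂⁻¹` can be obtained as the pushforward by `(h₁, h₂)` of a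
coupling of `ν₁` and `ν₂`. -/
theorem stmt2 {E₁ E₂ E₁' E₂' : Type*} [Countable E₁] [Countable E₂] [Countable E₁'] [Countable E₂']
    [MeasurableSpace E₁] [DiscreteMeasurableSpace E₁]
    [MeasurableSpace E₂] [DiscreteMeasurableSpace E₂]
    [MeasurableSpace E₁'] [DiscreteMeasurableSpace E₁']
    [MeasurableSpace E₂'] [DiscreteMeasurableSpace E₂']
    (h₁ : E₁ → E₁') (h₂ : E₂ → E₂')
    (ν₁ : Measure E₁) (ν₂ : Measure E₂)
    [IsProbabilityMeasure ν₁] [IsProbabilityMeasure ν₂]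
    (η : Measure (E₁' × E₂'))
    (hη : IsCoupling η (ν₁.map h₁) (ν₂.map h₂)) :
    ∃ ν : Measure (E₁ × E₂), IsCoupling ν ν₁ ν₂ ∧
      ν.map (Prod.map h₁ h₂) = η := by
  classical
  obtain ⟨hηp, hfst, hsnd⟩ := hη
  set G₁ : E₁' → ℝ≥0∞ := fun y => ν₁.map h₁ {y} with hG₁def
  set G₂ : E₂' → ℝ≥0∞ := fun y => ν₂.map h₂ {y} with hG₂def
  set f : E₁ × E₂ → ℝ≥0∞ := fun p =>
    η {(h₁ p.1, h₂ p.2)} * (ν₁ {p.1} / G₁ (h₁ p.1)) * (ν₂ {p.2} / G₂ (h₂ p.2)) with hfdef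
  set ν : Measure (E₁ × E₂) := Measure.sum (fun p => f p • Measure.dirac p) with hνdef
  have hG₁top : ∀ y, G₁ y ≠ ∞ := fun y => measure_ne_top _ _
  have hG₂top : ∀ y, G₂ y ≠ ∞ := fun y => measure_ne_top _ _
  have hν₁le : ∀ x, ν₁ {x} ≤ G₁ (h₁ x) := fun x => by
    rw [hG₁def]
    simp only [aux_map_singleton]
    exact measure_mono (by rintro z rfl; rfl)
  have hν₂le : ∀ x, ν₂ {x} ≤ G₂ (h₂ x) := fun x => by
    rw [hG₂def]
    simp only [aux_map_singleton]
    exact measure_mono (by rintro z rfl; rfl)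
  have hηle₁ : ∀ y₁ y₂, η {(y₁, y₂)} ≤ G₁ y₁ := fun y₁ y₂ => by
    rw [hG₁def]; dsimp only; rw [← hfst, aux_map_singleton]
    exact measure_mono (by rintro z rfl; rfl)
  have hηle₂ : ∀ y₁ y₂, η {(y₁, y₂)} ≤ G₂ y₂ := fun y₁ y₂ => by
    rw [hG₂def]; dsimp only; rw [← hsnd, aux_map_singleton]
    exact measure_mono (by rintro z rfl; rfl)
  -- the sum over the `η`-fibers
  have hηfst : ∀ y₁ : E₁', ∑' y₂, η {(y₁, y₂)} = G₁ y₁ := fun y₁ => by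
    rw [hG₁def]; dsimp only; rw [← hfst, aux_map_singleton, aux_measure_eq_tsum,
      aux_tsum_fiber_fst (fun p => η {p}) y₁]
  have hηsnd : ∀ y₂ : E₂', ∑' y₁, η {(y₁, y₂)} = G₂ y₂ := fun y₂ => by
    rw [hG₂def]; dsimp only; rw [← hsnd, aux_map_singleton, aux_measure_eq_tsum,
      aux_tsum_fiber_snd (fun p => η {p}) y₂]
  -- first marginal
  have hmargfst : ν.map Prod.fst = ν₁ := by
    refine Measure.ext_of_singleton fun x₁ => ?_
    rw [aux_map_singleton, hνdef, aux_sum_apply, aux_tsum_fiber_fst f x₁]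
    have step1 : ∀ x₂ : E₂, f (x₁, x₂) =
        ((η {(h₁ x₁, h₂ x₂)} / G₂ (h₂ x₂)) * (ν₁ {x₁} / G₁ (h₁ x₁))) * ν₂ {x₂} := fun x₂ => by
      rw [hfdef]; dsimp only
      rw [div_eq_mul_inv, div_eq_mul_inv, div_eq_mul_inv]; ring
    rw [tsum_congr step1,
      aux_fiber_sum ν₂ h₂ (fun y => (η {(h₁ x₁, y)} / G₂ y) * (ν₁ {x₁} / G₁ (h₁ x₁)))]
    have step2 : ∀ y : E₂',
        ((η {(h₁ x₁, y)} / G₂ y) * (ν₁ {x₁} / G₁ (h₁ x₁))) * ν₂.map h₂ {y} =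
        η {(h₁ x₁, y)} * (ν₁ {x₁} / G₁ (h₁ x₁)) := fun y => by
      by_cases hy : G₂ y = 0
      · have hz : η {(h₁ x₁, y)} = 0 := le_antisymm ((hηle₂ _ _).trans hy.le) zero_le
        rw [hz]; simp
      · have : ν₂.map h₂ {y} = G₂ y := rfl
        rw [this, mul_right_comm, ENNReal.div_mul_cancel hy (hG₂top y)]
    rw [tsum_congr step2, ENNReal.tsum_mul_right, hηfst]
    by_cases hx : G₁ (h₁ x₁) = 0
    · have : ν₁ {x₁} = 0 := le_antisymm ((hν₁le x₁).trans hx.le) zero_le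
      rw [this, hx]; simp
    · exact ENNReal.mul_div_cancel hx (hG₁top _)
  -- second marginal
  have hmargsnd : ν.map Prod.snd = ν₂ := by
    refine Measure.ext_of_singleton fun x₂ => ?_
    rw [aux_map_singleton, hνdef, aux_sum_apply, aux_tsum_fiber_snd f x₂]
    have step1 : ∀ x₁ : E₁, f (x₁, x₂) =
        ((η {(h₁ x₁, h₂ x₂)} / G₁ (h₁ x₁)) * (ν₂ {x₂} / G₂ (h₂ x₂))) * ν₁ {x₁} := fun x₁ => by
      rw [hfdef]; dsimp only
      rw [div_eq_mul_inv, div_eq_mul_inv, div_eq_mul_inv]; ring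
    rw [tsum_congr step1,
      aux_fiber_sum ν₁ h₁ (fun y => (η {(y, h₂ x₂)} / G₁ y) * (ν₂ {x₂} / G₂ (h₂ x₂)))]
    have step2 : ∀ y : E₁',
        ((η {(y, h₂ x₂)} / G₁ y) * (ν₂ {x₂} / G₂ (h₂ x₂))) * ν₁.map h₁ {y} =
        η {(y, h₂ x₂)} * (ν₂ {x₂} / G₂ (h₂ x₂)) := fun y => by
      by_cases hy : G₁ y = 0
      · have hz : η {(y, h₂ x₂)} = 0 := le_antisymm ((hηle₁ _ _).trans hy.le) zero_le
        rw [hz]; simp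
      · have : ν₁.map h₁ {y} = G₁ y := rfl
        rw [this, mul_right_comm, ENNReal.div_mul_cancel hy (hG₁top y)]
    rw [tsum_congr step2, ENNReal.tsum_mul_right, hηsnd]
    by_cases hx : G₂ (h₂ x₂) = 0
    · have : ν₂ {x₂} = 0 := le_antisymm ((hν₂le x₂).trans hx.le) zero_le
      rw [this, hx]; simp
    · exact ENNReal.mul_div_cancel hx (hG₂top _)
  -- pushforward
  have hpush : ν.map (Prod.map h₁ h₂) = η := by
    refine Measure.ext_of_singleton fun y => ?_
    obtain ⟨y₁, y₂⟩ := y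
    rw [aux_map_singleton, hνdef, aux_sum_apply]
    have hset : (Prod.map h₁ h₂ ⁻¹' {(y₁, y₂)} : Set (E₁ × E₂)) =
        (h₁ ⁻¹' {y₁}) ×ˢ (h₂ ⁻¹' {y₂}) := by
      ext ⟨x₁, x₂⟩
      simp [Prod.ext_iff]
    rw [hset]
    rw [← Equiv.tsum_eq (Equiv.Set.prod (h₁ ⁻¹' {y₁}) (h₂ ⁻¹' {y₂})).symm
      (fun p : ((h₁ ⁻¹' {y₁}) ×ˢ (h₂ ⁻¹' {y₂}) : Set (E₁ × E₂)) => f p)]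
    rw [ENNReal.tsum_prod'
      (f := fun p : (h₁ ⁻¹' {y₁} : Set E₁) × (h₂ ⁻¹' {y₂} : Set E₂) =>
        f ((Equiv.Set.prod _ _).symm p))]
    have hval : ∀ (a : (h₁ ⁻¹' {y₁} : Set E₁)) (b : (h₂ ⁻¹' {y₂} : Set E₂)),
        f ((Equiv.Set.prod _ _).symm (a, b)) =
        (η {(y₁, y₂)} * (ν₁ {(a : E₁)} / G₁ y₁)) * (ν₂ {(b : E₂)} / G₂ y₂) := fun a b => by
      have ha : h₁ (a : E₁) = y₁ := a.2
      have hb : h₂ (b : E₂) = y₂ := b.2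
      rw [hfdef]
      simp only [Equiv.Set.prod, Equiv.trans_apply]
      show η {(h₁ (a : E₁), h₂ (b : E₂))} * (ν₁ {(a : E₁)} / G₁ (h₁ (a : E₁))) *
        (ν₂ {(b : E₂)} / G₂ (h₂ (b : E₂))) = _
      rw [ha, hb]
    calc ∑' (a : (h₁ ⁻¹' {y₁} : Set E₁)) (b : (h₂ ⁻¹' {y₂} : Set E₂)),
          f ((Equiv.Set.prod _ _).symm (a, b))
        = ∑' (a : (h₁ ⁻¹' {y₁} : Set E₁)) (b : (h₂ ⁻¹' {y₂} : Set E₂)),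
          (η {(y₁, y₂)} * (ν₁ {(a : E₁)} / G₁ y₁)) * (ν₂ {(b : E₂)} / G₂ y₂) := by
          exact tsum_congr fun a => tsum_congr fun b => hval a b
      _ = (η {(y₁, y₂)} * ((∑' (a : (h₁ ⁻¹' {y₁} : Set E₁)), ν₁ {(a : E₁)}) / G₁ y₁)) *
          ((∑' (b : (h₂ ⁻¹' {y₂} : Set E₂)), ν₂ {(b : E₂)}) / G₂ y₂) := by
          simp only [div_eq_mul_inv, ENNReal.tsum_mul_right, ENNReal.tsum_mul_left, mul_assoc]
      _ = (η {(y₁, y₂)} * (G₁ y₁ / G₁ y₁)) * (G₂ y₂ / G₂ y₂) := by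
          rw [← aux_measure_eq_tsum ν₁ (h₁ ⁻¹' {y₁}), ← aux_measure_eq_tsum ν₂ (h₂ ⁻¹' {y₂}),
            ← aux_map_singleton, ← aux_map_singleton]
      _ = η {(y₁, y₂)} := by
          by_cases hy1 : G₁ y₁ = 0
          · have hz : η {(y₁, y₂)} = 0 := le_antisymm ((hηle₁ _ _).trans hy1.le) zero_le
            rw [hz]; simp
          by_cases hy2 : G₂ y₂ = 0
          · have hz : η {(y₁, y₂)} = 0 := le_antisymm ((hηle₂ _ _).trans hy2.le) zero_le
            rw [hz]; simp
          rw [ENNReal.div_self hy1 (hG₁top _), ENNReal.div_self hy2 (hG₂top _), mul_one, mul_one]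
  have hprob : IsProbabilityMeasure ν := by
    constructor
    have h1 : ν.map Prod.fst Set.univ = ν Set.univ := by
      rw [Measure.map_apply Measurable.of_discrete MeasurableSet.univ, Set.preimage_univ]
    rw [← h1, hmargfst, measure_univ]
  exact ⟨ν, ⟨hprob, hmargfst, hmargsnd⟩, hpush⟩
end

section
/- Let N ≥ 1 and let π : A → B be a surjective map between nonempty finite sets, with a fixed section 𝔰 of π. Let μ and ρ be probability measures on {0,...,N}^A. Assume: (i) μ is a π-lift; (ii) condition A_ρ: if Z ~ ρ and, for each b ∈ B, W_b denotes (Z_c : π(c) ≠ b), then for every b, every a ∈ π⁻¹(b), and every positive-probability event H in σ(W_b), the conditional law of Z_{𝔰(b)} given H is stochastically dominated by the conditional law of Z_a given H; (iii) condition B_μ^ρ: if Y ~ μ, X_b := max_{a∈π⁻¹(b)} Y_a, and Y'_a := X_{π(a)} · 1[𝔰(π(a)) = a], then the law of Y' is stochastically dominated by ρ. Then μ is stochastically dominated by ρ. -/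
set_option maxHeartbeats 4000000
set_option linter.unusedSectionVars false
set_option linter.unusedVariables false


open MeasureTheory ProbabilityTheory

open scoped ENNReal NNReal

section Strassen
namespace StrassenAux

variable {Ω : Type*} [Fintype Ω] [DecidableEq Ω] [Preorder Ω]

open Classical in
/-- Up-closure (neighbourhood) of a finite set. -/
noncomputable def NS (S : Finset Ω) : Finset Ω :=
  Finset.univ.filter (fun z => ∃ x ∈ S, x ≤ z)

lemma mem_NS {S : Finset Ω} {z : Ω} : z ∈ NS S ↔ ∃ x ∈ S, x ≤ z := by
  classical
  simp [NS]

lemma subset_NS {S : Finset Ω} : S ⊆ NS S := fun x hx => mem_NS.2 ⟨x, hx, le_refl x⟩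

lemma NS_mono {S T : Finset Ω} (h : S ⊆ T) : NS S ⊆ NS T := fun z hz => by
  obtain ⟨x, hx, hle⟩ := mem_NS.1 hz
  exact mem_NS.2 ⟨x, h hx, hle⟩

lemma NS_union (S T : Finset Ω) : NS (S ∪ T) = NS S ∪ NS T := by
  ext z
  simp only [mem_NS, Finset.mem_union]
  constructor
  · rintro ⟨x, hx | hx, hle⟩
    exacts [Or.inl ⟨x, hx, hle⟩, Or.inr ⟨x, hx, hle⟩]
  · rintro (⟨x, hx, hle⟩ | ⟨x, hx, hle⟩)
    exacts [⟨x, Or.inl hx, hle⟩, ⟨x, Or.inr hx, hle⟩]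

lemma NS_empty : NS (∅ : Finset Ω) = ∅ := by
  ext z; simp [mem_NS]

lemma sum_update_add {f : Ω → NNReal} {x₀ : Ω} {t : NNReal} (ht : t ≤ f x₀) {S : Finset Ω}
    (hx : x₀ ∈ S) :
    (∑ x ∈ S, Function.update f x₀ (f x₀ - t) x) + t = ∑ x ∈ S, f x := by
  rw [Finset.sum_update_of_mem hx, ← Finset.erase_eq, add_right_comm,
    tsub_add_cancel_of_le ht, Finset.add_sum_erase S f hx]

lemma sum_update_not_mem {f : Ω → NNReal} {x₀ : Ω} {v : NNReal} {S : Finset Ω} (hx : x₀ ∉ S) :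
    ∑ x ∈ S, Function.update f x₀ v x = ∑ x ∈ S, f x :=
  Finset.sum_congr rfl fun x hxS => Function.update_of_ne (by rintro rfl; exact hx hxS) _ _

lemma cancel_right {a b c : NNReal} (h : a + c ≤ b + c) : a ≤ b :=
  le_of_add_le_add_right h

lemma nat_lex_aux {C x y c c' : ℕ} (h : x < y) (hc' : c' < C) : x * C + c' < y * C + c :=
  calc x * C + c' < x * C + C := by omega
  _ = (x + 1) * C := by ring
  _ ≤ y * C := Nat.mul_le_mul_right C h
  _ ≤ y * C + c := Nat.le_add_right _ _

open Classical in
noncomputable def ntc (f g : Ω → NNReal) : ℕ :=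
  (Finset.univ.powerset.filter
    (fun S : Finset Ω => ¬ (∑ z ∈ NS S, g z ≤ ∑ x ∈ S, f x))).card

open Classical in
noncomputable def suppc (f : Ω → NNReal) : ℕ := (Finset.univ.filter fun x => f x ≠ 0).card

noncomputable def CC (Ω : Type*) [Fintype Ω] : ℕ := 2 ^ Fintype.card Ω + Fintype.card Ω + 1

noncomputable def msr (f g : Ω → NNReal) : ℕ :=
  (suppc f * CC Ω + suppc g) * CC Ω + ntc f g

lemma suppc_lt (f : Ω → NNReal) : suppc f < CC Ω := by
  have h : suppc f ≤ Fintype.card Ω := by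
    classical
    calc suppc f ≤ Finset.univ.card := by
          classical exact Finset.card_filter_le _ _
    _ = Fintype.card Ω := Finset.card_univ
  have : 0 < 2 ^ Fintype.card Ω := by positivity
  unfold CC; omega

lemma ntc_lt (f g : Ω → NNReal) : ntc f g < CC Ω := by
  have h : ntc f g ≤ 2 ^ Fintype.card Ω := by
    classical
    calc ntc f g ≤ Finset.univ.powerset.card := Finset.card_filter_le _ _
    _ = 2 ^ Finset.univ.card := Finset.card_powerset _
    _ = 2 ^ Fintype.card Ω := by rw [Finset.card_univ]
  unfold CC; omega

lemma tight_union {f g : Ω → NNReal}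
    (hall : ∀ S : Finset Ω, ∑ x ∈ S, f x ≤ ∑ z ∈ NS S, g z)
    {S T : Finset Ω} (hS : ∑ z ∈ NS S, g z ≤ ∑ x ∈ S, f x)
    (hT : ∑ z ∈ NS T, g z ≤ ∑ x ∈ T, f x) :
    ∑ z ∈ NS (S ∪ T), g z ≤ ∑ x ∈ S ∪ T, f x := by
  classical
  have hmod : ∑ z ∈ NS (S ∪ T), g z + ∑ z ∈ NS S ∩ NS T, g z
      = ∑ z ∈ NS S, g z + ∑ z ∈ NS T, g z := by
    rw [NS_union]; exact Finset.sum_union_inter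
  have hsub : NS (S ∩ T) ⊆ NS S ∩ NS T := fun z hz => by
    obtain ⟨x, hx, hle⟩ := mem_NS.1 hz
    exact Finset.mem_inter.2 ⟨mem_NS.2 ⟨x, (Finset.mem_inter.1 hx).1, hle⟩,
      mem_NS.2 ⟨x, (Finset.mem_inter.1 hx).2, hle⟩⟩
  have h1 : ∑ x ∈ S ∩ T, f x ≤ ∑ z ∈ NS S ∩ NS T, g z :=
    (hall _).trans (Finset.sum_le_sum_of_subset hsub)
  have key : ∑ z ∈ NS (S ∪ T), g z + ∑ x ∈ S ∩ T, f x
      ≤ ∑ x ∈ S ∪ T, f x + ∑ x ∈ S ∩ T, f x := by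
    calc ∑ z ∈ NS (S ∪ T), g z + ∑ x ∈ S ∩ T, f x
        ≤ ∑ z ∈ NS (S ∪ T), g z + ∑ z ∈ NS S ∩ NS T, g z := add_le_add_right h1 _
      _ = ∑ z ∈ NS S, g z + ∑ z ∈ NS T, g z := hmod
      _ ≤ ∑ x ∈ S, f x + ∑ x ∈ T, f x := add_le_add hS hT
      _ = ∑ x ∈ S ∪ T, f x + ∑ x ∈ S ∩ T, f x := Finset.sum_union_inter.symm
  exact le_of_add_le_add_right key

theorem strassen_core : ∀ (n : ℕ) (f g : Ω → NNReal), msr f g ≤ n →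
    (∑ x, f x = ∑ z, g z) →
    (∀ S : Finset Ω, ∑ x ∈ S, f x ≤ ∑ z ∈ NS S, g z) →
    ∃ K : Ω → Ω → NNReal, (∀ x, ∑ z, K x z = f x) ∧ (∀ z, ∑ x, K x z = g z) ∧
      (∀ x z, K x z ≠ 0 → x ≤ z) := by
  intro n
  induction n with
  | zero =>
    intro f g hm hsum hall
    have hC : 0 < CC Ω := by unfold CC; positivity
    have hf0 : ∀ x, f x = 0 := by
      intro x
      by_contra hx
      have hsupp : 0 < suppc f := by
        classical
        refine Finset.card_pos.2 ⟨x, ?_⟩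
        simp [suppc, hx]
      have : 0 < msr f g := by
        unfold msr
        have : 0 < suppc f * CC Ω := Nat.mul_pos hsupp hC
        nlinarith [Nat.zero_le (ntc f g), Nat.zero_le (suppc g)]
      omega
    refine ⟨fun _ _ => 0, fun x => by simp [hf0], fun z => ?_, by simp⟩
    have hg : ∑ z, g z = 0 := by rw [← hsum]; simp [hf0]
    have := Finset.sum_eq_zero_iff.mp hg z (Finset.mem_univ z)
    simp [this]
  | succ n ih =>
    intro f g hm hsum hall
    classical
    by_cases hf0 : ∀ x, f x = 0
    · refine ⟨fun _ _ => 0, fun x => by simp [hf0], fun z => ?_, by simp⟩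
      have hg : ∑ z, g z = 0 := by rw [← hsum]; simp [hf0]
      have := Finset.sum_eq_zero_iff.mp hg z (Finset.mem_univ z)
      simp [this]
    push_neg at hf0
    obtain ⟨x₀, hx₀⟩ := hf0
    -- the union of all tight sets avoiding x₀
    set 𝒯 : Finset (Finset Ω) := Finset.univ.powerset.filter
      (fun S => x₀ ∉ S ∧ ∑ z ∈ NS S, g z ≤ ∑ x ∈ S, f x) with h𝒯
    set S' : Finset Ω := 𝒯.sup id with hS'def
    have hS'prop : x₀ ∉ S' ∧ ∑ z ∈ NS S', g z ≤ ∑ x ∈ S', f x := by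
      refine Finset.sup_induction (p := fun S : Finset Ω =>
        x₀ ∉ S ∧ ∑ z ∈ NS S, g z ≤ ∑ x ∈ S, f x) ?_ ?_ ?_
      · refine ⟨by simp, ?_⟩
        rw [show (⊥ : Finset Ω) = ∅ from rfl, NS_empty]
        simp
      · rintro S₁ ⟨h1, h2⟩ S₂ ⟨h3, h4⟩
        exact ⟨by simp [h1, h3], tight_union hall h2 h4⟩
      · intro S hS
        have := Finset.mem_filter.1 hS
        exact this.2
    have hS'max : ∀ S : Finset Ω, x₀ ∉ S → (∑ z ∈ NS S, g z ≤ ∑ x ∈ S, f x) → S ⊆ S' := by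
      intro S h1 h2
      exact Finset.le_sup (f := id) (Finset.mem_filter.2 ⟨Finset.mem_powerset.2 (Finset.subset_univ S), h1, h2⟩)
    -- find z₀
    have hdisj : Disjoint S' ({x₀} : Finset Ω) := by
      simp [Finset.disjoint_singleton_right, hS'prop.1]
    have h1 : ∑ x ∈ S', f x + f x₀ ≤ ∑ z ∈ NS (S' ∪ {x₀}), g z := by
      have := hall (S' ∪ {x₀})
      rwa [Finset.sum_union hdisj, Finset.sum_singleton] at this
    have h2 : ∑ z ∈ NS (S' ∪ {x₀}), g z
        = ∑ z ∈ NS S', g z + ∑ z ∈ NS {x₀} \ NS S', g z := by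
      rw [NS_union, ← Finset.union_sdiff_self_eq_union, Finset.sum_union Finset.disjoint_sdiff]
    have h3 : f x₀ ≤ ∑ z ∈ NS {x₀} \ NS S', g z := by
      rw [h2] at h1
      have h4 : ∑ x ∈ S', f x + f x₀ ≤ ∑ x ∈ S', f x + ∑ z ∈ NS {x₀} \ NS S', g z :=
        h1.trans (add_le_add_left hS'prop.2 _)
      exact le_of_add_le_add_left h4
    have hD : ∑ z ∈ NS {x₀} \ NS S', g z ≠ 0 := by
      intro h0
      rw [h0] at h3
      exact hx₀ (le_zero_iff.mp h3)
    obtain ⟨z₀, hz₀mem, hgz₀⟩ := Finset.exists_ne_zero_of_sum_ne_zero hD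
    have hz₀le : x₀ ≤ z₀ := by
      have hmem := (Finset.mem_sdiff.1 hz₀mem).1
      obtain ⟨x, hx, hle⟩ := mem_NS.1 hmem
      rw [Finset.mem_singleton] at hx
      subst hx; exact hle
    have hz₀nS' : z₀ ∉ NS S' := (Finset.mem_sdiff.1 hz₀mem).2
    -- all sets avoiding x₀ whose neighbourhood contains z₀ have positive slack
    have hSpos : ∀ S : Finset Ω, x₀ ∉ S → z₀ ∈ NS S →
        ∑ x ∈ S, f x < ∑ z ∈ NS S, g z := by
      intro S hxS hzS
      rcases lt_or_ge (∑ x ∈ S, f x) (∑ z ∈ NS S, g z) with h | h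
      · exact h
      · exact absurd (NS_mono (hS'max S hxS h) hzS) hz₀nS'
    -- the transfer amount
    set 𝒮 : Finset (Finset Ω) := Finset.univ.powerset.filter
      (fun S => x₀ ∉ S ∧ z₀ ∈ NS S) with h𝒮
    have htne : (insert (f x₀) (insert (g z₀)
        (𝒮.image fun S => ∑ z ∈ NS S, g z - ∑ x ∈ S, f x))).Nonempty :=
      ⟨f x₀, by simp⟩
    set t : NNReal := Finset.min' _ htne with ht
    have ht_fx : t ≤ f x₀ := Finset.min'_le _ _ (by simp)
    have ht_gz : t ≤ g z₀ := Finset.min'_le _ _ (by simp)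
    have ht_slack : ∀ S ∈ 𝒮, t ≤ ∑ z ∈ NS S, g z - ∑ x ∈ S, f x := by
      intro S hS
      refine Finset.min'_le _ _ ?_
      exact Finset.mem_insert_of_mem (Finset.mem_insert_of_mem
        (Finset.mem_image.2 ⟨S, hS, rfl⟩))
    have hmem := Finset.min'_mem _ htne
    have ht_pos : t ≠ 0 := by
      rcases Finset.mem_insert.1 hmem with h | h
      · have h' : t = f x₀ := ht.trans h
        exact fun h0 => hx₀ (h'.symm.trans h0)
      rcases Finset.mem_insert.1 h with h | h
      · have h' : t = g z₀ := ht.trans h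
        exact fun h0 => hgz₀ (h'.symm.trans h0)
      · obtain ⟨S, hS, hEq⟩ := Finset.mem_image.1 h
        have hSf := Finset.mem_filter.1 hS
        have hpos := hSpos S hSf.2.1 hSf.2.2
        have h' : t = ∑ z ∈ NS S, g z - ∑ x ∈ S, f x := ht.trans hEq.symm
        exact fun h0 => (tsub_pos_iff_lt.2 hpos).ne' (h'.symm.trans h0)
    -- updated functions
    set f' : Ω → NNReal := Function.update f x₀ (f x₀ - t) with hf'
    set g' : Ω → NNReal := Function.update g z₀ (g z₀ - t) with hg'
    have hf'sum : ∀ S : Finset Ω, x₀ ∈ S → (∑ x ∈ S, f' x) + t = ∑ x ∈ S, f x :=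
      fun S hx => sum_update_add ht_fx hx
    have hf'sum' : ∀ S : Finset Ω, x₀ ∉ S → ∑ x ∈ S, f' x = ∑ x ∈ S, f x :=
      fun S hx => sum_update_not_mem hx
    have hg'sum : ∀ S : Finset Ω, z₀ ∈ S → (∑ z ∈ S, g' z) + t = ∑ z ∈ S, g z :=
      fun S hz => sum_update_add ht_gz hz
    have hg'sum' : ∀ S : Finset Ω, z₀ ∉ S → ∑ z ∈ S, g' z = ∑ z ∈ S, g z :=
      fun S hz => sum_update_not_mem hz
    have hsum' : ∑ x, f' x = ∑ z, g' z := by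
      have e1 := hf'sum Finset.univ (Finset.mem_univ x₀)
      have e2 := hg'sum Finset.univ (Finset.mem_univ z₀)
      have : (∑ x, f' x) + t = (∑ z, g' z) + t := by rw [e1, e2, hsum]
      exact add_right_cancel this
    have hall' : ∀ S : Finset Ω, ∑ x ∈ S, f' x ≤ ∑ z ∈ NS S, g' z := by
      intro S
      by_cases hx : x₀ ∈ S
      · have hz : z₀ ∈ NS S := mem_NS.2 ⟨x₀, hx, hz₀le⟩
        have e1 := hf'sum S hx
        have e2 := hg'sum (NS S) hz
        refine cancel_right (c := t) ?_
        rw [e1, e2]; exact hall S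
      · by_cases hz : z₀ ∈ NS S
        · have hSmem : S ∈ 𝒮 := Finset.mem_filter.2
            ⟨Finset.mem_powerset.2 (Finset.subset_univ S), hx, hz⟩
          have hsl := ht_slack S hSmem
          have e1 := hf'sum' S hx
          have e2 := hg'sum (NS S) hz
          refine cancel_right (c := t) ?_
          rw [e1, e2]
          calc (∑ x ∈ S, f x) + t ≤ (∑ x ∈ S, f x) + (∑ z ∈ NS S, g z - ∑ x ∈ S, f x) :=
                add_le_add_right hsl _
          _ = ∑ z ∈ NS S, g z := add_tsub_cancel_of_le (hall S)
        · rw [hf'sum' S hx, hg'sum' (NS S) hz]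
          exact hall S
    -- support monotonicity
    have hsuppf : (Finset.univ.filter fun x => f' x ≠ 0) ⊆ (Finset.univ.filter fun x => f x ≠ 0) := by
      intro x hx
      rw [Finset.mem_filter] at hx ⊢
      refine ⟨hx.1, ?_⟩
      by_cases hxx : x = x₀
      · subst hxx; exact hx₀
      · rw [hf', Function.update_of_ne hxx] at hx; exact hx.2
    have hsuppg : (Finset.univ.filter fun z => g' z ≠ 0) ⊆ (Finset.univ.filter fun z => g z ≠ 0) := by
      intro z hz
      rw [Finset.mem_filter] at hz ⊢
      refine ⟨hz.1, ?_⟩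
      by_cases hzz : z = z₀
      · subst hzz; exact hgz₀
      · rw [hg', Function.update_of_ne hzz] at hz; exact hz.2
    have hsf : suppc f' ≤ suppc f := Finset.card_le_card hsuppf
    have hsg : suppc g' ≤ suppc g := Finset.card_le_card hsuppg
    -- tight sets persist
    have hpers : ∀ S : Finset Ω, (∑ z ∈ NS S, g z ≤ ∑ x ∈ S, f x) →
        (∑ z ∈ NS S, g' z ≤ ∑ x ∈ S, f' x) := by
      intro S htight
      by_cases hx : x₀ ∈ S
      · have hz : z₀ ∈ NS S := mem_NS.2 ⟨x₀, hx, hz₀le⟩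
        refine cancel_right (c := t) ?_
        rw [hf'sum S hx, hg'sum (NS S) hz]
        exact htight
      · by_cases hz : z₀ ∈ NS S
        · exact absurd htight (not_le.2 (hSpos S hx hz))
        · rw [hf'sum' S hx, hg'sum' (NS S) hz]
          exact htight
    have hntcsub : (Finset.univ.powerset.filter
          (fun S : Finset Ω => ¬ (∑ z ∈ NS S, g' z ≤ ∑ x ∈ S, f' x))) ⊆
        (Finset.univ.powerset.filter
          (fun S : Finset Ω => ¬ (∑ z ∈ NS S, g z ≤ ∑ x ∈ S, f x))) := by
      intro S hS
      rw [Finset.mem_filter] at hS ⊢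
      exact ⟨hS.1, fun h => hS.2 (hpers S h)⟩
    have hntc : ntc f' g' ≤ ntc f g := Finset.card_le_card hntcsub
    -- strict decrease of the measure
    have hmsr : msr f' g' < msr f g := by
      have hCg' : suppc g' < CC Ω := suppc_lt g'
      have hCn' : ntc f' g' < CC Ω := ntc_lt f' g'
      rcases Finset.mem_insert.1 hmem with hc | hc
      · -- t = f x₀ : x₀ leaves the support of f
        have hx₀supp : x₀ ∈ Finset.univ.filter fun x => f x ≠ 0 := by simp [hx₀]
        have hx₀nsupp : x₀ ∉ Finset.univ.filter fun x => f' x ≠ 0 := by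
          simp only [Finset.mem_filter, not_and, Decidable.not_not]
          intro _
          have hc' : t = f x₀ := ht.trans hc
          rw [hf', Function.update_self, ← hc', tsub_self]
        have hsf' : suppc f' < suppc f :=
          Finset.card_lt_card ⟨hsuppf, fun hsub => hx₀nsupp (hsub hx₀supp)⟩
        unfold msr
        exact nat_lex_aux (nat_lex_aux hsf' hCg') hCn'
      rcases Finset.mem_insert.1 hc with hc | hc
      · -- t = g z₀ : z₀ leaves the support of g
        have hz₀supp : z₀ ∈ Finset.univ.filter fun z => g z ≠ 0 := by simp [hgz₀]
        have hz₀nsupp : z₀ ∉ Finset.univ.filter fun z => g' z ≠ 0 := by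
          simp only [Finset.mem_filter, not_and, Decidable.not_not]
          intro _
          have hc' : t = g z₀ := ht.trans hc
          rw [hg', Function.update_self, ← hc', tsub_self]
        have hsg' : suppc g' < suppc g :=
          Finset.card_lt_card ⟨hsuppg, fun hsub => hz₀nsupp (hsub hz₀supp)⟩
        unfold msr
        refine nat_lex_aux ?_ hCn'
        calc suppc f' * CC Ω + suppc g' ≤ suppc f * CC Ω + suppc g' :=
              Nat.add_le_add_right (Nat.mul_le_mul_right _ hsf) _
        _ < suppc f * CC Ω + suppc g := Nat.add_lt_add_left hsg' _
      · -- t = slack of some S₁ ∈ 𝒮 : S₁ becomes tight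
        obtain ⟨S₁, hS₁mem, hS₁eq⟩ := Finset.mem_image.1 hc
        have hS₁f := Finset.mem_filter.1 hS₁mem
        have hS₁x : x₀ ∉ S₁ := hS₁f.2.1
        have hS₁z : z₀ ∈ NS S₁ := hS₁f.2.2
        have hS₁nt : ¬ (∑ z ∈ NS S₁, g z ≤ ∑ x ∈ S₁, f x) :=
          not_le.2 (hSpos S₁ hS₁x hS₁z)
        have hS₁t : ∑ z ∈ NS S₁, g' z ≤ ∑ x ∈ S₁, f' x := by
          have e1 := hf'sum' S₁ hS₁x
          have e2 := hg'sum (NS S₁) hS₁z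
          have hc' : t = ∑ z ∈ NS S₁, g z - ∑ x ∈ S₁, f x := ht.trans hS₁eq.symm
          refine cancel_right (c := t) ?_
          rw [e1, e2, hc']
          rw [add_tsub_cancel_of_le (hall S₁)]
        have hS₁old : S₁ ∈ Finset.univ.powerset.filter
            (fun S : Finset Ω => ¬ (∑ z ∈ NS S, g z ≤ ∑ x ∈ S, f x)) :=
          Finset.mem_filter.2 ⟨Finset.mem_powerset.2 (Finset.subset_univ _), hS₁nt⟩
        have hS₁new : S₁ ∉ Finset.univ.powerset.filter
            (fun S : Finset Ω => ¬ (∑ z ∈ NS S, g' z ≤ ∑ x ∈ S, f' x)) := by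
          rw [Finset.mem_filter]
          rintro ⟨-, h⟩
          exact h hS₁t
        have hntc' : ntc f' g' < ntc f g :=
          Finset.card_lt_card ⟨hntcsub, fun hsub => hS₁new (hsub hS₁old)⟩
        unfold msr
        have hfirst : (suppc f' * CC Ω + suppc g') * CC Ω ≤ (suppc f * CC Ω + suppc g) * CC Ω := by
          refine Nat.mul_le_mul_right _ ?_
          exact Nat.add_le_add (Nat.mul_le_mul_right _ hsf) hsg
        omega
    -- recurse
    obtain ⟨K', hK1, hK2, hK3⟩ := ih f' g' (by omega) hsum' hall'
    refine ⟨fun x z => K' x z + if x = x₀ ∧ z = z₀ then t else 0, ?_, ?_, ?_⟩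
    · intro x
      rw [Finset.sum_add_distrib, hK1]
      by_cases hx : x = x₀
      · have : ∑ z, (if x = x₀ ∧ z = z₀ then t else 0) = t := by
          simp only [hx, true_and]
          rw [Finset.sum_ite_eq' Finset.univ z₀ (fun _ => t)]
          simp
        rw [this, hf', hx, Function.update_self, tsub_add_cancel_of_le ht_fx]
      · have : ∑ z, (if x = x₀ ∧ z = z₀ then t else 0) = 0 := by
          simp [hx]
        rw [this, add_zero, hf', Function.update_of_ne hx]
    · intro z
      rw [Finset.sum_add_distrib, hK2]
      by_cases hz : z = z₀
      · have : ∑ x, (if x = x₀ ∧ z = z₀ then t else 0) = t := by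
          simp only [hz, and_true]
          rw [Finset.sum_ite_eq' Finset.univ x₀ (fun _ => t)]
          simp
        rw [this, hg', hz, Function.update_self, tsub_add_cancel_of_le ht_gz]
      · have : ∑ x, (if x = x₀ ∧ z = z₀ then t else 0) = 0 := by
          simp [hz]
        rw [this, add_zero, hg', Function.update_of_ne hz]
    · intro x z hK
      by_cases hxz : x = x₀ ∧ z = z₀
      · rw [hxz.1, hxz.2]; exact hz₀le
      · refine hK3 x z fun h0 => hK ?_
        show K' x z + (if x = x₀ ∧ z = z₀ then t else 0) = 0
        rw [if_neg hxz, add_zero, h0]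

theorem strassen (f g : Ω → NNReal) (hsum : ∑ x, f x = ∑ z, g z)
    (hall : ∀ S : Finset Ω, ∑ x ∈ S, f x ≤ ∑ z ∈ NS S, g z) :
    ∃ K : Ω → Ω → NNReal, (∀ x, ∑ z, K x z = f x) ∧ (∀ z, ∑ x, K x z = g z) ∧
      (∀ x z, K x z ≠ 0 → x ≤ z) :=
  strassen_core (msr f g) f g le_rfl hsum hall

end StrassenAux
end Strassen

namespace StrassenGlue

variable {E : Type*} [MeasurableSpace E] [Countable E] [MeasurableSingletonClass E]

lemma measurableSet_all (s : Set E) : MeasurableSet s := by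
  have h : s = ⋃ x ∈ s, {x} := by ext y; simp
  rw [h]
  exact MeasurableSet.biUnion (Set.to_countable s) (fun x _ => measurableSet_singleton x)

lemma stochDom_mono [Preorder E] {μ ν : Measure E} (h : StochDom μ ν)
    {U : Set E} (hU : ∀ ⦃x⦄, x ∈ U → ∀ ⦃y⦄, x ≤ y → y ∈ U) : μ U ≤ ν U := by
  obtain ⟨κ, hκ, h1, h2, hle⟩ := h
  haveI := hκ
  have hcompl : κ {q : E × E | q.1 ≤ q.2}ᶜ = 0 := by
    have h3 := measure_compl (measurableSet_all {q : E × E | q.1 ≤ q.2}) (measure_ne_top κ _)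
    rw [hle, measure_univ] at h3
    simpa using h3
  calc μ U = κ (Prod.fst ⁻¹' U) := by
        rw [← h1, Measure.map_apply measurable_fst (measurableSet_all _)]
  _ ≤ κ (Prod.snd ⁻¹' U ∪ {q : E × E | q.1 ≤ q.2}ᶜ) := by
        refine measure_mono ?_
        rintro ⟨a, b⟩ ha
        by_cases hab : a ≤ b
        · exact Or.inl (hU ha hab)
        · exact Or.inr hab
  _ ≤ κ (Prod.snd ⁻¹' U) + κ ({q : E × E | q.1 ≤ q.2}ᶜ) := measure_union_le _ _
  _ = ν U := by
        rw [hcompl, add_zero, ← h2, Measure.map_apply measurable_snd (measurableSet_all _)]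

lemma measure_coe_finset (m : Measure E) (F : Finset E) : m ↑F = ∑ x ∈ F, m {x} := by
  classical
  induction F using Finset.induction_on with
  | empty => simp
  | @insert a F ha ih =>
    rw [Finset.coe_insert, Set.insert_eq,
      measure_union ?_ (measurableSet_all _), ih, Finset.sum_insert ha]
    exact Set.disjoint_left.mpr (by rintro x rfl hx; exact ha hx)

end StrassenGlue

open StrassenGlue in
/-- **Main theorem, finite case.** If `μ` is a `π`-lift and conditions `A_ρ` and `B_μ^ρ`
hold for a section `𝔰` of `π`, then `μ` is stochastically dominated by `ρ`. -/
theorem stmt5 (N : ℕ) (hN : 1 ≤ N)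
    {A B : Type*} [Fintype A] [Nonempty A] [DecidableEq A] [Fintype B] [Nonempty B]
    [DecidableEq B]
    (π : A → B) (hπ : Function.Surjective π)
    (𝔰 : B → A) (hsec : ∀ b, π (𝔰 b) = b)
    (μ ρ : Measure (A → Fin (N + 1)))
    [IsProbabilityMeasure μ] [IsProbabilityMeasure ρ]
    (hlift : μ {x | ∀ a a' : A, π a = π a' → x a ≠ 0 → x a' ≠ 0 → a = a'} = 1)
    -- Condition `A_ρ` : conditionally on any positive-probability event depending only on
    -- the coordinates outside the fibre of `b`, the law of `Z_{𝔰 b}` is dominated by that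
    -- of `Z_a`, for every `a` in the fibre of `b`.
    (hA : ∀ b : B, ∀ a : A, π a = b →
      ∀ H : Set ({c : A // π c ≠ b} → Fin (N + 1)),
        (ρ ((fun x (c : {c : A // π c ≠ b}) => x c.1) ⁻¹' H) ≠ 0) →
        StochDom
          ((ρ[|(fun x (c : {c : A // π c ≠ b}) => x c.1) ⁻¹' H]).map fun x => x (𝔰 b))
          ((ρ[|(fun x (c : {c : A // π c ≠ b}) => x c.1) ⁻¹' H]).map fun x => x a))
    -- Condition `B_μ^ρ` : the `𝔰`-flattened version of `μ` is dominated by `ρ`.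
    (hB : StochDom
      (μ.map fun x a =>
        if 𝔰 (π a) = a then (Finset.univ.filter fun c => π c = π a).sup x else 0)
      ρ) :
    StochDom μ ρ := by
  classical
  -- the flattening map
  set Flam : (A → Fin (N + 1)) → A → Fin (N + 1) := fun x a =>
    if 𝔰 (π a) = a then (Finset.univ.filter fun c => π c = π a).sup x else 0 with hFlam
  -- configurations with prescribed positions and values
  set cfg : (B → A) → (B → Fin (N + 1)) → A → Fin (N + 1) := fun r ξ a =>
    if r (π a) = a then ξ (π a) else 0 with hcfg
  have cfg_mono : ∀ (r : B → A) (ξ ξ' : B → Fin (N + 1)), ξ ≤ ξ' → cfg r ξ ≤ cfg r ξ' := by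
    intro r ξ ξ' h a
    simp only [hcfg]
    split
    · exact h _
    · exact le_rfl
  have cfg_le_self : ∀ (r : B → A), (∀ b, π (r b) = b) →
      ∀ z : A → Fin (N + 1), cfg r (fun b => z (r b)) ≤ z := by
    intro r hr z a
    simp only [hcfg]
    split
    · next h => exact le_of_eq (by rw [h])
    · exact Fin.zero_le _
  -- the key inequality: on upward-closed sets, μ is dominated by ρ
  have key : ∀ U : Set (A → Fin (N + 1)),
      (∀ ⦃x⦄, x ∈ U → ∀ ⦃y⦄, x ≤ y → y ∈ U) → μ U ≤ ρ U := by
    intro U hU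
    set L : Set (A → Fin (N + 1)) :=
      {x | ∀ a a' : A, π a = π a' → x a ≠ 0 → x a' ≠ 0 → a = a'} with hL
    have hμL : μ Lᶜ = 0 := by
      have h3 := measure_compl (measurableSet_all L) (measure_ne_top μ _)
      rw [hlift, measure_univ] at h3
      simpa using h3
    -- hybrid events
    set Esec : Finset B → Set (A → Fin (N + 1)) := fun T =>
      {z | ∃ r : B → A, (∀ b, π (r b) = b) ∧
        cfg r (fun b => z (if b ∈ T then r b else 𝔰 b)) ∈ U} with hEsec
    have hEup : ∀ T : Finset B,
        ∀ ⦃z⦄, z ∈ Esec T → ∀ ⦃z'⦄, z ≤ z' → z' ∈ Esec T := by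
      rintro T z ⟨r, hr, hmem⟩ z' hzz'
      exact ⟨r, hr, hU hmem (cfg_mono r (fun b => z (if b ∈ T then r b else 𝔰 b))
        (fun b => z' (if b ∈ T then r b else 𝔰 b)) (fun b => hzz' _))⟩
    -- Step 1 : μ U ≤ (μ.map Flam) (Esec ∅)
    have hsub1 : U ∩ L ⊆ Flam ⁻¹' (Esec ∅) := by
      rintro y ⟨hyU, hyL⟩
      set r : B → A := fun b => if h : ∃ a, π a = b ∧ y a ≠ 0 then h.choose else 𝔰 b with hr
      have hrsec : ∀ b, π (r b) = b := by
        intro b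
        simp only [hr]
        split
        · next h => exact h.choose_spec.1
        · exact hsec b
      have hFval : ∀ b', Flam y (𝔰 b') = (Finset.univ.filter fun c => π c = b').sup y := by
        intro b'
        simp [hFlam, hsec b']
      have hval : cfg r (fun b' => Flam y (𝔰 b')) = y := by
        funext a
        simp only [hcfg, hFval]
        by_cases hra : r (π a) = a
        · rw [if_pos hra]
          by_cases hex : ∃ a', π a' = π a ∧ y a' ≠ 0
          · have hch := hex.choose_spec
            have hra' : r (π a) = hex.choose := by simp only [hr, dif_pos hex]
            have haeq : a = hex.choose := hra.symm.trans hra'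
            have hya : y a ≠ 0 := by rw [haeq]; exact hch.2
            refine le_antisymm (Finset.sup_le ?_) (Finset.le_sup ?_)
            · intro c hc
              rw [Finset.mem_filter] at hc
              by_cases h0 : y c = 0
              · rw [h0]; exact Fin.zero_le _
              · exact le_of_eq (by rw [hyL c a hc.2 h0 hya])
            · rw [Finset.mem_filter]; exact ⟨Finset.mem_univ _, rfl⟩
          · push_neg at hex
            have hy0 : ∀ a', π a' = π a → y a' = 0 := by
              intro a' ha'
              by_contra h0
              exact h0 (hex a' ha')
            have hya : y a = 0 := hy0 a rfl
            rw [hya]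
            refine le_antisymm (Finset.sup_le ?_) (Fin.zero_le _)
            intro c hc
            rw [Finset.mem_filter] at hc
            exact le_of_eq (hy0 c hc.2)
        · rw [if_neg hra]
          by_contra hya
          have hya' : y a ≠ 0 := fun h => hya h.symm
          by_cases hex : ∃ a', π a' = π a ∧ y a' ≠ 0
          · have hch := hex.choose_spec
            have hra' : r (π a) = hex.choose := by simp only [hr, dif_pos hex]
            have : hex.choose = a := hyL hex.choose a hch.1 hch.2 hya'
            exact hra (hra'.trans this)
          · exact hex ⟨a, rfl, hya'⟩
      refine ⟨r, hrsec, ?_⟩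
      have hvec : (fun b => Flam y (if b ∈ (∅ : Finset B) then r b else 𝔰 b))
          = fun b' => Flam y (𝔰 b') := by
        funext b'; simp
      rw [hvec, hval]
      exact hyU
    have hstep1 : μ U ≤ (μ.map Flam) (Esec ∅) := by
      have h1 : μ U ≤ μ (U ∩ L) := by
        have h2 : U ⊆ (U ∩ L) ∪ Lᶜ := by
          intro x hx
          by_cases hxL : x ∈ L
          · exact Or.inl ⟨hx, hxL⟩
          · exact Or.inr hxL
        calc μ U ≤ μ ((U ∩ L) ∪ Lᶜ) := measure_mono h2
        _ ≤ μ (U ∩ L) + μ Lᶜ := measure_union_le _ _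
        _ = μ (U ∩ L) := by rw [hμL, add_zero]
      calc μ U ≤ μ (U ∩ L) := h1
      _ ≤ μ (Flam ⁻¹' (Esec ∅)) := measure_mono hsub1
      _ = (μ.map Flam) (Esec ∅) :=
          (Measure.map_apply (measurable_of_countable _) (measurableSet_all _)).symm
    -- Step 2 : (μ.map Flam) (Esec ∅) ≤ ρ (Esec ∅)
    have hstep2 : (μ.map Flam) (Esec ∅) ≤ ρ (Esec ∅) := stochDom_mono hB (hEup ∅)
    -- Step 3 : the core fibre-swapping induction
    have hstep : ∀ (T : Finset B) (b : B), b ∉ T → ρ (Esec T) ≤ ρ (Esec (insert b T)) := by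
      intro T b hbT
      set Wm : (A → Fin (N + 1)) → ({c : A // π c ≠ b} → Fin (N + 1)) :=
        fun x (c : {c : A // π c ≠ b}) => x c.1 with hWm
      set ext : ({c : A // π c ≠ b} → Fin (N + 1)) → A → Fin (N + 1) :=
        fun w a => if h : π a = b then 0 else w ⟨a, h⟩ with hext
      have hpart : ∀ S : Set (A → Fin (N + 1)),
          ρ S = ∑ w ∈ (Finset.univ : Finset ({c : A // π c ≠ b} → Fin (N + 1))),
            ρ (S ∩ Wm ⁻¹' {w}) := by
        intro S
        rw [← measure_biUnion_finset]
        · congr 1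
          ext z
          simp only [Set.mem_iUnion]
          constructor
          · intro hz
            exact ⟨Wm z, Finset.mem_univ _, hz, rfl⟩
          · rintro ⟨w, -, hz, -⟩
            exact hz
        · intro w _ w' _ hww'
          refine Set.disjoint_left.mpr ?_
          rintro z ⟨-, hz⟩ ⟨-, hz'⟩
          exact hww' (hz.symm.trans hz')
        · intro w _
          exact measurableSet_all _
      rw [hpart (Esec T), hpart (Esec (insert b T))]
      refine Finset.sum_le_sum ?_
      intro w _
      by_cases hw0 : ρ (Wm ⁻¹' {w}) = 0
      · have h1 : ρ (Esec T ∩ Wm ⁻¹' {w}) = 0 :=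
          le_antisymm ((measure_mono Set.inter_subset_right).trans hw0.le) zero_le
        rw [h1]
        exact zero_le
      -- the one-coordinate membership predicate
      set G : A → Fin (N + 1) → Prop := fun a s => ∃ r : B → A, (∀ b', π (r b') = b') ∧
          r b = a ∧
          cfg r (fun b' => if b' = b then s else ext w (if b' ∈ T then r b' else 𝔰 b')) ∈ U
        with hG
      have hGmono : ∀ a s s', s ≤ s' → G a s → G a s' := by
        rintro a s s' hss ⟨r, h1, h2, h3⟩
        refine ⟨r, h1, h2, hU h3 (cfg_mono r
          (fun b' => if b' = b then s else ext w (if b' ∈ T then r b' else 𝔰 b'))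
          (fun b' => if b' = b then s' else ext w (if b' ∈ T then r b' else 𝔰 b')) ?_)⟩
        intro b'
        dsimp only
        by_cases hb' : b' = b
        · rw [if_pos hb', if_pos hb']
          exact hss
        · rw [if_neg hb', if_neg hb']
      -- identification of the events
      have hveq : ∀ (z : A → Fin (N + 1)), Wm z = w → ∀ (r : B → A), (∀ b', π (r b') = b') →
          ∀ s : Fin (N + 1), ∀ T' : Finset B, (∀ b', b' ≠ b → (b' ∈ T' ↔ b' ∈ T)) →
          (b ∈ T' → s = z (r b)) → (b ∉ T' → s = z (𝔰 b)) →
          (fun b' => z (if b' ∈ T' then r b' else 𝔰 b'))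
            = fun b' => if b' = b then s else ext w (if b' ∈ T then r b' else 𝔰 b') := by
        intro z hzw r hr s T' hT' hbin hbout
        funext b'
        by_cases hb' : b' = b
        · subst hb'
          rw [if_pos rfl]
          by_cases hbT' : b' ∈ T'
          · rw [if_pos hbT', hbin hbT']
          · rw [if_neg hbT', hbout hbT']
        · rw [if_neg hb']
          have hmemiff := hT' b' hb'
          have hp : π (if b' ∈ T then r b' else 𝔰 b') = b' := by
            split
            · exact hr b'
            · exact hsec b'
          have hpb : π (if b' ∈ T then r b' else 𝔰 b') ≠ b := by
            rw [hp]; exact hb'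
          have hextv : ext w (if b' ∈ T then r b' else 𝔰 b')
              = z (if b' ∈ T then r b' else 𝔰 b') := by
            simp only [hext, dif_neg hpb]
            rw [← hzw]
          rw [hextv]
          by_cases hbT'' : b' ∈ T
          · rw [if_pos hbT'', if_pos (hmemiff.mpr hbT'')]
          · rw [if_neg hbT'', if_neg (fun h => hbT'' (hmemiff.mp h))]
      have claim1 : ∀ z, Wm z = w → (z ∈ Esec T ↔ ∃ a, π a = b ∧ G a (z (𝔰 b))) := by
        intro z hzw
        constructor
        · rintro ⟨r, hr, hmem⟩
          refine ⟨r b, hr b, r, hr, rfl, ?_⟩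
          rw [← hveq z hzw r hr (z (𝔰 b)) T (fun _ _ => Iff.rfl)
            (fun h => absurd h hbT) (fun _ => rfl)]
          exact hmem
        · rintro ⟨a, hab, r, hr, hrb, hmem⟩
          refine ⟨r, hr, ?_⟩
          rw [hveq z hzw r hr (z (𝔰 b)) T (fun _ _ => Iff.rfl)
            (fun h => absurd h hbT) (fun _ => rfl)]
          exact hmem
      have claim2 : ∀ z, Wm z = w → (∃ a, π a = b ∧ G a (z a)) →
          z ∈ Esec (insert b T) := by
        rintro z hzw ⟨a, hab, r, hr, hrb, hmem⟩
        refine ⟨r, hr, ?_⟩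
        rw [hveq z hzw r hr (z a) (insert b T)
          (fun b' hb' => by simp [Finset.mem_insert, hb'])
          (fun _ => by rw [hrb]) (fun h => absurd (Finset.mem_insert_self b T) h)]
        exact hmem
      -- choice of the best coordinate in the fibre
      obtain ⟨astar, hastarmem, hastarmax⟩ := Finset.exists_max_image
        (Finset.univ.filter fun a => π a = b)
        (fun a => (Finset.univ.filter fun s => G a s).card)
        (by obtain ⟨a, ha⟩ := hπ b; exact ⟨a, by simp [ha]⟩)
      have hastarb : π astar = b := (Finset.mem_filter.1 hastarmem).2
      have hnest : ∀ a, π a = b → ∀ s, G a s → G astar s := by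
        intro a hab s hGs
        by_cases hsub : ∀ s', G a s' → G astar s'
        · exact hsub s hGs
        · push_neg at hsub
          obtain ⟨s₁, hs₁, hns₁⟩ := hsub
          have hsubF : (Finset.univ.filter fun s => G astar s)
              ⊆ (Finset.univ.filter fun s => G a s) := by
            intro s' hs'
            rw [Finset.mem_filter] at hs' ⊢
            refine ⟨Finset.mem_univ _, ?_⟩
            rcases le_total s₁ s' with h | h
            · exact hGmono a s₁ s' h hs₁
            · exact absurd (hGmono astar s' s₁ h hs'.2) hns₁
          have hcard := hastarmax a (by simp [hab])
          have heqF : (Finset.univ.filter fun s => G astar s)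
              = (Finset.univ.filter fun s => G a s) :=
            Finset.eq_of_subset_of_card_le hsubF hcard
          have hmem : s ∈ Finset.univ.filter fun s => G a s := by
            rw [Finset.mem_filter]; exact ⟨Finset.mem_univ _, hGs⟩
          rw [← heqF, Finset.mem_filter] at hmem
          exact hmem.2
      -- set identities
      have hsetL : Esec T ∩ Wm ⁻¹' {w}
          = Wm ⁻¹' {w} ∩ ((fun x => x (𝔰 b)) ⁻¹' {s | G astar s}) := by
        ext z
        constructor
        · rintro ⟨hzE, hzw⟩
          obtain ⟨a, hab, hGa⟩ := (claim1 z hzw).1 hzE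
          exact ⟨hzw, hnest a hab _ hGa⟩
        · rintro ⟨hzw, hzG⟩
          exact ⟨(claim1 z hzw).2 ⟨astar, hastarb, hzG⟩, hzw⟩
      have hsetR : Wm ⁻¹' {w} ∩ ((fun x => x astar) ⁻¹' {s | G astar s})
          ⊆ Esec (insert b T) ∩ Wm ⁻¹' {w} := by
        rintro z ⟨hzw, hzG⟩
        exact ⟨claim2 z hzw ⟨astar, hastarb, hzG⟩, hzw⟩
      -- apply condition A
      have hdom := hA b astar hastarb {w} (by rw [← hWm]; exact hw0)
      rw [← hWm] at hdom
      have hineq := stochDom_mono hdom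
        (fun s hs s' hss => hGmono astar s s' hss hs : ∀ ⦃s⦄, s ∈ {s | G astar s} →
          ∀ ⦃s'⦄, s ≤ s' → s' ∈ {s | G astar s})
      rw [Measure.map_apply (measurable_of_countable _) (measurableSet_all _),
        Measure.map_apply (measurable_of_countable _) (measurableSet_all _),
        cond_apply (measurableSet_all _) ρ, cond_apply (measurableSet_all _) ρ] at hineq
      have hWfin : ρ (Wm ⁻¹' {w}) ≠ ⊤ := measure_ne_top ρ _
      have hcancel : ρ (Wm ⁻¹' {w} ∩ ((fun x => x (𝔰 b)) ⁻¹' {s | G astar s}))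
          ≤ ρ (Wm ⁻¹' {w} ∩ ((fun x => x astar) ⁻¹' {s | G astar s})) := by
        have h2 := mul_le_mul_right hineq (ρ (Wm ⁻¹' {w}))
        rwa [← mul_assoc, ← mul_assoc, ENNReal.mul_inv_cancel hw0 hWfin,
          one_mul, one_mul] at h2
      calc ρ (Esec T ∩ Wm ⁻¹' {w})
          = ρ (Wm ⁻¹' {w} ∩ ((fun x => x (𝔰 b)) ⁻¹' {s | G astar s})) := by rw [hsetL]
      _ ≤ ρ (Wm ⁻¹' {w} ∩ ((fun x => x astar) ⁻¹' {s | G astar s})) := hcancel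
      _ ≤ ρ (Esec (insert b T) ∩ Wm ⁻¹' {w}) := measure_mono hsetR
    have hmono : ∀ T : Finset B, ρ (Esec ∅) ≤ ρ (Esec T) := by
      intro T
      induction T using Finset.induction_on with
      | empty => exact le_rfl
      | @insert b T hb ih => exact ih.trans (hstep T b hb)
    have hstep4 : ρ (Esec Finset.univ) ≤ ρ U := by
      refine measure_mono ?_
      rintro z ⟨r, hr, hmem⟩
      have hvec : (fun b => z (if b ∈ (Finset.univ : Finset B) then r b else 𝔰 b))
          = fun b => z (r b) := by
        funext b; simp
      rw [hvec] at hmem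
      exact hU hmem (cfg_le_self r hr z)
    calc μ U ≤ (μ.map Flam) (Esec ∅) := hstep1
    _ ≤ ρ (Esec ∅) := hstep2
    _ ≤ ρ (Esec Finset.univ) := hmono Finset.univ
    _ ≤ ρ U := hstep4
  -- densities
  set dμ : (A → Fin (N + 1)) → NNReal := fun x => (μ {x}).toNNReal with hdμ
  set dρ : (A → Fin (N + 1)) → NNReal := fun x => (ρ {x}).toNNReal with hdρ
  have hcoeμ : ∀ x, ((dμ x : NNReal) : ℝ≥0∞) = μ {x} := by
    intro x
    simp only [hdμ]
    exact ENNReal.coe_toNNReal (measure_ne_top μ _)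
  have hcoeρ : ∀ x, ((dρ x : NNReal) : ℝ≥0∞) = ρ {x} := by
    intro x
    simp only [hdρ]
    exact ENNReal.coe_toNNReal (measure_ne_top ρ _)
  have hsumμ : ∑ x, (μ {x}) = 1 := by
    have h1 := measure_coe_finset μ Finset.univ
    rw [Finset.coe_univ, measure_univ] at h1
    exact h1.symm
  have hsumρ : ∑ x, (ρ {x}) = 1 := by
    have h1 := measure_coe_finset ρ Finset.univ
    rw [Finset.coe_univ, measure_univ] at h1
    exact h1.symm
  have hsum : ∑ x, dμ x = ∑ z, dρ z := by
    have e1 : ((∑ x, dμ x : NNReal) : ℝ≥0∞) = 1 := by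
      rw [ENNReal.coe_finset_sum]
      rw [Finset.sum_congr rfl fun x _ => hcoeμ x]
      exact hsumμ
    have e2 : ((∑ x, dρ x : NNReal) : ℝ≥0∞) = 1 := by
      rw [ENNReal.coe_finset_sum]
      rw [Finset.sum_congr rfl fun x _ => hcoeρ x]
      exact hsumρ
    have := e1.trans e2.symm
    exact_mod_cast this
  have hall : ∀ S : Finset (A → Fin (N + 1)),
      ∑ x ∈ S, dμ x ≤ ∑ z ∈ StrassenAux.NS S, dρ z := by
    intro S
    refine ENNReal.coe_le_coe.1 ?_
    rw [ENNReal.coe_finset_sum, ENNReal.coe_finset_sum]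
    have hup : ∀ ⦃x⦄, x ∈ (↑(StrassenAux.NS S) : Set (A → Fin (N + 1))) →
        ∀ ⦃y⦄, x ≤ y → y ∈ (↑(StrassenAux.NS S) : Set (A → Fin (N + 1))) := by
      intro x hx y hxy
      rw [Finset.mem_coe, StrassenAux.mem_NS] at hx ⊢
      obtain ⟨x', hx', hle⟩ := hx
      exact ⟨x', hx', hle.trans hxy⟩
    calc ∑ x ∈ S, ((dμ x : NNReal) : ℝ≥0∞)
        = ∑ x ∈ S, μ {x} := Finset.sum_congr rfl fun x _ => hcoeμ x
    _ = μ ↑S := (measure_coe_finset μ S).symm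
    _ ≤ μ ↑(StrassenAux.NS S) := measure_mono (fun x hx => StrassenAux.subset_NS hx)
    _ ≤ ρ ↑(StrassenAux.NS S) := key _ hup
    _ = ∑ z ∈ StrassenAux.NS S, ρ {z} := measure_coe_finset ρ _
    _ = ∑ z ∈ StrassenAux.NS S, ((dρ z : NNReal) : ℝ≥0∞) :=
        Finset.sum_congr rfl fun z _ => (hcoeρ z).symm
  obtain ⟨K, hK1, hK2, hK3⟩ := StrassenAux.strassen dμ dρ hsum hall
  -- build the coupling measure
  set κ : Measure ((A → Fin (N + 1)) × (A → Fin (N + 1))) :=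
    ∑ p ∈ (Finset.univ : Finset ((A → Fin (N + 1)) × (A → Fin (N + 1)))),
      ((K p.1 p.2 : ℝ≥0∞)) • Measure.dirac p with hκ
  have hκapp : ∀ s : Set ((A → Fin (N + 1)) × (A → Fin (N + 1))),
      κ s = ∑ p ∈ (Finset.univ : Finset ((A → Fin (N + 1)) × (A → Fin (N + 1)))),
        (K p.1 p.2 : ℝ≥0∞) * s.indicator 1 p := by
    intro s
    rw [hκ, Measure.finset_sum_apply]
    refine Finset.sum_congr rfl fun p _ => ?_
    rw [Measure.smul_apply, smul_eq_mul, Measure.dirac_apply' _ (measurableSet_all _)]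
  have htot : ∑ p ∈ (Finset.univ : Finset ((A → Fin (N + 1)) × (A → Fin (N + 1)))),
      (K p.1 p.2 : ℝ≥0∞) = 1 := by
    rw [← Finset.univ_product_univ, Finset.sum_product]
    calc ∑ x, ∑ z, (K x z : ℝ≥0∞)
        = ∑ x, ((dμ x : NNReal) : ℝ≥0∞) := by
          refine Finset.sum_congr rfl fun x _ => ?_
          rw [← ENNReal.coe_finset_sum, hK1 x]
    _ = ∑ x, μ {x} := Finset.sum_congr rfl fun x _ => hcoeμ x
    _ = 1 := hsumμ
  have hκuniv : κ Set.univ = 1 := by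
    rw [hκapp]
    have hterm2 : ∀ p ∈ (Finset.univ : Finset ((A → Fin (N + 1)) × (A → Fin (N + 1)))),
        (K p.1 p.2 : ℝ≥0∞) * (Set.univ : Set ((A → Fin (N + 1)) × (A → Fin (N + 1)))).indicator 1 p
        = (K p.1 p.2 : ℝ≥0∞) := by
      intro p _
      rw [Set.indicator_of_mem (Set.mem_univ p), Pi.one_apply, mul_one]
    rw [Finset.sum_congr rfl hterm2]
    exact htot
  haveI hκprob : IsProbabilityMeasure κ := ⟨hκuniv⟩
  have hfst : κ.map Prod.fst = μ := by
    refine Measure.ext_of_singleton fun x => ?_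
    rw [Measure.map_apply measurable_fst (measurableSet_all _), hκapp]
    rw [← Finset.univ_product_univ, Finset.sum_product]
    calc ∑ x', ∑ z, (K x' z : ℝ≥0∞) * (Prod.fst ⁻¹' {x}).indicator 1 (x', z)
        = ∑ x', (if x' = x then ∑ z, (K x' z : ℝ≥0∞) else 0) := by
          refine Finset.sum_congr rfl fun x' _ => ?_
          by_cases h : x' = x
          · rw [if_pos h]
            refine Finset.sum_congr rfl fun z _ => ?_
            rw [Set.indicator_of_mem (by simp [h]), Pi.one_apply, mul_one]
          · rw [if_neg h]
            refine Finset.sum_eq_zero fun z _ => ?_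
            rw [Set.indicator_of_notMem (by simp [h]), mul_zero]
    _ = ∑ z, (K x z : ℝ≥0∞) := by
          rw [Finset.sum_ite_eq' Finset.univ x (fun x' => ∑ z, (K x' z : ℝ≥0∞))]
          simp
    _ = μ {x} := by rw [← ENNReal.coe_finset_sum, hK1 x, hcoeμ x]
  have hsnd : κ.map Prod.snd = ρ := by
    refine Measure.ext_of_singleton fun z => ?_
    rw [Measure.map_apply measurable_snd (measurableSet_all _), hκapp]
    rw [← Finset.univ_product_univ, Finset.sum_product]
    calc ∑ x, ∑ z', (K x z' : ℝ≥0∞) * (Prod.snd ⁻¹' {z}).indicator 1 (x, z')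
        = ∑ x, (if True then (K x z : ℝ≥0∞) else 0) := by
          refine Finset.sum_congr rfl fun x _ => ?_
          rw [if_pos trivial]
          calc ∑ z', (K x z' : ℝ≥0∞) * (Prod.snd ⁻¹' {z}).indicator 1 (x, z')
              = ∑ z', (if z' = z then (K x z' : ℝ≥0∞) else 0) := by
                refine Finset.sum_congr rfl fun z' _ => ?_
                by_cases h : z' = z
                · rw [if_pos h, Set.indicator_of_mem (by simp [h]), Pi.one_apply, mul_one]
                · rw [if_neg h, Set.indicator_of_notMem (by simp [h]), mul_zero]
          _ = (K x z : ℝ≥0∞) := by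
                rw [Finset.sum_ite_eq' Finset.univ z (fun z' => (K x z' : ℝ≥0∞))]
                simp
    _ = ∑ x, (K x z : ℝ≥0∞) := by simp
    _ = ρ {z} := by rw [← ENNReal.coe_finset_sum, hK2 z, hcoeρ z]
  have hle : κ {q : (A → Fin (N + 1)) × (A → Fin (N + 1)) | q.1 ≤ q.2} = 1 := by
    rw [hκapp]
    have hterm : ∀ p ∈ (Finset.univ : Finset ((A → Fin (N + 1)) × (A → Fin (N + 1)))),
        (K p.1 p.2 : ℝ≥0∞) *
          ({q : (A → Fin (N + 1)) × (A → Fin (N + 1)) | q.1 ≤ q.2}).indicator 1 p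
        = (K p.1 p.2 : ℝ≥0∞) := by
      intro p _
      by_cases h : p.1 ≤ p.2
      · rw [Set.indicator_of_mem
          (show p ∈ {q : (A → Fin (N + 1)) × (A → Fin (N + 1)) | q.1 ≤ q.2} from h),
          Pi.one_apply, mul_one]
      · have hK0 : K p.1 p.2 = 0 := by
          by_contra h0
          exact h (hK3 p.1 p.2 h0)
        rw [hK0]
        simp
    rw [Finset.sum_congr rfl hterm]
    exact htot
  exact ⟨κ, hκprob, hfst, hsnd, hle⟩
end

section
/- Let π : A → B be a surjective map between nonempty finite sets. For each b ∈ B, let ν_b be a probability measure on {0,...,N} and ρ_b a probability measure on {0,...,N}^{π⁻¹(b)} such that for every b and every a ∈ π⁻¹(b), ν_b is stochastically dominated by the a-marginal of ρ_b. Let μ be a π-lift on {0,...,N}^A whose pushdown is stochastically dominated by ⊗_{b∈B} ν_b. Then μ is stochastically dominated by ⊗_{b∈B} ρ_b. -/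
open MeasureTheory ProbabilityTheory

set_option linter.unusedSectionVars false
set_option linter.unusedVariables false
set_option maxHeartbeats 2000000

open Finset
open scoped NNReal ENNReal

section Strassen
variable {E F : Type*} [Fintype E] [DecidableEq E] [Fintype F] [DecidableEq F]
variable (R : E → F → Prop) [∀ e f, Decidable (R e f)]

def RS (S : Finset E) : Finset F := univ.filter (fun f => ∃ e ∈ S, R e f)

lemma mem_RS {S : Finset E} {f : F} : f ∈ RS R S ↔ ∃ e ∈ S, R e f := by
  simp [RS]

lemma RS_mono {S T : Finset E} (h : S ⊆ T) : RS R S ⊆ RS R T := by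
  intro f hf
  rw [mem_RS] at *
  obtain ⟨e, he, hR⟩ := hf
  exact ⟨e, h he, hR⟩

lemma RS_union (S T : Finset E) : RS R (S ∪ T) = RS R S ∪ RS R T := by
  ext f
  simp only [mem_RS, Finset.mem_union]
  aesop

def StrassenStmt (n : ℕ) : Prop :=
  ∀ (p : E → ℝ≥0) (q : F → ℝ≥0),
    ((univ.filter fun e => p e ≠ 0).card + (univ.filter fun f => q f ≠ 0).card ≤ n) →
    (∑ e, p e = ∑ f, q f) →
    (∀ S : Finset E, ∑ e ∈ S, p e ≤ ∑ f ∈ RS R S, q f) →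
    ∃ k : E → F → ℝ≥0, (∀ e f, k e f ≠ 0 → R e f) ∧
      (∀ e, ∑ f, k e f = p e) ∧ (∀ f, ∑ e, k e f = q f)

lemma strassen_split (n : ℕ) (IH : StrassenStmt R n)
    (p : E → ℝ≥0) (q : F → ℝ≥0)
    (hcard : (univ.filter fun e => p e ≠ 0).card + (univ.filter fun f => q f ≠ 0).card ≤ n + 1)
    (htot : ∑ e, p e = ∑ f, q f)
    (hHall : ∀ S : Finset E, ∑ e ∈ S, p e ≤ ∑ f ∈ RS R S, q f)
    (S₀ : Finset E) (e₀ : E) (he₀S : e₀ ∉ S₀) (he₀ : p e₀ ≠ 0)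
    (hS₀pos : ∑ e ∈ S₀, p e ≠ 0)
    (ht : ∑ f ∈ RS R S₀, q f = ∑ e ∈ S₀, p e) :
    ∃ k : E → F → ℝ≥0, (∀ e f, k e f ≠ 0 → R e f) ∧
      (∀ e, ∑ f, k e f = p e) ∧ (∀ f, ∑ e, k e f = q f) := by
  classical
  set p₁ : E → ℝ≥0 := fun e => if e ∈ S₀ then p e else 0 with hp₁
  set p₂ : E → ℝ≥0 := fun e => if e ∈ S₀ then 0 else p e with hp₂
  set q₁ : F → ℝ≥0 := fun f => if f ∈ RS R S₀ then q f else 0 with hq₁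
  set q₂ : F → ℝ≥0 := fun f => if f ∈ RS R S₀ then 0 else q f with hq₂
  have hsum_p₁ : ∀ T : Finset E, ∑ e ∈ T, p₁ e = ∑ e ∈ T ∩ S₀, p e := fun T => by
    rw [hp₁, Finset.sum_ite_mem]
  have hsum_p₂ : ∀ T : Finset E, ∑ e ∈ T, p₂ e = ∑ e ∈ T \ S₀, p e := fun T => by
    rw [Finset.sdiff_eq_filter, Finset.sum_filter]
    exact Finset.sum_congr rfl fun e _ => by by_cases h : e ∈ S₀ <;> simp [hp₂, h]
  have hsum_q₁ : ∀ G : Finset F, ∑ f ∈ G, q₁ f = ∑ f ∈ G ∩ RS R S₀, q f := fun G => by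
    rw [hq₁, Finset.sum_ite_mem]
  have hsum_q₂ : ∀ G : Finset F, ∑ f ∈ G, q₂ f = ∑ f ∈ G \ RS R S₀, q f := fun G => by
    rw [Finset.sdiff_eq_filter, Finset.sum_filter]
    exact Finset.sum_congr rfl fun f _ => by by_cases h : f ∈ RS R S₀ <;> simp [hq₂, h]
  have hHall₁ : ∀ T : Finset E, ∑ e ∈ T, p₁ e ≤ ∑ f ∈ RS R T, q₁ f := by
    intro T
    rw [hsum_p₁]
    calc ∑ e ∈ T ∩ S₀, p e ≤ ∑ f ∈ RS R (T ∩ S₀), q f := hHall _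
      _ = ∑ f ∈ RS R (T ∩ S₀), q₁ f := by
          refine Finset.sum_congr rfl fun f hf => ?_
          have hf' : f ∈ RS R S₀ := RS_mono R Finset.inter_subset_right hf
          simp [hq₁, hf']
      _ ≤ ∑ f ∈ RS R T, q₁ f :=
          Finset.sum_le_sum_of_subset (RS_mono R Finset.inter_subset_left)
  have htot₁ : ∑ e, p₁ e = ∑ f, q₁ f := by
    rw [hsum_p₁ univ, hsum_q₁ univ, Finset.univ_inter, Finset.univ_inter, ht]
  have hHall₂ : ∀ T : Finset E, ∑ e ∈ T, p₂ e ≤ ∑ f ∈ RS R T, q₂ f := by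
    intro T
    rw [hsum_p₂]
    have h1 : ∑ e ∈ T \ S₀, p e + ∑ e ∈ S₀, p e = ∑ e ∈ (T \ S₀) ∪ S₀, p e :=
      (Finset.sum_union Finset.sdiff_disjoint).symm
    have h2 := hHall ((T \ S₀) ∪ S₀)
    rw [RS_union] at h2
    have h3 : ∑ f ∈ RS R (T \ S₀) ∪ RS R S₀, q f
        = ∑ f ∈ RS R (T \ S₀) \ RS R S₀, q f + ∑ f ∈ RS R S₀, q f := by
      rw [← Finset.sum_union Finset.sdiff_disjoint, Finset.sdiff_union_self_eq_union]
    have h4 : ∑ f ∈ RS R (T \ S₀) \ RS R S₀, q f ≤ ∑ f ∈ RS R T, q₂ f := by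
      have hsub : RS R (T \ S₀) \ RS R S₀ ⊆ RS R T :=
        Finset.sdiff_subset.trans (RS_mono R Finset.sdiff_subset)
      calc ∑ f ∈ RS R (T \ S₀) \ RS R S₀, q f
          = ∑ f ∈ RS R (T \ S₀) \ RS R S₀, q₂ f := Finset.sum_congr rfl fun f hf => by
            have hf' : f ∉ RS R S₀ := (Finset.mem_sdiff.1 hf).2
            simp [hq₂, hf']
        _ ≤ ∑ f ∈ RS R T, q₂ f := Finset.sum_le_sum_of_subset hsub
    have key : ∑ e ∈ T \ S₀, p e + ∑ e ∈ S₀, p e ≤ ∑ f ∈ RS R T, q₂ f + ∑ e ∈ S₀, p e := by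
      calc ∑ e ∈ T \ S₀, p e + ∑ e ∈ S₀, p e = ∑ e ∈ (T \ S₀) ∪ S₀, p e := h1
        _ ≤ ∑ f ∈ RS R (T \ S₀) ∪ RS R S₀, q f := h2
        _ = ∑ f ∈ RS R (T \ S₀) \ RS R S₀, q f + ∑ f ∈ RS R S₀, q f := h3
        _ ≤ ∑ f ∈ RS R T, q₂ f + ∑ e ∈ S₀, p e := by
            rw [ht]; exact add_le_add_left h4 _
    exact le_of_add_le_add_right key
  have htot₂ : ∑ e, p₂ e = ∑ f, q₂ f := by
    have hp_split : ∑ e, p e = ∑ e, p₁ e + ∑ e, p₂ e := by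
      rw [← Finset.sum_add_distrib]
      exact Finset.sum_congr rfl fun e _ => by by_cases h : e ∈ S₀ <;> simp [hp₁, hp₂, h]
    have hq_split : ∑ f, q f = ∑ f, q₁ f + ∑ f, q₂ f := by
      rw [← Finset.sum_add_distrib]
      exact Finset.sum_congr rfl fun f _ => by by_cases h : f ∈ RS R S₀ <;> simp [hq₁, hq₂, h]
    have heq := htot
    rw [hp_split, hq_split, htot₁] at heq
    exact add_left_cancel heq
  -- support cards
  obtain ⟨e₁, he₁S, he₁⟩ := Finset.exists_ne_zero_of_sum_ne_zero hS₀pos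
  have hcard₁ : (univ.filter fun e => p₁ e ≠ 0).card < (univ.filter fun e => p e ≠ 0).card := by
    apply Finset.card_lt_card
    rw [Finset.ssubset_iff_of_subset]
    · exact ⟨e₀, by simp [he₀], by simp [hp₁, he₀S]⟩
    · intro e he
      simp only [Finset.mem_filter, Finset.mem_univ, true_and] at he ⊢
      intro h0
      exact he (by simp [hp₁, h0])
  have hcard₂ : (univ.filter fun e => p₂ e ≠ 0).card < (univ.filter fun e => p e ≠ 0).card := by
    apply Finset.card_lt_card
    rw [Finset.ssubset_iff_of_subset]
    · exact ⟨e₁, by simp [he₁], by simp [hp₂, he₁S]⟩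
    · intro e he
      simp only [Finset.mem_filter, Finset.mem_univ, true_and] at he ⊢
      intro h0
      exact he (by by_cases h : e ∈ S₀ <;> simp [hp₂, h, h0])
  have hcardq₁ : (univ.filter fun f => q₁ f ≠ 0).card ≤ (univ.filter fun f => q f ≠ 0).card := by
    apply Finset.card_le_card
    intro f hf
    simp only [Finset.mem_filter, Finset.mem_univ, true_and] at hf ⊢
    intro h0
    exact hf (by simp [hq₁, h0])
  have hcardq₂ : (univ.filter fun f => q₂ f ≠ 0).card ≤ (univ.filter fun f => q f ≠ 0).card := by
    apply Finset.card_le_card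
    intro f hf
    simp only [Finset.mem_filter, Finset.mem_univ, true_and] at hf ⊢
    intro h0
    exact hf (by by_cases h : f ∈ RS R S₀ <;> simp [hq₂, h, h0])
  obtain ⟨k₁, hk₁R, hk₁row, hk₁col⟩ := IH p₁ q₁ (by omega) htot₁ hHall₁
  obtain ⟨k₂, hk₂R, hk₂row, hk₂col⟩ := IH p₂ q₂ (by omega) htot₂ hHall₂
  refine ⟨fun e f => k₁ e f + k₂ e f, ?_, ?_, ?_⟩
  · intro e f h
    by_cases h1 : k₁ e f = 0
    · exact hk₂R e f (by simpa [h1] using h)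
    · exact hk₁R e f h1
  · intro e
    rw [Finset.sum_add_distrib, hk₁row, hk₂row]
    by_cases h : e ∈ S₀ <;> simp [hp₁, hp₂, h]
  · intro f
    rw [Finset.sum_add_distrib, hk₁col, hk₂col]
    by_cases h : f ∈ RS R S₀ <;> simp [hq₁, hq₂, h]

lemma supp_update_subset {α : Type*} [Fintype α] [DecidableEq α] (r : α → ℝ≥0) (x : α)
    (c : ℝ≥0) (hx : r x ≠ 0) :
    (univ.filter fun y => Function.update r x c y ≠ 0) ⊆ (univ.filter fun y => r y ≠ 0) := by
  intro y hy
  simp only [Finset.mem_filter, Finset.mem_univ, true_and] at hy ⊢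
  by_cases h : y = x
  · rwa [h]
  · rwa [Function.update_of_ne h] at hy

lemma sum_update_eq_of_not_mem {α : Type*} [Fintype α] [DecidableEq α] (r : α → ℝ≥0) (x : α)
    (c : ℝ≥0) (T : Finset α) (hx : x ∉ T) :
    ∑ y ∈ T, Function.update r x c y = ∑ y ∈ T, r y :=
  Finset.sum_congr rfl fun y hy => Function.update_of_ne (fun h => hx (by rw [← h]; exact hy)) _ _

lemma strassen_subtract (p : E → ℝ≥0) (q : F → ℝ≥0)
    (htot : ∑ e, p e = ∑ f, q f)
    (hHall : ∀ S : Finset E, ∑ e ∈ S, p e ≤ ∑ f ∈ RS R S, q f)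
    (e₀ : E) (f₀ : F) (hR : R e₀ f₀) (δ : ℝ≥0) (hδp : δ ≤ p e₀) (hδq : δ ≤ q f₀)
    (hδS : ∀ S : Finset E, e₀ ∉ S → f₀ ∈ RS R S → ∑ e ∈ S, p e + δ ≤ ∑ f ∈ RS R S, q f) :
    (∑ e, Function.update p e₀ (p e₀ - δ) e = ∑ f, Function.update q f₀ (q f₀ - δ) f)
    ∧ (∀ T : Finset E, ∑ e ∈ T, Function.update p e₀ (p e₀ - δ) e
        ≤ ∑ f ∈ RS R T, Function.update q f₀ (q f₀ - δ) f) := by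
  have hup : ∀ T : Finset E, e₀ ∈ T →
      ∑ e ∈ T, Function.update p e₀ (p e₀ - δ) e + δ = ∑ e ∈ T, p e := by
    intro T hT
    rw [Finset.sum_update_of_mem hT, add_right_comm, tsub_add_cancel_of_le hδp]
    exact (Finset.sum_eq_add_sum_sdiff_singleton_of_mem hT p).symm
  have huq : ∀ G : Finset F, f₀ ∈ G →
      ∑ f ∈ G, Function.update q f₀ (q f₀ - δ) f + δ = ∑ f ∈ G, q f := by
    intro G hG
    rw [Finset.sum_update_of_mem hG, add_right_comm, tsub_add_cancel_of_le hδq]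
    exact (Finset.sum_eq_add_sum_sdiff_singleton_of_mem hG q).symm
  have hHall' : ∀ T : Finset E, ∑ e ∈ T, Function.update p e₀ (p e₀ - δ) e
      ≤ ∑ f ∈ RS R T, Function.update q f₀ (q f₀ - δ) f := by
    intro T
    by_cases he : e₀ ∈ T
    · have hf : f₀ ∈ RS R T := (mem_RS R).2 ⟨e₀, he, hR⟩
      rw [← add_le_add_iff_right (a := δ), hup T he, huq _ hf]
      exact hHall T
    · by_cases hf : f₀ ∈ RS R T
      · rw [sum_update_eq_of_not_mem p e₀ _ T he, ← add_le_add_iff_right (a := δ),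
          huq _ hf]
        exact hδS T he hf
      · rw [sum_update_eq_of_not_mem p e₀ _ T he, sum_update_eq_of_not_mem q f₀ _ _ hf]
        exact hHall T
  refine ⟨?_, hHall'⟩
  have h1 := hup univ (Finset.mem_univ e₀)
  have h2 := huq univ (Finset.mem_univ f₀)
  have : ∑ e, Function.update p e₀ (p e₀ - δ) e + δ
      = ∑ f, Function.update q f₀ (q f₀ - δ) f + δ := by rw [h1, h2, htot]
  exact add_right_cancel this

lemma strassen_recombine (p : E → ℝ≥0) (q : F → ℝ≥0)
    (e₀ : E) (f₀ : F) (hR : R e₀ f₀) (δ : ℝ≥0) (hδp : δ ≤ p e₀) (hδq : δ ≤ q f₀)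
    (k' : E → F → ℝ≥0) (hk'R : ∀ e f, k' e f ≠ 0 → R e f)
    (hk'row : ∀ e, ∑ f, k' e f = Function.update p e₀ (p e₀ - δ) e)
    (hk'col : ∀ f, ∑ e, k' e f = Function.update q f₀ (q f₀ - δ) f) :
    ∃ k : E → F → ℝ≥0, (∀ e f, k e f ≠ 0 → R e f) ∧
      (∀ e, ∑ f, k e f = p e) ∧ (∀ f, ∑ e, k e f = q f) := by
  refine ⟨fun e f => k' e f + if e = e₀ ∧ f = f₀ then δ else 0, ?_, ?_, ?_⟩
  · intro e f h
    by_cases h1 : k' e f = 0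
    · by_cases h2 : e = e₀ ∧ f = f₀
      · rw [h2.1, h2.2]; exact hR
      · exact absurd (by simp [h1, h2]) h
    · exact hk'R e f h1
  · intro e
    rw [Finset.sum_add_distrib, hk'row]
    by_cases h : e = e₀
    · subst h
      simp only [true_and]
      rw [Finset.sum_ite_eq' univ f₀ (fun _ => δ), if_pos (Finset.mem_univ f₀),
        Function.update_self, tsub_add_cancel_of_le hδp]
    · rw [Function.update_of_ne h]
      simp [h]
  · intro f
    rw [Finset.sum_add_distrib, hk'col]
    by_cases h : f = f₀
    · subst h
      simp only [and_true]
      rw [Finset.sum_ite_eq' univ e₀ (fun _ => δ), if_pos (Finset.mem_univ e₀),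
        Function.update_self, tsub_add_cancel_of_le hδq]
    · rw [Function.update_of_ne h]
      simp [h]

theorem strassen_all : ∀ n : ℕ, StrassenStmt R n := by
  intro n
  induction n with
  | zero =>
    intro p q hcard htot hHall
    have hp : ∀ e, p e = 0 := by
      intro e
      by_contra h
      have hmem : e ∈ univ.filter fun e => p e ≠ 0 := by simp [h]
      have := Finset.card_pos.2 ⟨e, hmem⟩
      omega
    have hq : ∀ f, q f = 0 := by
      intro f
      by_contra h
      have hmem : f ∈ univ.filter fun f => q f ≠ 0 := by simp [h]
      have := Finset.card_pos.2 ⟨f, hmem⟩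
      omega
    exact ⟨fun _ _ => 0, fun e f h => absurd rfl h,
      fun e => by simp [hp e], fun f => by simp [hq f]⟩
  | succ n IH =>
    intro p q hcard htot hHall
    by_cases hp : ∀ e, p e = 0
    · have h0 : ∑ f, q f = 0 := by rw [← htot]; exact Finset.sum_eq_zero fun e _ => hp e
      have hq : ∀ f, q f = 0 := fun f => (Finset.sum_eq_zero_iff.1 h0) f (Finset.mem_univ f)
      exact ⟨fun _ _ => 0, fun e f h => absurd rfl h,
        fun e => by simp [hp e], fun f => by simp [hq f]⟩
    push_neg at hp
    obtain ⟨e₀, he₀⟩ := hp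
    have hf₀ex : ∃ f₀ ∈ RS R {e₀}, q f₀ ≠ 0 := by
      by_contra hcon
      push_neg at hcon
      have h0 : ∑ f ∈ RS R {e₀}, q f = 0 := Finset.sum_eq_zero fun f hf => hcon f hf
      have hH := hHall {e₀}
      rw [Finset.sum_singleton, h0] at hH
      exact he₀ (le_antisymm hH zero_le)
    obtain ⟨f₀, hf₀R, hf₀⟩ := hf₀ex
    have hRe₀f₀ : R e₀ f₀ := by
      rw [mem_RS] at hf₀R
      obtain ⟨e, he, hR⟩ := hf₀R
      rwa [Finset.mem_singleton.1 he] at hR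
    by_cases htight : ∃ S₀ : Finset E, (e₀ ∉ S₀ ∧ f₀ ∈ RS R S₀) ∧
        ∑ f ∈ RS R S₀, q f ≤ ∑ e ∈ S₀, p e
    · obtain ⟨S₀, ⟨hS₀e, hS₀f⟩, hS₀t⟩ := htight
      have ht : ∑ f ∈ RS R S₀, q f = ∑ e ∈ S₀, p e := le_antisymm hS₀t (hHall S₀)
      have hS₀pos : ∑ e ∈ S₀, p e ≠ 0 := by
        intro h0
        rw [h0] at ht
        exact hf₀ (Finset.sum_eq_zero_iff.1 ht f₀ hS₀f)
      exact strassen_split R n IH p q hcard htot hHall S₀ e₀ hS₀e he₀ hS₀pos ht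
    · push_neg at htight
      -- all dangerous sets have positive slack
      have hslack : ∀ S : Finset E, e₀ ∉ S → f₀ ∈ RS R S →
          ∑ e ∈ S, p e < ∑ f ∈ RS R S, q f := fun S h1 h2 => htight S ⟨h1, h2⟩
      set slk : Finset E → ℝ≥0 := fun S => ∑ f ∈ RS R S, q f - ∑ e ∈ S, p e with hslk
      by_cases hbig : ∀ S : Finset E, e₀ ∉ S → f₀ ∈ RS R S → min (p e₀) (q f₀) ≤ slk S
      · -- subtract min(p e₀, q f₀): support shrinks
        set δ := min (p e₀) (q f₀) with hδ
        have hδp : δ ≤ p e₀ := min_le_left _ _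
        have hδq : δ ≤ q f₀ := min_le_right _ _
        have hδS : ∀ S : Finset E, e₀ ∉ S → f₀ ∈ RS R S →
            ∑ e ∈ S, p e + δ ≤ ∑ f ∈ RS R S, q f := by
          intro S h1 h2
          calc ∑ e ∈ S, p e + δ ≤ ∑ e ∈ S, p e + slk S := add_le_add_right (hbig S h1 h2) _
            _ = ∑ f ∈ RS R S, q f := add_tsub_cancel_of_le (hHall S)
        obtain ⟨htot', hHall'⟩ := strassen_subtract R p q htot hHall e₀ f₀ hRe₀f₀ δ hδp hδq hδS
        have hcard' : (univ.filter fun e => Function.update p e₀ (p e₀ - δ) e ≠ 0).card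
            + (univ.filter fun f => Function.update q f₀ (q f₀ - δ) f ≠ 0).card ≤ n := by
          have hsp := supp_update_subset p e₀ (p e₀ - δ) he₀
          have hsq := supp_update_subset q f₀ (q f₀ - δ) hf₀
          rcases min_cases (p e₀) (q f₀) with ⟨hmin, _⟩ | ⟨hmin, _⟩
          · have hstrict : (univ.filter fun e => Function.update p e₀ (p e₀ - δ) e ≠ 0).card
                < (univ.filter fun e => p e ≠ 0).card := by
              apply Finset.card_lt_card
              rw [Finset.ssubset_iff_of_subset hsp]
              exact ⟨e₀, by simp [he₀], by simp [hδ, hmin]⟩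
            have := Finset.card_le_card hsq
            omega
          · have hstrict : (univ.filter fun f => Function.update q f₀ (q f₀ - δ) f ≠ 0).card
                < (univ.filter fun f => q f ≠ 0).card := by
              apply Finset.card_lt_card
              rw [Finset.ssubset_iff_of_subset hsq]
              exact ⟨f₀, by simp [hf₀], by simp [hδ, hmin]⟩
            have := Finset.card_le_card hsp
            omega
        obtain ⟨k', hk'R, hk'row, hk'col⟩ := IH _ _ hcard' htot' hHall'
        exact strassen_recombine R p q e₀ f₀ hRe₀f₀ δ hδp hδq k' hk'R hk'row hk'col
      · -- a tight set will appear after subtracting the minimal slack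
        push_neg at hbig
        obtain ⟨S₁, hS₁e, hS₁f, hS₁lt⟩ := hbig
        set 𝒮 : Finset (Finset E) := univ.filter (fun S => e₀ ∉ S ∧ f₀ ∈ RS R S) with h𝒮
        have h𝒮ne : 𝒮.Nonempty := ⟨S₁, by simp [h𝒮, hS₁e, hS₁f]⟩
        obtain ⟨S₀, hS₀mem, hS₀min⟩ := Finset.exists_mem_eq_inf' h𝒮ne slk
        have hS₀prop : e₀ ∉ S₀ ∧ f₀ ∈ RS R S₀ := by simpa [h𝒮] using hS₀mem
        set δ := slk S₀ with hδ
        have hδlt : δ < min (p e₀) (q f₀) := by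
          calc δ = 𝒮.inf' h𝒮ne slk := hS₀min.symm
            _ ≤ slk S₁ := Finset.inf'_le _ (by simp [h𝒮, hS₁e, hS₁f])
            _ < min (p e₀) (q f₀) := hS₁lt
        have hδp : δ ≤ p e₀ := le_of_lt (lt_of_lt_of_le hδlt (min_le_left _ _))
        have hδq : δ ≤ q f₀ := le_of_lt (lt_of_lt_of_le hδlt (min_le_right _ _))
        have hδS : ∀ S : Finset E, e₀ ∉ S → f₀ ∈ RS R S →
            ∑ e ∈ S, p e + δ ≤ ∑ f ∈ RS R S, q f := by
          intro S h1 h2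
          have : δ ≤ slk S := by
            rw [← hS₀min]
            exact Finset.inf'_le _ (by simp [h𝒮, h1, h2])
          calc ∑ e ∈ S, p e + δ ≤ ∑ e ∈ S, p e + slk S := add_le_add_right this _
            _ = ∑ f ∈ RS R S, q f := add_tsub_cancel_of_le (hHall S)
        obtain ⟨htot', hHall'⟩ := strassen_subtract R p q htot hHall e₀ f₀ hRe₀f₀ δ hδp hδq hδS
        set p' := Function.update p e₀ (p e₀ - δ) with hp'
        set q' := Function.update q f₀ (q f₀ - δ) with hq'
        have hcard' : (univ.filter fun e => p' e ≠ 0).card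
            + (univ.filter fun f => q' f ≠ 0).card ≤ n + 1 := by
          have hsp : (univ.filter fun e => p' e ≠ 0) ⊆ (univ.filter fun e => p e ≠ 0) := by
            rw [hp']; exact supp_update_subset p e₀ (p e₀ - δ) he₀
          have hsq : (univ.filter fun f => q' f ≠ 0) ⊆ (univ.filter fun f => q f ≠ 0) := by
            rw [hq']; exact supp_update_subset q f₀ (q f₀ - δ) hf₀
          have h1 := Finset.card_le_card hsp
          have h2 := Finset.card_le_card hsq
          omega
        -- q' sums: tightness of S₀ for p', q'
        have hq'S₀ : ∑ f ∈ RS R S₀, q' f + δ = ∑ f ∈ RS R S₀, q f := by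
          rw [hq', Finset.sum_update_of_mem hS₀prop.2, add_right_comm,
            tsub_add_cancel_of_le hδq]
          exact (Finset.sum_eq_add_sum_sdiff_singleton_of_mem hS₀prop.2 q).symm
        have hqS₀eq : ∑ f ∈ RS R S₀, q f = ∑ e ∈ S₀, p e + δ := by
          rw [hδ, hslk, add_tsub_cancel_of_le (hHall S₀)]
        have ht' : ∑ f ∈ RS R S₀, q' f = ∑ e ∈ S₀, p' e := by
          have h1 : ∑ e ∈ S₀, p' e = ∑ e ∈ S₀, p e :=
            sum_update_eq_of_not_mem p e₀ _ S₀ hS₀prop.1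
          have h2 : ∑ f ∈ RS R S₀, q' f + δ = ∑ e ∈ S₀, p e + δ := by
            rw [hq'S₀, hqS₀eq]
          rw [h1]
          exact add_right_cancel h2
        have hS₀pos : ∑ e ∈ S₀, p' e ≠ 0 := by
          intro h0
          rw [h0] at ht'
          have hqf₀' : q' f₀ = 0 := Finset.sum_eq_zero_iff.1 ht' f₀ hS₀prop.2
          rw [hq', Function.update_self] at hqf₀'
          have : q f₀ ≤ δ := tsub_eq_zero_iff_le.1 hqf₀'
          exact absurd (lt_of_lt_of_le hδlt (min_le_right _ _)) (not_lt.2 this)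
        have he₀' : p' e₀ ≠ 0 := by
          rw [hp', Function.update_self]
          intro h0
          have : p e₀ ≤ δ := tsub_eq_zero_iff_le.1 h0
          exact absurd (lt_of_lt_of_le hδlt (min_le_left _ _)) (not_lt.2 this)
        obtain ⟨k', hk'R, hk'row, hk'col⟩ :=
          strassen_split R n IH p' q' hcard' htot' hHall' S₀ e₀ hS₀prop.1 he₀' hS₀pos ht'
        exact strassen_recombine R p q e₀ f₀ hRe₀f₀ δ hδp hδq k' hk'R hk'row hk'col

end Strassen


noncomputable def pind (P : Prop) : ℝ≥0∞ := @ite _ P (Classical.propDecidable P) 1 0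

lemma pind_le_one (P : Prop) : pind P ≤ 1 := by
  unfold pind; split <;> simp

lemma pind_mono {P Q : Prop} (h : P → Q) : pind P ≤ pind Q := by
  unfold pind
  split
  · rename_i hP
    rw [if_pos (h hP)]
  · simp

lemma pind_congr {P Q : Prop} (h : P ↔ Q) : pind P = pind Q := by
  unfold pind
  split
  · rename_i hP; rw [if_pos (h.1 hP)]
  · rename_i hP; rw [if_neg (fun hQ => hP (h.2 hQ))]

lemma pind_of_true {P : Prop} (h : P) : pind P = 1 := by unfold pind; rw [if_pos h]

lemma pind_of_false {P : Prop} (h : ¬ P) : pind P = 0 := by unfold pind; rw [if_neg h]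

section Filt
variable {B : Type*} [Fintype B] [DecidableEq B]

def filt (γ : B → Type*) [∀ b, Fintype (γ b)] [∀ b, Zero (γ b)] [∀ b, DecidableEq (γ b)]
    (s : Finset B) : Finset (∀ b, γ b) :=
  univ.filter (fun v => ∀ b ∉ s, v b = 0)

variable {γ : B → Type*} [∀ b, Fintype (γ b)] [∀ b, Zero (γ b)] [∀ b, DecidableEq (γ b)]

lemma mem_filt {s : Finset B} {v : ∀ b, γ b} : v ∈ filt γ s ↔ ∀ b ∉ s, v b = 0 := by
  simp [filt]

lemma filt_univ : filt γ univ = univ := by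
  ext v; simp [mem_filt]

lemma filt_empty : filt γ ∅ = {0} := by
  ext v
  rw [mem_filt, Finset.mem_singleton]
  constructor
  · intro h; funext b; exact h b (Finset.notMem_empty b)
  · intro h b _; rw [h]; rfl

lemma sum_filt_insert (s : Finset B) (b₀ : B) (hb₀ : b₀ ∉ s) (F : (∀ b, γ b) → ℝ≥0∞) :
    ∑ v ∈ filt γ (insert b₀ s), F v
    = ∑ y : γ b₀, ∑ v ∈ filt γ s, F (Function.update v b₀ y) := by
  rw [← Finset.sum_product']
  refine Finset.sum_nbij' (i := fun (w : ∀ b, γ b) => ((w b₀, Function.update w b₀ 0) :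
      γ b₀ × (∀ b, γ b))) (j := fun yv => Function.update yv.2 b₀ yv.1) ?_ ?_ ?_ ?_ ?_
  · intro w hw
    rw [mem_filt] at hw
    simp only [Finset.mem_product, Finset.mem_univ, true_and]
    rw [mem_filt]
    intro b hb
    by_cases h : b = b₀
    · rw [h, Function.update_self]
    · rw [Function.update_of_ne h]
      exact hw b (by simp [h, hb])
  · intro yv hyv
    simp only [Finset.mem_product, Finset.mem_univ, true_and] at hyv
    rw [mem_filt] at hyv ⊢
    intro b hb
    simp only [Finset.mem_insert, not_or] at hb
    show Function.update yv.2 b₀ yv.1 b = 0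
    rw [Function.update_of_ne hb.1]
    exact hyv b hb.2
  · intro w hw
    simp only
    rw [Function.update_idem, Function.update_eq_self]
  · intro yv hyv
    simp only [Finset.mem_product, Finset.mem_univ, true_and] at hyv
    rw [mem_filt] at hyv
    have h2 : Function.update (Function.update yv.2 b₀ yv.1) b₀ 0 = yv.2 := by
      rw [Function.update_idem]
      funext b
      by_cases h : b = b₀
      · rw [h, Function.update_self]; exact (hyv b₀ hb₀).symm
      · rw [Function.update_of_ne h]
    rw [Prod.ext_iff]
    exact ⟨Function.update_self _ _ _, h2⟩
  · intro w hw
    simp only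
    rw [Function.update_idem, Function.update_eq_self]
end Filt

section Star
variable {B : Type*} [Fintype B] [DecidableEq B] {N : ℕ}
variable {Φ : B → Type*} [∀ b, Fintype (Φ b)] [∀ b, DecidableEq (Φ b)] [∀ b, Nonempty (Φ b)]

lemma update_le_update {v v' : ∀ _ : B, Fin (N+1)} {b₀ : B} {x x' : Fin (N+1)}
    (h : v ≤ v') (hx : x ≤ x') : Function.update v b₀ x ≤ Function.update v' b₀ x' := by
  intro b
  by_cases hb : b = b₀
  · subst hb
    rw [Function.update_self, Function.update_self]
    exact hx
  · rw [Function.update_of_ne hb, Function.update_of_ne hb]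
    exact h b

theorem star_ineq
    (nw : (b : B) → Fin (N+1) → ℝ≥0∞)
    (rw : (b : B) → (Φ b → Fin (N+1)) → ℝ≥0∞)
    (hdom : ∀ (b : B) (a : Φ b) (t : Fin (N+1)),
      ∑ y ∈ univ.filter (fun y => t ≤ y), nw b y
        ≤ ∑ c ∈ univ.filter (fun c : Φ b → Fin (N+1) => t ≤ c a), rw b c)
    (s : Finset B) :
    ∀ (T : (∀ b, Φ b) → (∀ _ : B, Fin (N+1)) → Prop),
    (∀ (ℓ : ∀ b, Φ b) (v v' : ∀ _ : B, Fin (N+1)), v ≤ v' → T ℓ v → T ℓ v') →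
    ∑ v ∈ filt (fun _ => Fin (N+1)) s, (∏ b ∈ s, nw b (v b)) * pind (∃ ℓ, T ℓ v)
    ≤ ∑ z ∈ filt (fun b => Φ b → Fin (N+1)) s,
        (∏ b ∈ s, rw b (z b)) * pind (∃ ℓ, T ℓ (fun b => z b (ℓ b))) := by
  classical
  induction s using Finset.induction_on with
  | empty =>
    intro T hmono
    rw [filt_empty, filt_empty, Finset.sum_singleton, Finset.sum_singleton,
      Finset.prod_empty, Finset.prod_empty, one_mul, one_mul]
    exact le_of_eq (pind_congr (by constructor <;> (rintro ⟨ℓ, h⟩; exact ⟨ℓ, h⟩)))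
  | @insert b₀ s hb₀ ih =>
    intro T hmono
    have hprodn : ∀ (y : Fin (N+1)) (v : ∀ _ : B, Fin (N+1)),
        ∏ b ∈ insert b₀ s, nw b (Function.update v b₀ y b)
          = nw b₀ y * ∏ b ∈ s, nw b (v b) := by
      intro y v
      rw [Finset.prod_insert hb₀, Function.update_self]
      congr 1
      refine Finset.prod_congr rfl fun b hb => ?_
      rw [Function.update_of_ne (ne_of_mem_of_not_mem hb hb₀)]
    have hprodr : ∀ (c : Φ b₀ → Fin (N+1)) (z : ∀ b, Φ b → Fin (N+1)),
        ∏ b ∈ insert b₀ s, rw b (Function.update z b₀ c b)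
          = rw b₀ c * ∏ b ∈ s, rw b (z b) := by
      intro c z
      rw [Finset.prod_insert hb₀, Function.update_self]
      congr 1
      refine Finset.prod_congr rfl fun b hb => ?_
      rw [Function.update_of_ne (ne_of_mem_of_not_mem hb hb₀)]
    have key : ∀ v : ∀ _ : B, Fin (N+1),
        ∑ y : Fin (N+1), nw b₀ y * pind (∃ ℓ, T ℓ (Function.update v b₀ y))
        ≤ ∑ c : Φ b₀ → Fin (N+1),
            rw b₀ c * pind (∃ ℓ, T ℓ (Function.update v b₀ (c (ℓ b₀)))) := by
      intro v
      by_cases hP : ∃ y : Fin (N+1), ∃ ℓ, T ℓ (Function.update v b₀ y)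
      · obtain ⟨y₀, hy₀⟩ := hP
        set Y : Finset (Fin (N+1)) :=
          univ.filter (fun y => ∃ ℓ, T ℓ (Function.update v b₀ y)) with hY
        have hYne : Y.Nonempty := ⟨y₀, by
          simp only [hY, Finset.mem_filter, Finset.mem_univ, true_and]
          exact hy₀⟩
        set t := Y.min' hYne with htdef
        have hPt : ∃ ℓ, T ℓ (Function.update v b₀ t) := by
          have ht := Y.min'_mem hYne
          simp only [hY, Finset.mem_filter, Finset.mem_univ, true_and] at ht
          exact ht
        obtain ⟨ℓs, hℓs⟩ := hPt
        have hiff : ∀ y, (∃ ℓ, T ℓ (Function.update v b₀ y)) ↔ t ≤ y := by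
          intro y
          constructor
          · intro h
            refine Y.min'_le y ?_
            simp only [hY, Finset.mem_filter, Finset.mem_univ, true_and]
            exact h
          · intro h
            exact ⟨ℓs, hmono ℓs _ _ (update_le_update le_rfl h) hℓs⟩
        calc ∑ y : Fin (N+1), nw b₀ y * pind (∃ ℓ, T ℓ (Function.update v b₀ y))
            = ∑ y : Fin (N+1), (if t ≤ y then nw b₀ y else 0) := by
              refine Finset.sum_congr rfl fun y _ => ?_
              by_cases h : t ≤ y
              · rw [pind_of_true ((hiff y).2 h), mul_one, if_pos h]
              · rw [pind_of_false (fun hc => h ((hiff y).1 hc)), mul_zero, if_neg h]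
          _ = ∑ y ∈ univ.filter (fun y => t ≤ y), nw b₀ y := (Finset.sum_filter _ _).symm
          _ ≤ ∑ c ∈ univ.filter (fun c : Φ b₀ → Fin (N+1) => t ≤ c (ℓs b₀)), rw b₀ c :=
              hdom b₀ (ℓs b₀) t
          _ = ∑ c : Φ b₀ → Fin (N+1), (if t ≤ c (ℓs b₀) then rw b₀ c else 0) :=
              Finset.sum_filter _ _
          _ ≤ ∑ c : Φ b₀ → Fin (N+1),
              rw b₀ c * pind (∃ ℓ, T ℓ (Function.update v b₀ (c (ℓ b₀)))) := by
              refine Finset.sum_le_sum fun c _ => ?_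
              by_cases h : t ≤ c (ℓs b₀)
              · rw [if_pos h, pind_of_true ⟨ℓs, hmono ℓs _ _
                  (update_le_update le_rfl h) hℓs⟩, mul_one]
              · rw [if_neg h]
                exact zero_le
      · have hzero : ∀ y, pind (∃ ℓ, T ℓ (Function.update v b₀ y)) = 0 :=
          fun y => pind_of_false (fun h => hP ⟨y, h⟩)
        simp only [hzero, mul_zero, Finset.sum_const_zero]
        exact zero_le
    rw [sum_filt_insert s b₀ hb₀, sum_filt_insert s b₀ hb₀]
    calc ∑ y : Fin (N+1), ∑ v ∈ filt (fun _ => Fin (N+1)) s,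
          (∏ b ∈ insert b₀ s, nw b (Function.update v b₀ y b))
            * pind (∃ ℓ, T ℓ (Function.update v b₀ y))
        = ∑ v ∈ filt (fun _ => Fin (N+1)) s, (∏ b ∈ s, nw b (v b))
            * ∑ y : Fin (N+1), nw b₀ y * pind (∃ ℓ, T ℓ (Function.update v b₀ y)) := by
          rw [Finset.sum_comm]
          refine Finset.sum_congr rfl fun v _ => ?_
          rw [Finset.mul_sum]
          refine Finset.sum_congr rfl fun y _ => ?_
          rw [hprodn y v]
          ring
      _ ≤ ∑ v ∈ filt (fun _ => Fin (N+1)) s, (∏ b ∈ s, nw b (v b))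
            * ∑ c : Φ b₀ → Fin (N+1),
                rw b₀ c * pind (∃ ℓ, T ℓ (Function.update v b₀ (c (ℓ b₀)))) := by
          refine Finset.sum_le_sum fun v _ => ?_
          exact mul_le_mul_right (key v) _
      _ = ∑ c : Φ b₀ → Fin (N+1), rw b₀ c * ∑ v ∈ filt (fun _ => Fin (N+1)) s,
            (∏ b ∈ s, nw b (v b)) * pind (∃ ℓ, T ℓ (Function.update v b₀ (c (ℓ b₀)))) := by
          calc ∑ v ∈ filt (fun _ => Fin (N+1)) s, (∏ b ∈ s, nw b (v b)) *
                ∑ c : Φ b₀ → Fin (N+1), rw b₀ c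
                  * pind (∃ ℓ, T ℓ (Function.update v b₀ (c (ℓ b₀))))
              = ∑ v ∈ filt (fun _ => Fin (N+1)) s, ∑ c : Φ b₀ → Fin (N+1),
                  (∏ b ∈ s, nw b (v b)) * (rw b₀ c
                    * pind (∃ ℓ, T ℓ (Function.update v b₀ (c (ℓ b₀))))) :=
                Finset.sum_congr rfl fun v _ => Finset.mul_sum _ _ _
            _ = ∑ c : Φ b₀ → Fin (N+1), ∑ v ∈ filt (fun _ => Fin (N+1)) s,
                  (∏ b ∈ s, nw b (v b)) * (rw b₀ c
                    * pind (∃ ℓ, T ℓ (Function.update v b₀ (c (ℓ b₀))))) :=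
                Finset.sum_comm
            _ = ∑ c : Φ b₀ → Fin (N+1), rw b₀ c * ∑ v ∈ filt (fun _ => Fin (N+1)) s,
                  (∏ b ∈ s, nw b (v b))
                    * pind (∃ ℓ, T ℓ (Function.update v b₀ (c (ℓ b₀)))) := by
                refine Finset.sum_congr rfl fun c _ => ?_
                rw [Finset.mul_sum]
                exact Finset.sum_congr rfl fun v _ => by ring
      _ ≤ ∑ c : Φ b₀ → Fin (N+1), rw b₀ c * ∑ z ∈ filt (fun b => Φ b → Fin (N+1)) s,
            (∏ b ∈ s, rw b (z b))
              * pind (∃ ℓ, T ℓ (fun b => Function.update z b₀ c b (ℓ b))) := by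
          refine Finset.sum_le_sum fun c _ => ?_
          refine mul_le_mul_right ?_ _
          have hIH := ih (fun ℓ v => T ℓ (Function.update v b₀ (c (ℓ b₀))))
            (fun ℓ v v' hvv h => hmono ℓ _ _ (update_le_update hvv le_rfl) h)
          refine hIH.trans (le_of_eq ?_)
          refine Finset.sum_congr rfl fun z _ => ?_
          congr 1
          refine pind_congr (exists_congr fun ℓ => ?_)
          have harg : Function.update (fun b => z b (ℓ b)) b₀ (c (ℓ b₀))
              = fun b => Function.update z b₀ c b (ℓ b) := by
            funext b
            by_cases hb : b = b₀
            · subst hb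
              rw [Function.update_self, Function.update_self]
            · rw [Function.update_of_ne hb, Function.update_of_ne hb]
          exact iff_of_eq (congrArg (T ℓ) harg)
      _ = ∑ c : Φ b₀ → Fin (N+1), ∑ z ∈ filt (fun b => Φ b → Fin (N+1)) s,
            (∏ b ∈ insert b₀ s, rw b (Function.update z b₀ c b))
              * pind (∃ ℓ, T ℓ (fun b => Function.update z b₀ c b (ℓ b))) := by
          refine Finset.sum_congr rfl fun c _ => ?_
          rw [Finset.mul_sum]
          refine Finset.sum_congr rfl fun z _ => ?_
          rw [hprodr c z]
          ring

end Star


section MeasAux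
variable {G : Type*} [MeasurableSpace G] [MeasurableSingletonClass G] [Finite G]

lemma measSet (s : Set G) : MeasurableSet s := (Set.toFinite s).measurableSet

lemma measurable_of_all {H : Type*} [MeasurableSpace H] (f : G → H) : Measurable f :=
  fun _ _ => measSet _

lemma measure_eq_sum_pind [Fintype G] [DecidableEq G] (μ : Measure G) (s : Set G) :
    μ s = ∑ x : G, μ {x} * pind (x ∈ s) := by
  classical
  have h1 : μ s = ∑ p ∈ s.toFinset, μ {p} := by
    conv_lhs => rw [show s = ⋃ x ∈ s.toFinset, ({x} : Set G) by ext y; simp]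
    rw [measure_biUnion_finset]
    · intro x _ y _ hxy
      simp [Function.onFun, Set.disjoint_singleton, hxy]
    · exact fun _ _ => measSet _
  rw [h1, show s.toFinset = univ.filter (fun x => x ∈ s) by ext x; simp,
    Finset.sum_filter]
  refine Finset.sum_congr rfl fun x _ => ?_
  by_cases h : x ∈ s
  · rw [if_pos h, pind_of_true h, mul_one]
  · rw [if_neg h, pind_of_false h, mul_zero]

lemma measure_finset_sum [Fintype G] [DecidableEq G] (μ : Measure G) (S : Finset G) :
    μ ↑S = ∑ x ∈ S, μ {x} := by
  rw [measure_eq_sum_pind]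
  calc ∑ x : G, μ {x} * pind (x ∈ ↑S) = ∑ x : G, (if x ∈ S then μ {x} else 0) := by
        refine Finset.sum_congr rfl fun x _ => ?_
        by_cases h : x ∈ S
        · rw [if_pos h, pind_of_true h, mul_one]
        · rw [if_neg h, pind_of_false h, mul_zero]
    _ = ∑ x ∈ S, μ {x} := by rw [Finset.sum_ite_mem, Finset.univ_inter]

lemma stochDom_mono_le [Preorder G] {m₁ m₂ : Measure G} [IsProbabilityMeasure m₁]
    (h : StochDom m₁ m₂)
    {U : Set G} (hU : ∀ x ∈ U, ∀ y, x ≤ y → y ∈ U) : m₁ U ≤ m₂ U := by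
  obtain ⟨κ, hκ, h1, h2, h3⟩ := h
  have hm : ∀ s : Set (G × G), MeasurableSet s := fun s => (Set.toFinite s).measurableSet
  rw [← h1, ← h2, Measure.map_apply measurable_fst (measSet U),
    Measure.map_apply measurable_snd (measSet U)]
  have h0 : κ ({q : G × G | q.1 ≤ q.2}ᶜ) = 0 := by
    haveI : IsProbabilityMeasure κ := hκ
    exact (prob_compl_eq_zero_iff (hm _)).2 h3
  have hle : κ (Prod.fst ⁻¹' U) ≤ κ ((Prod.snd ⁻¹' U) ∪ {q : G × G | q.1 ≤ q.2}ᶜ) := by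
    apply measure_mono
    intro q hq
    by_cases hq2 : q.1 ≤ q.2
    · exact Or.inl (hU q.1 hq q.2 hq2)
    · exact Or.inr hq2
  calc κ (Prod.fst ⁻¹' U) ≤ κ ((Prod.snd ⁻¹' U) ∪ {q : G × G | q.1 ≤ q.2}ᶜ) := hle
    _ ≤ κ (Prod.snd ⁻¹' U) + κ ({q : G × G | q.1 ≤ q.2}ᶜ) := measure_union_le _ _
    _ = κ (Prod.snd ⁻¹' U) := by rw [h0, add_zero]

end MeasAux

/-- **Corollary (independent columns).**  If for each `b` the measure `ν_b` is dominated
by every marginal of `ρ_b`, and `μ` is a `π`-lift whose pushdown is dominated by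
`⊗_b ν_b`, then `μ` is dominated by `⊗_b ρ_b`. -/
theorem stmt6 (N : ℕ)
    {A B : Type*} [Fintype A] [Nonempty A] [DecidableEq A] [Fintype B] [Nonempty B]
    [DecidableEq B]
    (π : A → B) (hπ : Function.Surjective π)
    (ν : B → Measure (Fin (N + 1)))
    (ρ : (b : B) → Measure ({a : A // π a = b} → Fin (N + 1)))
    [∀ b, IsProbabilityMeasure (ν b)] [∀ b, IsProbabilityMeasure (ρ b)]
    (hdom : ∀ b : B, ∀ a : {a : A // π a = b},
      StochDom (ν b) ((ρ b).map fun x => x a))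
    (μ : Measure (A → Fin (N + 1))) [IsProbabilityMeasure μ]
    (hlift : μ {x | ∀ a a' : A, π a = π a' → x a ≠ 0 → x a' ≠ 0 → a = a'} = 1)
    (hpush : StochDom
      (μ.map fun x b => (Finset.univ.filter fun c => π c = b).sup x)
      (Measure.pi ν)) :
    StochDom μ
      ((Measure.pi ρ).map fun f a => f (π a) ⟨a, rfl⟩) := by
  classical
  haveI hFibNe : ∀ b, Nonempty {a : A // π a = b} :=
    fun b => ⟨⟨(hπ b).choose, (hπ b).choose_spec⟩⟩
  set g : ((b : B) → ({a : A // π a = b} → Fin (N + 1))) → (A → Fin (N + 1)) :=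
    fun f a => f (π a) ⟨a, rfl⟩ with hg
  set hat : (A → Fin (N + 1)) → (B → Fin (N + 1)) :=
    fun x b => (Finset.univ.filter fun c => π c = b).sup x with hhat
  set ℓf : (A → Fin (N + 1)) → ∀ b, {a : A // π a = b} :=
    fun x b => if h : ∃ a' : {a' : A // π a' = b}, x a'.1 ≠ 0 then h.choose
      else Classical.arbitrary _ with hℓf
  set emb : (∀ b, {a : A // π a = b}) → (B → Fin (N + 1)) → (A → Fin (N + 1)) :=
    fun ℓ u a => if (⟨a, rfl⟩ : {a' : A // π a' = π a}) = ℓ (π a) then u (π a) else 0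
    with hemb
  -- Key pointwise facts
  have F1 : ∀ x : A → Fin (N + 1),
      x ∈ {x : A → Fin (N + 1) | ∀ a a' : A, π a = π a' → x a ≠ 0 → x a' ≠ 0 → a = a'} →
      emb (ℓf x) (hat x) = x := by
    intro x hx
    funext a
    show (if (⟨a, rfl⟩ : {a' : A // π a' = π a}) = ℓf x (π a) then hat x (π a) else 0) = x a
    by_cases hxa : x a = 0
    · by_cases hcond : (⟨a, rfl⟩ : {a' : A // π a' = π a}) = ℓf x (π a)
      · rw [if_pos hcond, hxa]
        by_cases hex : ∃ a' : {a' : A // π a' = π a}, x a'.1 ≠ 0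
        · exfalso
          have hch : ℓf x (π a) = hex.choose := by
            simp only [hℓf]
            rw [dif_pos hex]
          have hspec : x (hex.choose).1 ≠ 0 := hex.choose_spec
          have : (⟨a, rfl⟩ : {a' : A // π a' = π a}) = hex.choose := by rw [hcond, hch]
          rw [← this] at hspec
          exact hspec hxa
        · push_neg at hex
          apply le_antisymm _ (Fin.zero_le _)
          apply Finset.sup_le
          intro c hc
          rw [Finset.mem_filter] at hc
          exact le_of_eq (hex ⟨c, hc.2⟩)
      · rw [if_neg hcond, hxa]
    · have hex : ∃ a' : {a' : A // π a' = π a}, x a'.1 ≠ 0 := ⟨⟨a, rfl⟩, hxa⟩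
      have hch : ℓf x (π a) = hex.choose := by
        simp only [hℓf]
        rw [dif_pos hex]
      have hspec : x (hex.choose).1 ≠ 0 := hex.choose_spec
      have heq : hex.choose = (⟨a, rfl⟩ : {a' : A // π a' = π a}) := by
        apply Subtype.ext
        exact hx (hex.choose).1 a (hex.choose).2 hspec hxa
      rw [if_pos (by rw [hch, heq])]
      apply le_antisymm
      · apply Finset.sup_le
        intro c hc
        rw [Finset.mem_filter] at hc
        by_cases hc0 : x c = 0
        · rw [hc0]; exact Fin.zero_le _
        · exact le_of_eq (congrArg x (hx c a hc.2 hc0 hxa))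
      · exact Finset.le_sup (by simp)
  have F3 : ∀ (ℓ : ∀ b, {a : A // π a = b}) (u : B → Fin (N + 1))
      (z : (b : B) → ({a : A // π a = b} → Fin (N + 1))),
      (∀ b, u b ≤ z b (ℓ b)) → emb ℓ u ≤ g z := by
    intro ℓ u z h a
    show (if (⟨a, rfl⟩ : {a' : A // π a' = π a}) = ℓ (π a) then u (π a) else 0)
      ≤ z (π a) ⟨a, rfl⟩
    by_cases hcond : (⟨a, rfl⟩ : {a' : A // π a' = π a}) = ℓ (π a)
    · rw [if_pos hcond, hcond]
      exact h (π a)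
    · rw [if_neg hcond]
      exact Fin.zero_le _
  -- The Hall-type inequality
  set R : (A → Fin (N + 1)) → ((b : B) → ({a : A // π a = b} → Fin (N + 1))) → Prop :=
    fun x z => x ≤ g z with hR
  have hHallE : ∀ S : Finset (A → Fin (N + 1)),
      μ ↑S ≤ (Measure.pi ρ) {z | ∃ x ∈ S, x ≤ g z} := by
    intro S
    set T : (∀ b, {a : A // π a = b}) → (B → Fin (N + 1)) → Prop :=
      fun ℓ v => ∃ u : B → Fin (N + 1), u ≤ v ∧ emb ℓ u ∈ S with hT
    have hTmono : ∀ (ℓ : ∀ b, {a : A // π a = b}) (v v' : B → Fin (N + 1)),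
        v ≤ v' → T ℓ v → T ℓ v' := by
      rintro ℓ v v' hvv ⟨u, hu, hm⟩
      exact ⟨u, le_trans hu hvv, hm⟩
    have hUup : ∀ v ∈ {v : B → Fin (N + 1) | ∃ ℓ, T ℓ v}, ∀ v', v ≤ v' →
        v' ∈ {v : B → Fin (N + 1) | ∃ ℓ, T ℓ v} := by
      rintro v ⟨ℓ, hv⟩ v' hvv'
      exact ⟨ℓ, hTmono ℓ v v' hvv' hv⟩
    have step1 : μ ↑S ≤ (μ.map hat) {v | ∃ ℓ, T ℓ v} := by
      rw [Measure.map_apply (measurable_of_all hat) (measSet _)]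
      have hLc : μ ({x : A → Fin (N + 1) |
          ∀ a a' : A, π a = π a' → x a ≠ 0 → x a' ≠ 0 → a = a'}ᶜ) = 0 :=
        (prob_compl_eq_zero_iff (measSet _)).2 hlift
      calc μ ↑S ≤ μ ((hat ⁻¹' {v | ∃ ℓ, T ℓ v}) ∪ {x : A → Fin (N + 1) |
              ∀ a a' : A, π a = π a' → x a ≠ 0 → x a' ≠ 0 → a = a'}ᶜ) := by
            apply measure_mono
            intro x hx
            by_cases hxl : x ∈ {x : A → Fin (N + 1) |
                ∀ a a' : A, π a = π a' → x a ≠ 0 → x a' ≠ 0 → a = a'}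
            · exact Or.inl ⟨ℓf x, hat x, le_rfl, by rw [F1 x hxl]; exact hx⟩
            · exact Or.inr hxl
        _ ≤ μ (hat ⁻¹' {v | ∃ ℓ, T ℓ v}) + μ ({x : A → Fin (N + 1) |
              ∀ a a' : A, π a = π a' → x a ≠ 0 → x a' ≠ 0 → a = a'}ᶜ) :=
            measure_union_le _ _
        _ = μ (hat ⁻¹' {v | ∃ ℓ, T ℓ v}) := by rw [hLc, add_zero]
    have step2 : (μ.map hat) {v | ∃ ℓ, T ℓ v} ≤ (Measure.pi ν) {v | ∃ ℓ, T ℓ v} := by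
      haveI : IsProbabilityMeasure (μ.map hat) :=
        Measure.isProbabilityMeasure_map (measurable_of_all hat).aemeasurable
      exact stochDom_mono_le hpush hUup
    have hdom' : ∀ (b : B) (a : {a : A // π a = b}) (t : Fin (N + 1)),
        ∑ y ∈ univ.filter (fun y => t ≤ y), (ν b) {y}
        ≤ ∑ c ∈ univ.filter (fun c : {a : A // π a = b} → Fin (N + 1) => t ≤ c a),
            (ρ b) {c} := by
      intro b a t
      haveI : IsProbabilityMeasure ((ρ b).map (fun x => x a)) :=
        Measure.isProbabilityMeasure_map (measurable_of_all _).aemeasurable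
      have h1 : (ν b) {y | t ≤ y} ≤ ((ρ b).map (fun c => c a)) {y | t ≤ y} :=
        stochDom_mono_le (hdom b a) (fun y hy y' hyy' => le_trans hy hyy')
      rw [Measure.map_apply (measurable_of_all _) (measSet _)] at h1
      have e1 : (ν b) {y | t ≤ y} = ∑ y ∈ univ.filter (fun y => t ≤ y), (ν b) {y} := by
        rw [measure_eq_sum_pind, Finset.sum_filter]
        refine Finset.sum_congr rfl fun y _ => ?_
        by_cases h : t ≤ y
        · rw [if_pos h, pind_of_true (show y ∈ {y | t ≤ y} from h), mul_one]
        · rw [if_neg h, pind_of_false (show y ∉ {y | t ≤ y} from h), mul_zero]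
      have e2 : (ρ b) ((fun c => c a) ⁻¹' {y | t ≤ y})
          = ∑ c ∈ univ.filter (fun c : {a : A // π a = b} → Fin (N + 1) => t ≤ c a),
              (ρ b) {c} := by
        rw [measure_eq_sum_pind, Finset.sum_filter]
        refine Finset.sum_congr rfl fun c _ => ?_
        by_cases h : t ≤ c a
        · rw [if_pos h, pind_of_true (show c ∈ (fun c : {a : A // π a = b} → Fin (N + 1)
            => c a) ⁻¹' {y | t ≤ y} from h), mul_one]
        · rw [if_neg h, pind_of_false (show c ∉ (fun c : {a : A // π a = b} → Fin (N + 1)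
            => c a) ⁻¹' {y | t ≤ y} from h), mul_zero]
      rw [← e1, ← e2]
      exact h1
    have step3 : (Measure.pi ν) {v | ∃ ℓ, T ℓ v}
        ≤ (Measure.pi ρ) {z | ∃ ℓ, T ℓ (fun b => z b (ℓ b))} := by
      have hsingv : ∀ v : B → Fin (N + 1), (Measure.pi ν) {v} = ∏ b, (ν b) {v b} := by
        intro v
        rw [← Set.univ_pi_singleton v, Measure.pi_pi]
      have hsingz : ∀ z : (b : B) → ({a : A // π a = b} → Fin (N + 1)),
          (Measure.pi ρ) {z} = ∏ b, (ρ b) {z b} := by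
        intro z
        rw [← Set.univ_pi_singleton z, Measure.pi_pi]
      rw [measure_eq_sum_pind, measure_eq_sum_pind]
      have hstar := star_ineq (Φ := fun b => {a : A // π a = b})
        (fun b y => (ν b) {y}) (fun b c => (ρ b) {c}) hdom' univ T hTmono
      calc ∑ v : B → Fin (N + 1), (Measure.pi ν) {v} * pind (v ∈ {v | ∃ ℓ, T ℓ v})
          = ∑ v ∈ filt (fun _ : B => Fin (N + 1)) univ,
              (∏ b, (ν b) {v b}) * pind (∃ ℓ, T ℓ v) := by
            rw [filt_univ]
            exact Finset.sum_congr rfl fun v _ => by rw [hsingv v]; rfl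
        _ ≤ ∑ z ∈ filt (fun b : B => {a : A // π a = b} → Fin (N + 1)) univ,
              (∏ b, (ρ b) {z b}) * pind (∃ ℓ, T ℓ (fun b => z b (ℓ b))) := hstar
        _ = ∑ z : (b : B) → ({a : A // π a = b} → Fin (N + 1)),
              (Measure.pi ρ) {z} * pind (z ∈ {z | ∃ ℓ, T ℓ (fun b => z b (ℓ b))}) := by
            rw [filt_univ]
            exact Finset.sum_congr rfl fun z _ => by rw [hsingz z]; rfl
    have step4 : (Measure.pi ρ) {z | ∃ ℓ, T ℓ (fun b => z b (ℓ b))}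
        ≤ (Measure.pi ρ) {z | ∃ x ∈ S, x ≤ g z} := by
      apply measure_mono
      rintro z ⟨ℓ, u, hu, hm⟩
      exact ⟨emb ℓ u, hm, F3 ℓ u z hu⟩
    exact ((step1.trans step2).trans step3).trans step4
  -- Convert everything to NNReal weights and apply the finite Strassen theorem
  set pnn : (A → Fin (N + 1)) → ℝ≥0 := fun x => (μ {x}).toNNReal with hpnn
  set qnn : ((b : B) → ({a : A // π a = b} → Fin (N + 1))) → ℝ≥0 :=
    fun z => ((Measure.pi ρ) {z}).toNNReal with hqnn
  have hpcoe : ∀ x, (pnn x : ℝ≥0∞) = μ {x} :=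
    fun x => ENNReal.coe_toNNReal (measure_ne_top _ _)
  have hqcoe : ∀ z, (qnn z : ℝ≥0∞) = (Measure.pi ρ) {z} :=
    fun z => ENNReal.coe_toNNReal (measure_ne_top _ _)
  have hHallN : ∀ S : Finset (A → Fin (N + 1)), ∑ x ∈ S, pnn x ≤ ∑ z ∈ RS R S, qnn z := by
    intro S
    rw [← ENNReal.coe_le_coe, ENNReal.coe_finset_sum, ENNReal.coe_finset_sum]
    have h1 : ∑ x ∈ S, (pnn x : ℝ≥0∞) = μ ↑S := by
      rw [measure_finset_sum]
      exact Finset.sum_congr rfl fun x _ => hpcoe x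
    have h2 : ∑ z ∈ RS R S, (qnn z : ℝ≥0∞) = (Measure.pi ρ) ↑(RS R S) := by
      rw [measure_finset_sum]
      exact Finset.sum_congr rfl fun z _ => hqcoe z
    have hset : (↑(RS R S) : Set ((b : B) → ({a : A // π a = b} → Fin (N + 1))))
        = {z | ∃ x ∈ S, x ≤ g z} := by
      ext z
      simp only [Finset.mem_coe, mem_RS, Set.mem_setOf_eq, hR]
    rw [h1, h2, hset]
    exact hHallE S
  have htotN : ∑ x, pnn x = ∑ z, qnn z := by
    have h1 : ((∑ x, pnn x : ℝ≥0) : ℝ≥0∞) = 1 := by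
      rw [ENNReal.coe_finset_sum]
      calc ∑ x, (pnn x : ℝ≥0∞) = μ ↑(univ : Finset (A → Fin (N + 1))) := by
            rw [measure_finset_sum]
            exact Finset.sum_congr rfl fun x _ => hpcoe x
        _ = 1 := by rw [Finset.coe_univ]; exact measure_univ
    have h2 : ((∑ z, qnn z : ℝ≥0) : ℝ≥0∞) = 1 := by
      rw [ENNReal.coe_finset_sum]
      calc ∑ z, (qnn z : ℝ≥0∞)
          = (Measure.pi ρ) ↑(univ : Finset ((b : B) → ({a : A // π a = b} → Fin (N + 1)))) := by
            rw [measure_finset_sum]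
            exact Finset.sum_congr rfl fun z _ => hqcoe z
        _ = 1 := by rw [Finset.coe_univ]; exact measure_univ
    exact ENNReal.coe_injective (h1.trans h2.symm)
  obtain ⟨k, hkR, hkrow, hkcol⟩ := strassen_all R
    (Fintype.card (A → Fin (N + 1))
      + Fintype.card ((b : B) → ({a : A // π a = b} → Fin (N + 1))))
    pnn qnn
    (add_le_add ((Finset.card_filter_le _ _).trans (le_of_eq Finset.card_univ))
      ((Finset.card_filter_le _ _).trans (le_of_eq Finset.card_univ)))
    htotN hHallN
  -- Build the coupling measure
  set κ : Measure ((A → Fin (N + 1)) × (A → Fin (N + 1))) :=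
    ∑ x : A → Fin (N + 1), ∑ z : (b : B) → ({a : A // π a = b} → Fin (N + 1)),
      (k x z : ℝ≥0∞) • Measure.dirac (x, g z) with hκ
  have hκapp : ∀ s : Set ((A → Fin (N + 1)) × (A → Fin (N + 1))),
      κ s = ∑ x : A → Fin (N + 1), ∑ z : (b : B) → ({a : A // π a = b} → Fin (N + 1)),
        (k x z : ℝ≥0∞) * pind ((x, g z) ∈ s) := by
    intro s
    rw [hκ, Measure.finset_sum_apply]
    refine Finset.sum_congr rfl fun x _ => ?_
    rw [Measure.finset_sum_apply]
    refine Finset.sum_congr rfl fun z _ => ?_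
    rw [Measure.smul_apply, Measure.dirac_apply' _ (measSet s), smul_eq_mul]
    congr 1
  have hκtot : ∀ s : Set ((A → Fin (N + 1)) × (A → Fin (N + 1))),
      (∀ x z, k x z ≠ 0 → (x, g z) ∈ s) → κ s = 1 := by
    intro s hs
    rw [hκapp s]
    calc ∑ x : A → Fin (N + 1), ∑ z : (b : B) → ({a : A // π a = b} → Fin (N + 1)),
          (k x z : ℝ≥0∞) * pind ((x, g z) ∈ s)
        = ∑ x : A → Fin (N + 1), ∑ z : (b : B) → ({a : A // π a = b} → Fin (N + 1)),
            (k x z : ℝ≥0∞) := by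
          refine Finset.sum_congr rfl fun x _ => Finset.sum_congr rfl fun z _ => ?_
          by_cases h : k x z = 0
          · rw [h]; simp
          · rw [pind_of_true (hs x z h), mul_one]
      _ = ∑ x : A → Fin (N + 1), (pnn x : ℝ≥0∞) := by
          refine Finset.sum_congr rfl fun x _ => ?_
          rw [← ENNReal.coe_finset_sum, hkrow]
      _ = μ ↑(univ : Finset (A → Fin (N + 1))) := by
          rw [measure_finset_sum]
          exact Finset.sum_congr rfl fun x _ => hpcoe x
      _ = 1 := by rw [Finset.coe_univ]; exact measure_univ
  refine ⟨κ, ⟨hκtot Set.univ (fun _ _ _ => Set.mem_univ _)⟩, ?_, ?_, ?_⟩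
  · -- first marginal is μ
    apply Measure.ext_of_singleton
    intro x₀
    rw [Measure.map_apply measurable_fst (measSet _), hκapp]
    calc ∑ x : A → Fin (N + 1), ∑ z : (b : B) → ({a : A // π a = b} → Fin (N + 1)),
          (k x z : ℝ≥0∞) * pind ((x, g z) ∈ Prod.fst ⁻¹' {x₀})
        = ∑ z : (b : B) → ({a : A // π a = b} → Fin (N + 1)), (k x₀ z : ℝ≥0∞) := by
          rw [Finset.sum_eq_single x₀ (fun x _ hx => Finset.sum_eq_zero fun z _ => by
              rw [pind_of_false (show ¬((x, g z) ∈ Prod.fst ⁻¹' ({x₀} :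
                Set (A → Fin (N + 1)))) from fun hmem => hx hmem), mul_zero])
            (fun h => absurd (Finset.mem_univ _) h)]
          exact Finset.sum_congr rfl fun z _ => by
            rw [pind_of_true (show (x₀, g z) ∈ Prod.fst ⁻¹' ({x₀} :
              Set (A → Fin (N + 1))) from rfl), mul_one]
      _ = (pnn x₀ : ℝ≥0∞) := by rw [← ENNReal.coe_finset_sum, hkrow]
      _ = μ {x₀} := hpcoe x₀
  · -- second marginal is the pushforward of the product measure
    apply Measure.ext_of_singleton
    intro y
    rw [Measure.map_apply measurable_snd (measSet _), hκapp,
      Measure.map_apply (measurable_of_all _) (measSet _), Finset.sum_comm]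
    calc ∑ z : (b : B) → ({a : A // π a = b} → Fin (N + 1)), ∑ x : A → Fin (N + 1),
          (k x z : ℝ≥0∞) * pind ((x, g z) ∈ Prod.snd ⁻¹' {y})
        = ∑ z : (b : B) → ({a : A // π a = b} → Fin (N + 1)),
            (qnn z : ℝ≥0∞) * pind (g z = y) := by
          refine Finset.sum_congr rfl fun z _ => ?_
          calc ∑ x : A → Fin (N + 1), (k x z : ℝ≥0∞) * pind ((x, g z) ∈ Prod.snd ⁻¹' {y})
              = (∑ x : A → Fin (N + 1), (k x z : ℝ≥0∞)) * pind (g z = y) := by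
                rw [Finset.sum_mul]
                exact Finset.sum_congr rfl fun x _ => rfl
            _ = (qnn z : ℝ≥0∞) * pind (g z = y) := by
                rw [← ENNReal.coe_finset_sum, hkcol]
      _ = (Measure.pi ρ) (g ⁻¹' {y}) := by
          rw [measure_eq_sum_pind]
          refine Finset.sum_congr rfl fun z _ => ?_
          rw [hqcoe z]
          congr 1
  · -- the coupling is supported on the order relation
    exact hκtot {q | q.1 ≤ q.2} (fun x z h => hkR x z h)
end
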